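/- arXiv:2406.07920 — 13 statements merged into one kernel-verified Lean document; each statement's English description precedes it below -/
import Mathlib

section
/- Let P₁,...,P_L be probability distributions on a finite set O, and let μ, ν be probability distributions on {1,...,L} with disjoint supports. Then the Bhattacharyya divergence between the mixtures satisfies D_B(E_{i∼μ}[P_i], E_{j∼ν}[P_j]) ≥ min_{i≠j} D_B(P_i, P_j) − log(L/2). -/
open Finset

lemma sqrt_sum_le' {ι : Type*} (s : Finset ι) (f : ι → ℝ) (hf : ∀ i ∈ s, 0 ≤ f i) :
    Real.sqrt (∑ i ∈ s, f i) ≤ ∑ i ∈ s, Real.sqrt (f i) := by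
  have h1 : ∑ i ∈ s, f i ≤ (∑ i ∈ s, Real.sqrt (f i)) ^ 2 := by
    calc ∑ i ∈ s, f i = ∑ i ∈ s, (Real.sqrt (f i)) ^ 2 :=
          Finset.sum_congr rfl fun i hi => (Real.sq_sqrt (hf i hi)).symm
      _ ≤ _ := Finset.sum_sq_le_sq_sum_of_nonneg (fun i _ => Real.sqrt_nonneg _)
  calc Real.sqrt (∑ i ∈ s, f i) ≤ Real.sqrt ((∑ i ∈ s, Real.sqrt (f i)) ^ 2) :=
        Real.sqrt_le_sqrt h1
    _ = _ := Real.sqrt_sq (Finset.sum_nonneg fun i _ => Real.sqrt_nonneg _)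

lemma sum_sqrt_le_sqrt_card {ι : Type*} [Fintype ι] (μ : ι → ℝ) (hμ0 : ∀ i, 0 ≤ μ i)
    (hμ1 : ∑ i, μ i = 1) :
    (∑ i, Real.sqrt (μ i)) ^ 2 ≤ (Finset.univ.filter (fun i => μ i ≠ 0)).card := by
  classical
  set S := Finset.univ.filter (fun i => μ i ≠ 0) with hS
  have hsum : ∑ i, Real.sqrt (μ i) = ∑ i ∈ S, Real.sqrt (μ i) := by
    rw [eq_comm]
    apply Finset.sum_subset (Finset.subset_univ _)
    intro x _ hx
    simp only [hS, Finset.mem_filter, Finset.mem_univ, true_and, not_not] at hx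
    simp [hx]
  rw [hsum]
  calc (∑ i ∈ S, Real.sqrt (μ i)) ^ 2 ≤ S.card * ∑ i ∈ S, (Real.sqrt (μ i)) ^ 2 :=
        sq_sum_le_card_mul_sum_sq
    _ = S.card * ∑ i ∈ S, μ i := by
        congr 1
        exact Finset.sum_congr rfl fun i _ => Real.sq_sqrt (hμ0 i)
    _ ≤ S.card * 1 := by
        apply mul_le_mul_of_nonneg_left _ (by positivity)
        rw [← hμ1]
        exact Finset.sum_le_sum_of_subset_of_nonneg (Finset.subset_univ _)
          (fun i _ _ => hμ0 i)
    _ = S.card := mul_one _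

/-- For probability distributions `P₁,...,P_L` on a finite set `O`, and
mixing distributions `μ, ν` on `[L]` with disjoint supports, the Bhattacharyya divergence
between the mixtures is at least `min_{i≠j} D_B(P_i,P_j) - log(L/2)`. The minimum is
expressed via an arbitrary lower bound `c` on all pairwise divergences. -/
theorem bhattacharyya_mixture_lower_bound
    {O : Type*} [Fintype O] {L : ℕ} (P : Fin L → O → ℝ)
    (hP0 : ∀ i x, 0 ≤ P i x) (hP1 : ∀ i, ∑ x, P i x = 1)
    (μ ν : Fin L → ℝ)
    (hμ0 : ∀ i, 0 ≤ μ i) (hμ1 : ∑ i, μ i = 1)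
    (hν0 : ∀ i, 0 ≤ ν i) (hν1 : ∑ i, ν i = 1)
    (hdisj : ∀ i, μ i = 0 ∨ ν i = 0)
    (c : ℝ) (hc : ∀ i j, i ≠ j → c ≤ -Real.log (∑ x, Real.sqrt (P i x * P j x))) :
    -Real.log (∑ x, Real.sqrt ((∑ i, μ i * P i x) * (∑ j, ν j * P j x))) ≥
      c - Real.log ((L : ℝ) / 2) := by
  classical
  set A : O → ℝ := fun x => ∑ i, μ i * P i x with hA
  set C : O → ℝ := fun x => ∑ j, ν j * P j x with hC
  have hA0 : ∀ x, 0 ≤ A x := fun x =>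
    Finset.sum_nonneg fun i _ => mul_nonneg (hμ0 i) (hP0 i x)
  have hC0 : ∀ x, 0 ≤ C x := fun x =>
    Finset.sum_nonneg fun j _ => mul_nonneg (hν0 j) (hP0 j x)
  set B : ℝ := ∑ x, Real.sqrt (A x * C x) with hB
  have hB0 : 0 ≤ B := Finset.sum_nonneg fun x _ => Real.sqrt_nonneg _
  -- pick witnesses in the supports
  obtain ⟨i0, -, hi0⟩ : ∃ i ∈ Finset.univ, μ i ≠ 0 := by
    apply Finset.exists_ne_zero_of_sum_ne_zero; rw [hμ1]; norm_num
  obtain ⟨j0, -, hj0⟩ : ∃ j ∈ Finset.univ, ν j ≠ 0 := by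
    apply Finset.exists_ne_zero_of_sum_ne_zero; rw [hν1]; norm_num
  have hij : i0 ≠ j0 := by
    rintro rfl
    rcases hdisj i0 with h | h
    · exact hi0 h
    · exact hj0 h
  have hL : 2 ≤ L := by
    have h1 : 1 < Fintype.card (Fin L) :=
      Fintype.one_lt_card_iff_nontrivial.mpr ⟨⟨i0, j0, hij⟩⟩
    simp only [Fintype.card_fin] at h1; omega
  have hLhalf : (1 : ℝ) ≤ (L : ℝ) / 2 := by
    rw [le_div_iff₀ (by norm_num)]
    exact_mod_cast by simpa using hL
  have hlogL : 0 ≤ Real.log ((L : ℝ) / 2) := Real.log_nonneg hLhalf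
  -- key upper bound on B
  have key : B ≤ (L : ℝ) / 2 * Real.exp (-c) := by
    have step1 : B ≤ ∑ i, ∑ j, Real.sqrt (μ i) * Real.sqrt (ν j) *
        (∑ x, Real.sqrt (P i x * P j x)) := by
      have hx : ∀ x, Real.sqrt (A x * C x) ≤
          (∑ i, Real.sqrt (μ i) * Real.sqrt (P i x)) *
          (∑ j, Real.sqrt (ν j) * Real.sqrt (P j x)) := by
        intro x
        rw [Real.sqrt_mul (hA0 x)]
        apply mul_le_mul _ _ (Real.sqrt_nonneg _)
          (Finset.sum_nonneg fun i _ => mul_nonneg (Real.sqrt_nonneg _) (Real.sqrt_nonneg _))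
        · calc Real.sqrt (A x) ≤ ∑ i, Real.sqrt (μ i * P i x) :=
                sqrt_sum_le' _ _ (fun i _ => mul_nonneg (hμ0 i) (hP0 i x))
            _ = _ := Finset.sum_congr rfl fun i _ => Real.sqrt_mul (hμ0 i) _
        · calc Real.sqrt (C x) ≤ ∑ j, Real.sqrt (ν j * P j x) :=
                sqrt_sum_le' _ _ (fun j _ => mul_nonneg (hν0 j) (hP0 j x))
            _ = _ := Finset.sum_congr rfl fun j _ => Real.sqrt_mul (hν0 j) _
      calc B ≤ ∑ x, (∑ i, Real.sqrt (μ i) * Real.sqrt (P i x)) *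
              (∑ j, Real.sqrt (ν j) * Real.sqrt (P j x)) :=
            Finset.sum_le_sum fun x _ => hx x
        _ = ∑ i, ∑ j, Real.sqrt (μ i) * Real.sqrt (ν j) *
              (∑ x, Real.sqrt (P i x * P j x)) := by
            simp_rw [Finset.sum_mul_sum]
            rw [Finset.sum_comm]
            apply Finset.sum_congr rfl
            intro i _
            rw [Finset.sum_comm]
            apply Finset.sum_congr rfl
            intro j _
            rw [Finset.mul_sum]
            apply Finset.sum_congr rfl
            intro x _
            rw [Real.sqrt_mul (hP0 i x)]
            ring
    have step2 : ∑ i, ∑ j, Real.sqrt (μ i) * Real.sqrt (ν j) *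
        (∑ x, Real.sqrt (P i x * P j x)) ≤
        (∑ i, Real.sqrt (μ i)) * (∑ j, Real.sqrt (ν j)) * Real.exp (-c) := by
      rw [Finset.sum_mul_sum, Finset.sum_mul]
      apply Finset.sum_le_sum
      intro i _
      rw [Finset.sum_mul]
      apply Finset.sum_le_sum
      intro j _
      by_cases hij' : i = j
      · subst hij'
        rcases hdisj i with h | h <;> simp [h] <;> positivity
      · apply mul_le_mul_of_nonneg_left _ (mul_nonneg (Real.sqrt_nonneg _) (Real.sqrt_nonneg _))
        set D := ∑ x, Real.sqrt (P i x * P j x) with hD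
        have hD0 : 0 ≤ D := Finset.sum_nonneg fun x _ => Real.sqrt_nonneg _
        rcases eq_or_lt_of_le hD0 with h | h
        · rw [← h]; positivity
        · have := hc i j hij'
          rw [← hD, le_neg] at this
          calc D = Real.exp (Real.log D) := (Real.exp_log h).symm
            _ ≤ Real.exp (-c) := Real.exp_le_exp.mpr (by linarith)
    have step3 : (∑ i, Real.sqrt (μ i)) * (∑ j, Real.sqrt (ν j)) ≤ (L : ℝ) / 2 := by
      set S := Finset.univ.filter (fun i => μ i ≠ 0) with hS
      set T := Finset.univ.filter (fun i => ν i ≠ 0) with hT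
      have hST : Disjoint S T := by
        rw [Finset.disjoint_filter]
        intro i _ hi
        rcases hdisj i with h | h
        · exact absurd h hi
        · simpa using h
      have hcard : (S.card : ℝ) + T.card ≤ L := by
        have := Finset.card_union_of_disjoint hST
        have h2 : (S ∪ T).card ≤ Fintype.card (Fin L) := Finset.card_le_univ _
        rw [this] at h2
        rw [Fintype.card_fin] at h2
        exact_mod_cast h2
      have h1 := sum_sqrt_le_sqrt_card μ hμ0 hμ1
      have h2 := sum_sqrt_le_sqrt_card ν hν0 hν1
      rw [← hS] at h1; rw [← hT] at h2
      have ha : 0 ≤ ∑ i, Real.sqrt (μ i) := Finset.sum_nonneg fun i _ => Real.sqrt_nonneg _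
      have hb : 0 ≤ ∑ j, Real.sqrt (ν j) := Finset.sum_nonneg fun j _ => Real.sqrt_nonneg _
      nlinarith [sq_nonneg ((∑ i, Real.sqrt (μ i)) - (∑ j, Real.sqrt (ν j)))]
    calc B ≤ _ := step1
      _ ≤ _ := step2
      _ ≤ (L : ℝ) / 2 * Real.exp (-c) :=
          mul_le_mul_of_nonneg_right step3 (Real.exp_nonneg _)
  rcases eq_or_lt_of_le hB0 with hBz | hBpos
  · -- degenerate case: mixture Bhattacharyya coefficient is zero
    rw [← hBz, Real.log_zero, neg_zero, ge_iff_le, sub_nonpos]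
    have hD : (∑ x, Real.sqrt (P i0 x * P j0 x)) = 0 := by
      apply Finset.sum_eq_zero
      intro x _
      have hterm : Real.sqrt (A x * C x) = 0 := by
        have := (Finset.sum_eq_zero_iff_of_nonneg
          (fun x _ => Real.sqrt_nonneg (A x * C x))).mp hBz.symm x (Finset.mem_univ x)
        exact this
      have hAC : A x * C x = 0 := by
        have := Real.sqrt_eq_zero (mul_nonneg (hA0 x) (hC0 x)) |>.mp hterm
        exact this
      rcases mul_eq_zero.mp hAC with h | h
      · have hP : μ i0 * P i0 x = 0 :=
          (Finset.sum_eq_zero_iff_of_nonneg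
            (fun i _ => mul_nonneg (hμ0 i) (hP0 i x))).mp h i0 (Finset.mem_univ i0)
        have : P i0 x = 0 := by
          rcases mul_eq_zero.mp hP with h' | h'
          · exact absurd h' hi0
          · exact h'
        simp [this]
      · have hP : ν j0 * P j0 x = 0 :=
          (Finset.sum_eq_zero_iff_of_nonneg
            (fun j _ => mul_nonneg (hν0 j) (hP0 j x))).mp h j0 (Finset.mem_univ j0)
        have : P j0 x = 0 := by
          rcases mul_eq_zero.mp hP with h' | h'
          · exact absurd h' hj0
          · exact h'
        simp [this]
    have hc0 := hc i0 j0 hij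
    rw [hD, Real.log_zero, neg_zero] at hc0
    linarith
  · -- main case
    have hlog : Real.log B ≤ Real.log ((L : ℝ) / 2 * Real.exp (-c)) :=
      Real.log_le_log hBpos key
    rw [Real.log_mul (by positivity) (Real.exp_ne_zero _), Real.log_exp] at hlog
    rw [ge_iff_le, sub_le_iff_le_add]
    linarith
end

section
/- Let P₁,...,P_L be probability distributions on a finite set O such that D_B(P_i, P_j) ≥ log L for all i ≠ j. Then for any probability distributions μ, ν on {1,...,L}, the total variation distance between the mixtures satisfies D_TV(E_{i∼μ}[P_i], E_{j∼ν}[P_j]) ≥ (1/2)·D_TV(μ, ν). -/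
private lemma sqrt_mul_le_half_add {x y : ℝ} (hx : 0 ≤ x) (hy : 0 ≤ y) :
    Real.sqrt (x * y) ≤ (x + y) / 2 := by
  have h : x * y ≤ ((x + y) / 2) ^ 2 := by nlinarith [sq_nonneg (x - y)]
  calc Real.sqrt (x * y) ≤ Real.sqrt (((x + y) / 2) ^ 2) := Real.sqrt_le_sqrt h
    _ = (x + y) / 2 := Real.sqrt_sq (by linarith)

private lemma sqrt_add_le_sqrt_add_sqrt (x y : ℝ) :
    Real.sqrt (x + y) ≤ Real.sqrt x + Real.sqrt y := by
  rcases le_total x 0 with hx | hx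
  · calc Real.sqrt (x + y) ≤ Real.sqrt y := Real.sqrt_le_sqrt (by linarith)
      _ ≤ Real.sqrt x + Real.sqrt y := by linarith [Real.sqrt_nonneg x]
  · rcases le_total y 0 with hy | hy
    · calc Real.sqrt (x + y) ≤ Real.sqrt x := Real.sqrt_le_sqrt (by linarith)
        _ ≤ Real.sqrt x + Real.sqrt y := by linarith [Real.sqrt_nonneg y]
    · have h : x + y ≤ (Real.sqrt x + Real.sqrt y) ^ 2 := by
        have := mul_nonneg (Real.sqrt_nonneg x) (Real.sqrt_nonneg y)
        rw [add_sq, Real.sq_sqrt hx, Real.sq_sqrt hy]; linarith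
      calc Real.sqrt (x + y) ≤ Real.sqrt ((Real.sqrt x + Real.sqrt y) ^ 2) :=
            Real.sqrt_le_sqrt h
        _ = Real.sqrt x + Real.sqrt y := Real.sqrt_sq (by positivity)

private lemma sqrt_sum_le_sum_sqrt {ι : Type*} (s : Finset ι) (f : ι → ℝ) :
    Real.sqrt (∑ i ∈ s, f i) ≤ ∑ i ∈ s, Real.sqrt (f i) := by
  classical
  induction s using Finset.induction_on with
  | empty => simp
  | @insert a s ha ih =>
    rw [Finset.sum_insert ha, Finset.sum_insert ha]
    exact (sqrt_add_le_sqrt_add_sqrt _ _).trans (by linarith)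

/-- If `P₁,...,P_L` are probability distributions on a finite set `O` with
pairwise Bhattacharyya divergence at least `log L`, then for any mixing distributions
`μ, ν` on `[L]`, `D_TV(E_{i∼μ}[P_i], E_{j∼ν}[P_j]) ≥ (1/2)·D_TV(μ,ν)`. -/
theorem tv_mixture_lower_bound
    {O : Type*} [Fintype O] {L : ℕ} (P : Fin L → O → ℝ)
    (hP0 : ∀ i x, 0 ≤ P i x) (hP1 : ∀ i, ∑ x, P i x = 1)
    (hsep : ∀ i j, i ≠ j →
      -Real.log (∑ x, Real.sqrt (P i x * P j x)) ≥ Real.log (L : ℝ))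
    (μ ν : Fin L → ℝ)
    (hμ0 : ∀ i, 0 ≤ μ i) (hμ1 : ∑ i, μ i = 1)
    (hν0 : ∀ i, 0 ≤ ν i) (hν1 : ∑ i, ν i = 1) :
    (1 / 2) * ∑ x, |(∑ i, μ i * P i x) - ∑ j, ν j * P j x| ≥
      (1 / 2) * ((1 / 2) * ∑ i, |μ i - ν i|) := by
  classical
  -- L is positive
  have hL : 0 < L := by
    rcases Nat.eq_zero_or_pos L with h | h
    · subst h; simp at hμ1
    · exact h
  have hLR : (0:ℝ) < (L:ℝ) := by exact_mod_cast hL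
  set a : Fin L → ℝ := fun i => μ i - ν i with ha
  set ap : Fin L → ℝ := fun i => max (a i) 0 with hap
  set an : Fin L → ℝ := fun i => max (-(a i)) 0 with han
  have hap0 : ∀ i, 0 ≤ ap i := fun i => le_max_right _ _
  have han0 : ∀ i, 0 ≤ an i := fun i => le_max_right _ _
  have hsub : ∀ i, ap i - an i = a i := by
    intro i
    rcases le_total (a i) 0 with h | h
    · rw [hap, han]; simp only
      rw [max_eq_right h, max_eq_left (by linarith)]; ring
    · rw [hap, han]; simp only
      rw [max_eq_left h, max_eq_right (by linarith)]; ring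
  have habs : ∀ i, ap i + an i = |a i| := by
    intro i
    rcases le_total (a i) 0 with h | h
    · rw [hap, han]; simp only
      rw [max_eq_right h, max_eq_left (by linarith), abs_of_nonpos h]; ring
    · rw [hap, han]; simp only
      rw [max_eq_left h, max_eq_right (by linarith), abs_of_nonneg h]; ring
  have hsum_a : ∑ i, a i = 0 := by
    simp only [ha, Finset.sum_sub_distrib, hμ1, hν1, sub_self]
  set S : ℝ := ∑ i, ap i with hS
  have hS0 : 0 ≤ S := Finset.sum_nonneg fun i _ => hap0 i
  have hSn : ∑ i, an i = S := by
    have : ∑ i, (ap i - an i) = 0 := by rw [Finset.sum_congr rfl fun i _ => hsub i, hsum_a]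
    rw [Finset.sum_sub_distrib] at this
    linarith
  have hS_abs : ∑ i, |a i| = 2 * S := by
    have : ∑ i, (ap i + an i) = S + S := by rw [Finset.sum_add_distrib, hSn]
    rw [← Finset.sum_congr rfl fun i _ => habs i] at *
    linarith [this]
  set p : O → ℝ := fun x => ∑ i, ap i * P i x with hp
  set n : O → ℝ := fun x => ∑ i, an i * P i x with hn
  have hp0 : ∀ x, 0 ≤ p x := fun x =>
    Finset.sum_nonneg fun i _ => mul_nonneg (hap0 i) (hP0 i x)
  have hn0 : ∀ x, 0 ≤ n x := fun x =>
    Finset.sum_nonneg fun i _ => mul_nonneg (han0 i) (hP0 i x)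
  have hp_sum : ∑ x, p x = S := by
    rw [hp]; rw [Finset.sum_comm]
    simp only [← Finset.mul_sum]
    rw [Finset.sum_congr rfl fun i _ => by rw [hP1 i, mul_one]]
  have hn_sum : ∑ x, n x = S := by
    rw [hn]; rw [Finset.sum_comm]
    simp only [← Finset.mul_sum]
    rw [Finset.sum_congr rfl fun i _ => by rw [hP1 i, mul_one], hSn]
  have hg : ∀ x, (∑ i, μ i * P i x) - ∑ j, ν j * P j x = p x - n x := by
    intro x
    rw [hp, hn]; simp only
    rw [← Finset.sum_sub_distrib, ← Finset.sum_sub_distrib]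
    refine Finset.sum_congr rfl fun i _ => ?_
    rw [← sub_mul, ← sub_mul, hsub]
  -- Bhattacharyya coefficient bound
  have hBC : ∀ i j, i ≠ j → ∑ x, Real.sqrt (P i x * P j x) ≤ 1 / (L:ℝ) := by
    intro i j hij
    set B := ∑ x, Real.sqrt (P i x * P j x) with hB
    have hB0 : 0 ≤ B := Finset.sum_nonneg fun x _ => Real.sqrt_nonneg _
    rcases eq_or_lt_of_le hB0 with h | h
    · rw [← h]; positivity
    · have h1 := hsep i j hij
      have h2 : Real.log B ≤ Real.log (1 / (L:ℝ)) := by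
        rw [Real.log_div one_ne_zero (ne_of_gt hLR), Real.log_one]
        linarith
      have h3 := Real.exp_le_exp.mpr h2
      rwa [Real.exp_log h, Real.exp_log (by positivity)] at h3
  -- min ≤ sqrt
  have hmin : ∀ x, min (p x) (n x) ≤ Real.sqrt (p x * n x) := by
    intro x
    rcases le_total (p x) (n x) with h | h
    · rw [min_eq_left h]
      calc p x = Real.sqrt (p x * p x) := (Real.sqrt_mul_self (hp0 x)).symm
        _ ≤ Real.sqrt (p x * n x) :=
          Real.sqrt_le_sqrt (mul_le_mul_of_nonneg_left h (hp0 x))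
    · rw [min_eq_right h]
      calc n x = Real.sqrt (n x * n x) := (Real.sqrt_mul_self (hn0 x)).symm
        _ ≤ Real.sqrt (p x * n x) :=
          Real.sqrt_le_sqrt (mul_le_mul_of_nonneg_right h (hn0 x))
  -- sqrt(p*n) ≤ double sum
  have hsplit : ∀ x, Real.sqrt (p x * n x)
      ≤ ∑ i, ∑ j, Real.sqrt (ap i * an j) * Real.sqrt (P i x * P j x) := by
    intro x
    have hexp : p x * n x = ∑ i, ∑ j, (ap i * an j) * (P i x * P j x) := by
      rw [hp, hn]; simp only
      rw [Finset.sum_mul_sum]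
      refine Finset.sum_congr rfl fun i _ => Finset.sum_congr rfl fun j _ => ?_
      ring
    rw [hexp]
    have step1 : Real.sqrt (∑ i, ∑ j, (ap i * an j) * (P i x * P j x))
        ≤ ∑ i, Real.sqrt (∑ j, (ap i * an j) * (P i x * P j x)) := by
      apply sqrt_sum_le_sum_sqrt
    refine step1.trans (Finset.sum_le_sum fun i _ => ?_)
    have step2 : Real.sqrt (∑ j, (ap i * an j) * (P i x * P j x))
        ≤ ∑ j, Real.sqrt ((ap i * an j) * (P i x * P j x)) := by
      apply sqrt_sum_le_sum_sqrt
    refine step2.trans (le_of_eq (Finset.sum_congr rfl fun j _ => ?_))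
    exact Real.sqrt_mul (mul_nonneg (hap0 i) (han0 j)) _
  -- key bound on sum of mins
  have hkey : ∑ x, min (p x) (n x) ≤ S / 2 := by
    have h1 : ∑ x, min (p x) (n x)
        ≤ ∑ i, ∑ j, Real.sqrt (ap i * an j) * (∑ x, Real.sqrt (P i x * P j x)) := by
      calc ∑ x, min (p x) (n x)
          ≤ ∑ x, ∑ i, ∑ j, Real.sqrt (ap i * an j) * Real.sqrt (P i x * P j x) :=
            Finset.sum_le_sum fun x _ => (hmin x).trans (hsplit x)
        _ = ∑ i, ∑ j, Real.sqrt (ap i * an j) * (∑ x, Real.sqrt (P i x * P j x)) := by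
            rw [Finset.sum_comm]
            refine Finset.sum_congr rfl fun i _ => ?_
            rw [Finset.sum_comm]
            refine Finset.sum_congr rfl fun j _ => ?_
            rw [Finset.mul_sum]
    have h2 : ∀ i j, Real.sqrt (ap i * an j) * (∑ x, Real.sqrt (P i x * P j x))
        ≤ Real.sqrt (ap i * an j) * (1 / (L:ℝ)) := by
      intro i j
      by_cases hz : ap i * an j = 0
      · rw [hz, Real.sqrt_zero, zero_mul, zero_mul]
      · have hapi : 0 < ap i := by
          rcases lt_or_eq_of_le (hap0 i) with h | h
          · exact h
          · exfalso; apply hz; rw [← h, zero_mul]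
        have hanj : 0 < an j := by
          rcases lt_or_eq_of_le (han0 j) with h | h
          · exact h
          · exfalso; apply hz; rw [← h, mul_zero]
        have hai : 0 < a i := by
          by_contra h
          push_neg at h
          rw [hap] at hapi; simp only at hapi
          rw [max_eq_right h] at hapi; exact lt_irrefl 0 hapi
        have haj : a j < 0 := by
          by_contra h
          push_neg at h
          rw [han] at hanj; simp only at hanj
          rw [max_eq_right (by linarith)] at hanj; exact lt_irrefl 0 hanj
        have hij : i ≠ j := by
          intro h; subst h; linarith
        exact mul_le_mul_of_nonneg_left (hBC i j hij) (Real.sqrt_nonneg _)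
    set ψ : Fin L → ℝ := fun i => if 0 < a i then 1 else 0 with hψ
    set χ : Fin L → ℝ := fun j => if a j < 0 then 1 else 0 with hχ
    have h3 : ∀ i j, Real.sqrt (ap i * an j) ≤ (ap i * χ j + an j * ψ i) / 2 := by
      intro i j
      by_cases hzi : ap i = 0
      · have : ψ i = 0 := by
          rw [hψ]; simp only
          rw [if_neg]
          intro h
          rw [hap] at hzi; simp only at hzi
          rw [max_eq_left (le_of_lt h)] at hzi; linarith
        simp only [hzi, this, zero_mul, mul_zero, Real.sqrt_zero, add_zero, zero_add]
        positivity
      · by_cases hzj : an j = 0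
        · have : χ j = 0 := by
            rw [hχ]; simp only
            rw [if_neg]
            intro h
            rw [han] at hzj; simp only at hzj
            rw [max_eq_left (by linarith)] at hzj; linarith
          simp only [hzj, this, zero_mul, mul_zero, Real.sqrt_zero, add_zero, zero_add]
          positivity
        · have hapi : 0 < a i := by
            by_contra h
            push_neg at h
            apply hzi; rw [hap]; simp only; rw [max_eq_right h]
          have hanj : a j < 0 := by
            by_contra h
            push_neg at h
            apply hzj; rw [han]; simp only; rw [max_eq_right (by linarith)]
          have hψi : ψ i = 1 := by rw [hψ]; simp only; rw [if_pos hapi]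
          have hχj : χ j = 1 := by rw [hχ]; simp only; rw [if_pos hanj]
          rw [hψi, hχj, mul_one, mul_one]
          exact sqrt_mul_le_half_add (hap0 i) (han0 j)
    have hψχ : ∑ i, (ψ i + χ i) ≤ (L:ℝ) := by
      have : ∀ i, ψ i + χ i ≤ 1 := by
        intro i
        rw [hψ, hχ]; simp only
        by_cases h : 0 < a i
        · rw [if_pos h, if_neg (by linarith)]; norm_num
        · rw [if_neg h]
          by_cases h' : a i < 0
          · rw [if_pos h']; norm_num
          · rw [if_neg h']; norm_num
      calc ∑ i, (ψ i + χ i) ≤ ∑ _i : Fin L, (1:ℝ) :=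
            Finset.sum_le_sum fun i _ => this i
        _ = (L:ℝ) := by simp
    have hψ0 : ∀ i, 0 ≤ ψ i := by intro i; rw [hψ]; simp only; positivity
    have hχ0 : ∀ i, 0 ≤ χ i := by intro i; rw [hχ]; simp only; positivity
    have h4 : ∑ i, ∑ j, Real.sqrt (ap i * an j) ≤ (L:ℝ) * S / 2 := by
      calc ∑ i, ∑ j, Real.sqrt (ap i * an j)
          ≤ ∑ i, ∑ j, (ap i * χ j + an j * ψ i) / 2 :=
            Finset.sum_le_sum fun i _ => Finset.sum_le_sum fun j _ => h3 i j
        _ = ((∑ i, ap i) * (∑ j, χ j) + (∑ j, an j) * (∑ i, ψ i)) / 2 := by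
            have e1 : ∑ i, ∑ j, ap i * χ j = (∑ i, ap i) * (∑ j, χ j) :=
              (Finset.sum_mul_sum Finset.univ Finset.univ ap χ).symm
            have e2 : ∑ i, ∑ j, an j * ψ i = (∑ j, an j) * (∑ i, ψ i) := by
              rw [Finset.sum_comm]
              exact (Finset.sum_mul_sum Finset.univ Finset.univ an ψ).symm
            rw [← e1, ← e2]
            simp only [add_div, Finset.sum_add_distrib, Finset.sum_div]
        _ = S * ((∑ j, χ j) + (∑ i, ψ i)) / 2 := by rw [← hS, hSn]; ring
        _ ≤ S * (L:ℝ) / 2 := by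
            have h5 : (∑ j, χ j) + (∑ i, ψ i) ≤ (L:ℝ) := by
              rw [add_comm, ← Finset.sum_add_distrib]; exact hψχ
            nlinarith
        _ = (L:ℝ) * S / 2 := by ring
    calc ∑ x, min (p x) (n x)
        ≤ ∑ i, ∑ j, Real.sqrt (ap i * an j) * (1 / (L:ℝ)) := by
          refine h1.trans (Finset.sum_le_sum fun i _ => Finset.sum_le_sum fun j _ => h2 i j)
      _ = (∑ i, ∑ j, Real.sqrt (ap i * an j)) * (1 / (L:ℝ)) := by
          simp only [← Finset.sum_mul]
      _ ≤ ((L:ℝ) * S / 2) * (1 / (L:ℝ)) := by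
          apply mul_le_mul_of_nonneg_right h4
          positivity
      _ = S / 2 := by field_simp
  -- assemble
  have habsg : ∀ x, |p x - n x| = p x + n x - 2 * min (p x) (n x) := by
    intro x
    rcases le_total (p x) (n x) with h | h
    · rw [min_eq_left h, abs_of_nonpos (by linarith)]; ring
    · rw [min_eq_right h, abs_of_nonneg (by linarith)]; ring
  have hfinal : ∑ x, |(∑ i, μ i * P i x) - ∑ j, ν j * P j x| ≥ S := by
    have : ∑ x, |(∑ i, μ i * P i x) - ∑ j, ν j * P j x|
        = ∑ x, (p x + n x - 2 * min (p x) (n x)) := by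
      refine Finset.sum_congr rfl fun x _ => ?_
      rw [hg x, habsg x]
    rw [this]
    simp only [Finset.sum_sub_distrib, Finset.sum_add_distrib, hp_sum, hn_sum,
      ← Finset.mul_sum]
    linarith [hkey]
  rw [hS_abs] at *
  linarith [hfinal]
end

section
/- Suppose P₁,...,P_L are probability distributions on a finite set O with D_B(P_i, P_j) ≥ log(2L) for all i ≠ j. Let M ∈ ℝ^{O×L} be the matrix whose columns are P₁,...,P_L. Then there exists a matrix M⁺ ∈ ℝ^{L×O} with induced ℓ¹→ℓ¹ operator norm at most 2 such that M⁺M = I_L. -/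
/-- If `P₁,...,P_L` are probability distributions on a finite set `O` with
pairwise Bhattacharyya divergence at least `log(2L)`, and `M ∈ ℝ^{O×L}` is the matrix
whose columns are the `Pᵢ`, then there exists `M⁺ ∈ ℝ^{L×O}` with ℓ¹→ℓ¹ operator norm
(maximum column ℓ¹ norm) at most 2 such that `M⁺ M = I_L`. -/
theorem exists_left_inverse_of_bhattacharyya_sep
    {O : Type*} [Fintype O] {L : ℕ} (P : Fin L → O → ℝ)
    (hP0 : ∀ i x, 0 ≤ P i x) (hP1 : ∀ i, ∑ x, P i x = 1)
    (hsep : ∀ i j, i ≠ j →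
      -Real.log (∑ x, Real.sqrt (P i x * P j x)) ≥ Real.log (2 * (L : ℝ))) :
    ∃ Minv : Matrix (Fin L) O ℝ,
      (∀ x : O, ∑ i, |Minv i x| ≤ 2) ∧
      Minv * (Matrix.of fun (x : O) (i : Fin L) => P i x) = 1 := by
  classical
  rcases Nat.eq_zero_or_pos L with hL0 | hL
  · subst hL0
    exact ⟨0, fun x => by simp, by ext i j; exact i.elim0⟩
  have hLpos : (0:ℝ) < L := by exact_mod_cast hL
  -- Bhattacharyya coefficient bound
  have hB : ∀ i j, i ≠ j → ∑ x, Real.sqrt (P i x * P j x) ≤ 1 / (2 * L) := by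
    intro i j hij
    have hb0 : 0 ≤ ∑ x, Real.sqrt (P i x * P j x) :=
      Finset.sum_nonneg fun x _ => Real.sqrt_nonneg _
    rcases eq_or_lt_of_le hb0 with hb | hb
    · rw [← hb]; positivity
    · have h := hsep i j hij
      have hlog : Real.log (∑ x, Real.sqrt (P i x * P j x)) ≤ Real.log (1 / (2 * L)) := by
        rw [Real.log_div one_ne_zero (by positivity), Real.log_one]
        linarith
      exact (Real.log_le_log_iff hb (by positivity)).mp hlog
  -- normalization function and normalized matrix
  obtain ⟨σ, hσx⟩ : ∃ σ : O → ℝ, ∀ x, σ x = ∑ k, P k x := ⟨_, fun _ => rfl⟩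
  have hσ0 : ∀ x, 0 ≤ σ x := fun x => (hσx x) ▸ Finset.sum_nonneg fun k _ => hP0 k x
  have hPle : ∀ i x, P i x ≤ σ x := fun i x =>
    (hσx x) ▸ Finset.single_le_sum (fun k _ => hP0 k x) (Finset.mem_univ i)
  obtain ⟨A, hAx⟩ : ∃ A : Fin L → O → ℝ, ∀ i x, A i x = P i x / σ x := ⟨_, fun _ _ => rfl⟩
  have hA0 : ∀ i x, 0 ≤ A i x := fun i x => (hAx i x) ▸ div_nonneg (hP0 i x) (hσ0 x)
  have hAcol : ∀ x, ∑ i, A i x ≤ 1 := by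
    intro x
    have h1 : ∑ i, A i x = σ x / σ x := by
      rw [Finset.sum_congr rfl fun i _ => hAx i x, ← Finset.sum_div, ← hσx x]
    rcases eq_or_lt_of_le (hσ0 x) with h0 | h0
    · rw [h1, ← h0]; norm_num
    · rw [h1, div_self (ne_of_gt h0)]
  -- the Gram-like matrix G
  obtain ⟨G, hGx⟩ : ∃ G : Matrix (Fin L) (Fin L) ℝ, ∀ i j, G i j = ∑ x, A i x * P j x :=
    ⟨Matrix.of fun i j => ∑ x, A i x * P j x, fun _ _ => rfl⟩
  have hG0 : ∀ i j, 0 ≤ G i j := fun i j =>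
    (hGx i j) ▸ Finset.sum_nonneg fun x _ => mul_nonneg (hA0 i x) (hP0 j x)
  have hGsymm : ∀ i j, G i j = G j i := by
    intro i j
    rw [hGx i j, hGx j i]
    refine Finset.sum_congr rfl fun x _ => ?_
    rw [hAx i x, hAx j x, div_mul_eq_mul_div, div_mul_eq_mul_div, mul_comm]
  -- rows of G sum to 1
  have hGrow : ∀ i, ∑ j, G i j = 1 := by
    intro i
    rw [Finset.sum_congr rfl fun j _ => hGx i j, Finset.sum_comm]
    have hin : ∀ x, ∑ j, A i x * P j x = P i x := by
      intro x
      rw [← Finset.mul_sum, ← hσx x, hAx i x]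
      rcases eq_or_lt_of_le (hσ0 x) with h0 | h0
      · have hp : P i x = 0 := le_antisymm (h0 ▸ hPle i x) (hP0 i x)
        rw [hp, zero_div, zero_mul]
      · exact div_mul_cancel₀ _ (ne_of_gt h0)
    rw [Finset.sum_congr rfl fun x _ => hin x]
    exact hP1 i
  -- off-diagonal entries are small
  have hGoff : ∀ i j, i ≠ j → G i j ≤ 1 / (4 * L) := by
    intro i j hij
    have hpt : ∀ x, A i x * P j x ≤ Real.sqrt (P i x * P j x) / 2 := by
      intro x
      have ha := hP0 i x
      have hb := hP0 j x
      have hab : P i x + P j x ≤ σ x := by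
        rw [hσx x]
        have h := Finset.sum_le_sum_of_subset_of_nonneg
          (Finset.subset_univ ({i, j} : Finset (Fin L))) (fun k _ _ => hP0 k x)
        rwa [Finset.sum_pair hij] at h
      have hsq : Real.sqrt (P i x * P j x) * Real.sqrt (P i x * P j x) = P i x * P j x :=
        Real.mul_self_sqrt (mul_nonneg ha hb)
      have h2 : 2 * Real.sqrt (P i x * P j x) ≤ σ x := by
        nlinarith [Real.sq_sqrt ha, Real.sq_sqrt hb, sq_nonneg (Real.sqrt (P i x) - Real.sqrt (P j x)),
          Real.sqrt_mul ha (P j x), Real.sqrt_nonneg (P i x), Real.sqrt_nonneg (P j x)]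
      rcases eq_or_lt_of_le (Real.sqrt_nonneg (P i x * P j x)) with hz | hz
      · have hab0 : P i x * P j x = 0 := by rw [← hsq, ← hz, mul_zero]
        have hz' : A i x * P j x = 0 := by
          rcases mul_eq_zero.mp hab0 with h | h
          · rw [hAx i x, h, zero_div, zero_mul]
          · rw [h, mul_zero]
        rw [hz', ← hz]
        norm_num
      · have hs : 0 < σ x := lt_of_lt_of_le (by linarith) h2
        have hform : A i x * P j x = P i x * P j x / σ x := by rw [hAx i x]; ring
        rw [hform, div_le_div_iff₀ hs (by norm_num : (0:ℝ) < 2)]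
        nlinarith [mul_le_mul_of_nonneg_left h2 (le_of_lt hz)]
    calc G i j = ∑ x, A i x * P j x := hGx i j
      _ ≤ ∑ x, Real.sqrt (P i x * P j x) / 2 := Finset.sum_le_sum fun x _ => hpt x
      _ = (∑ x, Real.sqrt (P i x * P j x)) / 2 := by rw [Finset.sum_div]
      _ ≤ (1 / (2 * L)) / 2 := by linarith [hB i j hij]
      _ = 1 / (4 * L) := by field_simp; ring
  -- off-diagonal row sums
  have hGoffs : ∀ i, ∑ j ∈ Finset.univ.erase i, G i j ≤ 1/4 := by
    intro i
    have h1 : ∑ j ∈ Finset.univ.erase i, G i j ≤ ∑ _j ∈ Finset.univ.erase i, 1/(4*(L:ℝ)) :=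
      Finset.sum_le_sum fun j hj => hGoff i j fun h => (Finset.ne_of_mem_erase hj) h.symm
    have h2 : (∑ _j ∈ Finset.univ.erase i, 1/(4*(L:ℝ)))
        = ((Finset.univ.erase i).card : ℝ) * (1/(4*(L:ℝ))) := by
      rw [Finset.sum_const, nsmul_eq_mul]
    have h3 : ((Finset.univ.erase i).card : ℝ) ≤ L := by
      have hc := Finset.card_erase_le (s := (Finset.univ : Finset (Fin L))) (a := i)
      have hcu : (Finset.univ : Finset (Fin L)).card = L := by simp
      exact_mod_cast hc.trans (le_of_eq hcu)
    have h4 : ((Finset.univ.erase i).card : ℝ) * (1/(4*(L:ℝ))) ≤ (L:ℝ) * (1/(4*(L:ℝ))) :=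
      mul_le_mul_of_nonneg_right h3 (by positivity)
    have h5 : (L:ℝ) * (1/(4*(L:ℝ))) = 1/4 := by field_simp
    linarith [h1, h2 ▸ h4]
  have hGsplit : ∀ i, G i i + ∑ j ∈ Finset.univ.erase i, G i j = 1 := by
    intro i
    rw [Finset.add_sum_erase Finset.univ (fun j => G i j) (Finset.mem_univ i)]
    exact hGrow i
  have hGdiag : ∀ i, 3/4 ≤ G i i := by
    intro i
    have := hGsplit i
    have := hGoffs i
    linarith
  have hGle1 : ∀ i, G i i ≤ 1 := by
    intro i
    have h := hGsplit i
    have h0 : 0 ≤ ∑ j ∈ Finset.univ.erase i, G i j :=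
      Finset.sum_nonneg fun j _ => hG0 i j
    linarith
  -- row sums of |1 - G| are at most 1/2
  have hErow : ∀ m, ∑ k, |(1 : Matrix (Fin L) (Fin L) ℝ) m k - G m k| ≤ 1/2 := by
    intro m
    have hsplit : |(1 : Matrix (Fin L) (Fin L) ℝ) m m - G m m|
        + ∑ k ∈ Finset.univ.erase m, |(1 : Matrix (Fin L) (Fin L) ℝ) m k - G m k|
        = ∑ k, |(1 : Matrix (Fin L) (Fin L) ℝ) m k - G m k| :=
      Finset.add_sum_erase Finset.univ
        (fun k => |(1 : Matrix (Fin L) (Fin L) ℝ) m k - G m k|) (Finset.mem_univ m)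
    have hdiag : |(1 : Matrix (Fin L) (Fin L) ℝ) m m - G m m| = 1 - G m m := by
      rw [Matrix.one_apply_eq, abs_of_nonneg (by linarith [hGle1 m])]
    have hoff : ∀ k ∈ Finset.univ.erase m,
        |(1 : Matrix (Fin L) (Fin L) ℝ) m k - G m k| = G m k := by
      intro k hk
      rw [Matrix.one_apply_ne fun h => (Finset.ne_of_mem_erase hk) h.symm, zero_sub, abs_neg,
        abs_of_nonneg (hG0 m k)]
    rw [← hsplit, hdiag, Finset.sum_congr rfl hoff]
    have h1 := hGsplit m
    have h2 := hGoffs m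
    linarith
  -- G is invertible
  have hdet : IsUnit G.det := by
    have hno : ¬ ∃ v, v ≠ 0 ∧ G.mulVec v = 0 := by
      rintro ⟨v, hv, hGv⟩
      obtain ⟨i0, -, hmax⟩ := Finset.exists_max_image Finset.univ (fun i => |v i|)
        ⟨⟨0, hL⟩, Finset.mem_univ _⟩
      have hv0 : 0 < |v i0| := by
        rcases Function.ne_iff.mp hv with ⟨k, hk⟩
        have : 0 < |v k| := abs_pos.mpr hk
        exact lt_of_lt_of_le this (hmax k (Finset.mem_univ k))
      have hrow0 : ∑ j, G i0 j * v j = 0 := by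
        have := congrFun hGv i0
        simpa [Matrix.mulVec, dotProduct] using this
      have heq : G i0 i0 * v i0 = -∑ j ∈ Finset.univ.erase i0, G i0 j * v j := by
        have h : G i0 i0 * v i0 + ∑ j ∈ Finset.univ.erase i0, G i0 j * v j
            = ∑ j, G i0 j * v j :=
          Finset.add_sum_erase Finset.univ (fun j => G i0 j * v j) (Finset.mem_univ i0)
        rw [hrow0] at h
        linarith
      have habs : G i0 i0 * |v i0| ≤ (1/4) * |v i0| := by
        calc G i0 i0 * |v i0| = |G i0 i0 * v i0| := by
              rw [abs_mul, abs_of_nonneg (hG0 i0 i0)]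
          _ = |∑ j ∈ Finset.univ.erase i0, G i0 j * v j| := by rw [heq, abs_neg]
          _ ≤ ∑ j ∈ Finset.univ.erase i0, |G i0 j * v j| :=
              Finset.abs_sum_le_sum_abs _ _
          _ ≤ ∑ j ∈ Finset.univ.erase i0, G i0 j * |v i0| := by
              refine Finset.sum_le_sum fun j _ => ?_
              rw [abs_mul, abs_of_nonneg (hG0 i0 j)]
              exact mul_le_mul_of_nonneg_left (hmax j (Finset.mem_univ j)) (hG0 i0 j)
          _ = (∑ j ∈ Finset.univ.erase i0, G i0 j) * |v i0| := by rw [Finset.sum_mul]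
          _ ≤ (1/4) * |v i0| := mul_le_mul_of_nonneg_right (hGoffs i0) (abs_nonneg _)
      nlinarith [hGdiag i0]
    have hdz : G.det ≠ 0 := fun h => hno (Matrix.exists_mulVec_eq_zero_iff.mpr h)
    exact isUnit_iff_ne_zero.mpr hdz
  have hVG : G⁻¹ * G = 1 := Matrix.nonsing_inv_mul G hdet
  have hVsym : ∀ i k, G⁻¹ i k = G⁻¹ k i := by
    have hGt : G.transpose = G := by
      ext i j
      exact hGsymm j i
    intro i k
    have h := Matrix.transpose_nonsing_inv G
    calc G⁻¹ i k = (G⁻¹).transpose k i := rfl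
      _ = (G.transpose)⁻¹ k i := by rw [h]
      _ = G⁻¹ k i := by rw [hGt]
  -- row sums of |G⁻¹| are at most 2
  have hVrow : ∀ i, ∑ k, |G⁻¹ i k| ≤ 2 := by
    intro i
    have hid : ∀ k, G⁻¹ i k = (1 : Matrix (Fin L) (Fin L) ℝ) i k
        + ∑ m, G⁻¹ i m * ((1 : Matrix (Fin L) (Fin L) ℝ) m k - G m k) := by
      intro k
      have h1 : ∑ m, G⁻¹ i m * ((1 : Matrix (Fin L) (Fin L) ℝ) m k - G m k)
          = (G⁻¹ * ((1 : Matrix (Fin L) (Fin L) ℝ) - G)) i k := by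
        rw [Matrix.mul_apply]
        exact Finset.sum_congr rfl fun m _ => by rw [Matrix.sub_apply]
      rw [h1, Matrix.mul_sub, Matrix.mul_one, hVG, Matrix.sub_apply]
      ring
    have hone : ∑ k, |(1 : Matrix (Fin L) (Fin L) ℝ) i k| = 1 := by
      have h : ∀ k, |(1 : Matrix (Fin L) (Fin L) ℝ) i k| = if i = k then 1 else 0 := by
        intro k
        by_cases h : i = k
        · simp [h, Matrix.one_apply]
        · simp [Matrix.one_apply, h]
      rw [Finset.sum_congr rfl fun k _ => h k]
      simp
    have hstep : ∑ k, |G⁻¹ i k| ≤ ∑ k, (|(1 : Matrix (Fin L) (Fin L) ℝ) i k|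
        + ∑ m, |G⁻¹ i m| * |(1 : Matrix (Fin L) (Fin L) ℝ) m k - G m k|) := by
      refine Finset.sum_le_sum fun k _ => ?_
      rw [hid k]
      refine le_trans (abs_add_le _ _) (add_le_add_right ?_ _)
      refine le_trans (Finset.abs_sum_le_sum_abs _ _) ?_
      exact Finset.sum_le_sum fun m _ => le_of_eq (abs_mul _ _)
    have hswap : ∑ k, ∑ m, |G⁻¹ i m| * |(1 : Matrix (Fin L) (Fin L) ℝ) m k - G m k|
        = ∑ m, |G⁻¹ i m| * ∑ k, |(1 : Matrix (Fin L) (Fin L) ℝ) m k - G m k| := by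
      rw [Finset.sum_comm]
      exact Finset.sum_congr rfl fun m _ => by rw [← Finset.mul_sum]
    have hbound : ∑ m, |G⁻¹ i m| * ∑ k, |(1 : Matrix (Fin L) (Fin L) ℝ) m k - G m k|
        ≤ ∑ m, |G⁻¹ i m| * (1/2) :=
      Finset.sum_le_sum fun m _ => mul_le_mul_of_nonneg_left (hErow m) (abs_nonneg _)
    have hfac : ∑ m, |G⁻¹ i m| * (1/2) = (∑ m, |G⁻¹ i m|) * (1/2) := by
      rw [← Finset.sum_mul]
    have hsum : ∑ k, (|(1 : Matrix (Fin L) (Fin L) ℝ) i k|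
        + ∑ m, |G⁻¹ i m| * |(1 : Matrix (Fin L) (Fin L) ℝ) m k - G m k|)
        = 1 + ∑ k, ∑ m, |G⁻¹ i m| * |(1 : Matrix (Fin L) (Fin L) ℝ) m k - G m k| := by
      rw [Finset.sum_add_distrib, hone]
    rw [hsum, hswap] at hstep
    linarith [hstep, hbound, hfac.symm ▸ hbound]
  -- conclusion
  refine ⟨G⁻¹ * Matrix.of (fun (i : Fin L) (x : O) => A i x), ?_, ?_⟩
  · intro x
    have hVcol : ∀ k, ∑ i, |G⁻¹ i k| ≤ 2 := by
      intro k
      rw [Finset.sum_congr rfl fun i _ => by rw [hVsym i k]]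
      exact hVrow k
    calc ∑ i, |(G⁻¹ * Matrix.of (fun (i : Fin L) (x : O) => A i x)) i x|
        = ∑ i, |∑ k, G⁻¹ i k * A k x| := by
          refine Finset.sum_congr rfl fun i _ => ?_
          rw [Matrix.mul_apply]
          rfl
      _ ≤ ∑ i, ∑ k, |G⁻¹ i k| * A k x := by
          refine Finset.sum_le_sum fun i _ => ?_
          refine le_trans (Finset.abs_sum_le_sum_abs _ _) ?_
          refine Finset.sum_le_sum fun k _ => ?_
          rw [abs_mul, abs_of_nonneg (hA0 k x)]
      _ = ∑ k, (∑ i, |G⁻¹ i k|) * A k x := by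
          rw [Finset.sum_comm]
          exact Finset.sum_congr rfl fun k _ => by rw [Finset.sum_mul]
      _ ≤ ∑ k, 2 * A k x := Finset.sum_le_sum fun k _ =>
          mul_le_mul_of_nonneg_right (hVcol k) (hA0 k x)
      _ = 2 * ∑ k, A k x := by rw [Finset.mul_sum]
      _ ≤ 2 * 1 := by
          have := hAcol x
          linarith
      _ = 2 := mul_one 2
  · have hAM : (Matrix.of (fun (i : Fin L) (x : O) => A i x))
        * (Matrix.of fun (x : O) (i : Fin L) => P i x) = G := by
      ext i j
      rw [Matrix.mul_apply, hGx i j]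
      rfl
    rw [Matrix.mul_assoc, hAM, hVG]
end

section
/- For any reals λ₁,...,λ_k ∈ [-1,1] and δ ∈ [0,1), it holds that ∏_{i=1}^k (1+δλᵢ) + ∏_{i=1}^k (1-δλᵢ) ≥ 2(1-δ²)^{⌊k/2⌋}. -/
open Finset

private lemma aux_two_le_pow (δ : ℝ) (hδ0 : 0 ≤ δ) (hδ1 : δ ≤ 1) :
    ∀ t : ℕ, 2 ≤ (1 - δ) ^ t + (1 + δ) ^ t := by
  intro t
  induction t with
  | zero => norm_num
  | succ t ih =>
    have h1 : (0:ℝ) ≤ 1 - δ := by linarith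
    have h3 : (1 - δ:ℝ) ^ t ≤ (1 + δ) ^ t := by
      apply pow_le_pow_left₀ h1; linarith
    rw [pow_succ, pow_succ]
    nlinarith [mul_nonneg hδ0 (sub_nonneg.2 h3), pow_nonneg h1 t]

private lemma aux_vertex (δ : ℝ) (hδ0 : 0 ≤ δ) (hδ1 : δ < 1) (m n : ℕ) (h : m ≤ n) :
    2 * (1 - δ ^ 2) ^ ((m + n) / 2) ≤ (1+δ)^m * (1-δ)^n + (1-δ)^m * (1+δ)^n := by
  obtain ⟨t, rfl⟩ := Nat.exists_eq_add_of_le h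
  have hb0 : (0:ℝ) ≤ 1 - δ ^ 2 := by nlinarith
  have hb1 : (1 - δ ^ 2 : ℝ) ≤ 1 := by nlinarith
  have hfac : (1 - δ ^ 2 : ℝ) = (1 + δ) * (1 - δ) := by ring
  have key : (1+δ)^m * (1-δ)^(m+t) + (1-δ)^m * (1+δ)^(m+t)
      = (1 - δ ^ 2)^m * ((1-δ)^t + (1+δ)^t) := by
    rw [hfac, pow_add, pow_add, mul_pow]; ring
  rw [key]
  have hle : m ≤ (m + (m + t)) / 2 := by omega
  have h1 : (1 - δ ^ 2 : ℝ) ^ ((m + (m + t)) / 2) ≤ (1 - δ ^ 2) ^ m :=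
    pow_le_pow_of_le_one hb0 hb1 hle
  have h2 : (2:ℝ) ≤ (1-δ)^t + (1+δ)^t := aux_two_le_pow δ hδ0 hδ1.le t
  have h3 : (0:ℝ) ≤ (1 - δ ^ 2) ^ m := pow_nonneg hb0 m
  calc 2 * (1 - δ ^ 2) ^ ((m + (m + t)) / 2) ≤ 2 * (1 - δ ^ 2) ^ m := by linarith
    _ ≤ (1 - δ ^ 2)^m * ((1-δ)^t + (1+δ)^t) := by nlinarith

private lemma aux_vertex_case {k : ℕ} (l : Fin k → ℝ) (hv : ∀ i, l i = 1 ∨ l i = -1)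
    (δ : ℝ) (hδ0 : 0 ≤ δ) (hδ1 : δ < 1) :
    2 * (1 - δ ^ 2) ^ (k / 2) ≤ (∏ i, (1 + δ * l i)) + ∏ i, (1 - δ * l i) := by
  classical
  have hsplit : (Finset.univ.filter (fun i => l i = 1)).card
      + (Finset.univ.filter (fun i => ¬ l i = 1)).card = k := by
    rw [Finset.card_filter_add_card_filter_not]
    simp
  have hP : ∏ i, (1 + δ * l i) = (1+δ) ^ (Finset.univ.filter (fun i => l i = 1)).card
      * (1-δ) ^ (Finset.univ.filter (fun i => ¬ l i = 1)).card := by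
    rw [← Finset.prod_filter_mul_prod_filter_not Finset.univ (fun i => l i = 1)]
    congr 1
    · rw [Finset.prod_congr rfl (fun i hi => show 1 + δ * l i = 1 + δ by
        rw [(Finset.mem_filter.1 hi).2]; ring), Finset.prod_const]
    · rw [Finset.prod_congr rfl (fun i hi => show 1 + δ * l i = 1 - δ by
        have h2 := (Finset.mem_filter.1 hi).2
        rcases hv i with h | h
        · exact absurd h h2
        · rw [h]; ring), Finset.prod_const]
  have hQ : ∏ i, (1 - δ * l i) = (1-δ) ^ (Finset.univ.filter (fun i => l i = 1)).card
      * (1+δ) ^ (Finset.univ.filter (fun i => ¬ l i = 1)).card := by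
    rw [← Finset.prod_filter_mul_prod_filter_not Finset.univ (fun i => l i = 1)]
    congr 1
    · rw [Finset.prod_congr rfl (fun i hi => show 1 - δ * l i = 1 - δ by
        rw [(Finset.mem_filter.1 hi).2]; ring), Finset.prod_const]
    · rw [Finset.prod_congr rfl (fun i hi => show 1 - δ * l i = 1 + δ by
        have h2 := (Finset.mem_filter.1 hi).2
        rcases hv i with h | h
        · exact absurd h h2
        · rw [h]; ring), Finset.prod_const]
  rw [hP, hQ]
  set m := (Finset.univ.filter (fun i => l i = 1)).card
  set n := (Finset.univ.filter (fun i => ¬ l i = 1)).card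
  rcases le_total m n with h | h
  · have := aux_vertex δ hδ0 hδ1 m n h
    rw [hsplit] at this
    linarith
  · have := aux_vertex δ hδ0 hδ1 n m h
    rw [Nat.add_comm, hsplit] at this
    linarith

private lemma aux_reduce {k : ℕ} (δ : ℝ) (hδ0 : 0 ≤ δ) (hδ1 : δ < 1) :
    ∀ (s : Finset (Fin k)) (l : Fin k → ℝ), (∀ i, -1 ≤ l i ∧ l i ≤ 1) →
      (∀ i, i ∉ s → l i = 1 ∨ l i = -1) →
      2 * (1 - δ ^ 2) ^ (k / 2) ≤ (∏ i, (1 + δ * l i)) + ∏ i, (1 - δ * l i) := by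
  classical
  intro s
  induction s using Finset.induction_on with
  | empty =>
    intro l hl hv
    exact aux_vertex_case l (fun i => hv i (Finset.notMem_empty i)) δ hδ0 hδ1
  | insert a s ha ih =>
    intro l hl hv
    have key : ∀ t : ℝ, (∏ i, (1 + δ * Function.update l a t i))
        = (1 + δ * t) * ∏ i ∈ Finset.univ \ {a}, (1 + δ * l i) := by
      intro t
      have : (fun i => 1 + δ * Function.update l a t i)
          = Function.update (fun i => 1 + δ * l i) a (1 + δ * t) := by
        funext i
        rcases eq_or_ne i a with h | h
        · subst h; simp
        · simp [Function.update_of_ne h]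
      rw [this, Finset.prod_update_of_mem (Finset.mem_univ a)]
    have key' : ∀ t : ℝ, (∏ i, (1 - δ * Function.update l a t i))
        = (1 - δ * t) * ∏ i ∈ Finset.univ \ {a}, (1 - δ * l i) := by
      intro t
      have : (fun i => 1 - δ * Function.update l a t i)
          = Function.update (fun i => 1 - δ * l i) a (1 - δ * t) := by
        funext i
        rcases eq_or_ne i a with h | h
        · subst h; simp
        · simp [Function.update_of_ne h]
      rw [this, Finset.prod_update_of_mem (Finset.mem_univ a)]
    set P := ∏ i ∈ Finset.univ \ {a}, (1 + δ * l i) with hPdef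
    set Q := ∏ i ∈ Finset.univ \ {a}, (1 - δ * l i) with hQdef
    have hP0 : 0 ≤ P := by
      apply Finset.prod_nonneg
      intro i _
      have := hl i
      nlinarith [this.1, this.2]
    have hQ0 : 0 ≤ Q := by
      apply Finset.prod_nonneg
      intro i _
      have := hl i
      nlinarith [this.1, this.2]
    have hupd : ∀ t : ℝ, -1 ≤ t → t ≤ 1 →
        (∀ i, -1 ≤ Function.update l a t i ∧ Function.update l a t i ≤ 1) := by
      intro t ht1 ht2 i
      rcases eq_or_ne i a with h | h
      · subst h; simp [ht1, ht2]
      · simp [Function.update_of_ne h]; exact hl i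
    have hupdv : ∀ t : ℝ, (t = 1 ∨ t = -1) →
        (∀ i, i ∉ s → Function.update l a t i = 1 ∨ Function.update l a t i = -1) := by
      intro t ht i hi
      rcases eq_or_ne i a with h | h
      · subst h; simpa using ht
      · rw [Function.update_of_ne h]
        exact hv i (by simp [Finset.mem_insert, h, hi])
    have h1 := ih (Function.update l a 1) (hupd 1 (by norm_num) le_rfl)
      (hupdv 1 (Or.inl rfl))
    have h2 := ih (Function.update l a (-1)) (hupd (-1) le_rfl (by norm_num))
      (hupdv (-1) (Or.inr rfl))
    rw [key, key'] at h1 h2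
    have hself : Function.update l a (l a) = l := Function.update_eq_self a l
    have hgoal : (∏ i, (1 + δ * l i)) + ∏ i, (1 - δ * l i)
        = (1 + δ * l a) * P + (1 - δ * l a) * Q := by
      rw [← hself, key, key']
      simp
    rw [hgoal]
    have hla := hl a
    rcases le_total Q P with h | h
    · -- use the t = -1 bound; S(la) - S(-1) = δ(la+1)(P-Q) ≥ 0
      nlinarith [mul_nonneg (mul_nonneg hδ0 (by linarith [hla.1] : (0:ℝ) ≤ l a + 1)) (sub_nonneg.2 h)]
    · nlinarith [mul_nonneg (mul_nonneg hδ0 (by linarith [hla.2] : (0:ℝ) ≤ 1 - l a)) (sub_nonneg.2 h)]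

/-- For reals `λ₁,...,λ_k ∈ [-1,1]` and `δ ∈ [0,1)`,
`∏ (1+δλᵢ) + ∏ (1-δλᵢ) ≥ 2(1-δ²)^⌊k/2⌋`. -/
theorem prod_one_add_mul_add_prod_one_sub_mul_ge
    {k : ℕ} (hk : 1 ≤ k) (l : Fin k → ℝ) (hl : ∀ i, -1 ≤ l i ∧ l i ≤ 1)
    (δ : ℝ) (hδ0 : 0 ≤ δ) (hδ1 : δ < 1) :
    (∏ i, (1 + δ * l i)) + ∏ i, (1 - δ * l i) ≥ 2 * (1 - δ ^ 2) ^ (k / 2) := by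
  exact aux_reduce δ hδ0 hδ1 Finset.univ l hl (fun i h => absurd (Finset.mem_univ i) h)
end

section
/- For any integers N ≥ 2 and d ≥ ⌈11·log N⌉ (natural logarithm), there exist vectors x₁,...,x_N ∈ {-1,+1}^d such that ‖xᵢ - xⱼ‖₁ ≥ d/2 for all i ≠ j. -/
open Finset in
lemma gv_numeric (N d : ℕ) (hN : 2 ≤ N) (hd : ⌈11 * Real.log N⌉₊ ≤ d) :
    N * ∑ k ∈ (range (d+1)).filter (fun k => 4*k < d), d.choose k ≤ 2^d := by
  set S := ∑ k ∈ (range (d+1)).filter (fun k => 4*k < d), d.choose k with hS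
  have hd1 : 1 ≤ d := by
    rcases Nat.eq_zero_or_pos d with h | h
    · exfalso
      have hlog : (0:ℝ) < 11 * Real.log N := by
        have : (0:ℝ) < Real.log N := Real.log_pos (by exact_mod_cast hN)
        linarith
      have := Nat.ceil_pos.mpr hlog
      omega
    · exact h
  set m := (d-1)/4 with hm
  have hm4 : 4*m ≤ d - 1 := by omega
  have h4dm : 3*d+1 ≤ 4*(d-m) := by omega
  -- (a) S * 3^(d-m) ≤ 4^d
  have ha : S * 3^(d-m) ≤ 4^d := by
    rw [hS, Finset.sum_mul]
    calc ∑ k ∈ (range (d+1)).filter (fun k => 4*k < d), d.choose k * 3^(d-m)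
        ≤ ∑ k ∈ (range (d+1)).filter (fun k => 4*k < d), d.choose k * 3^(d-k) := by
          apply Finset.sum_le_sum
          intro k hk
          simp only [mem_filter, mem_range] at hk
          have hkm : k ≤ m := by omega
          exact Nat.mul_le_mul_left _ (Nat.pow_le_pow_right (by norm_num) (by omega))
      _ ≤ ∑ k ∈ range (d+1), d.choose k * 3^(d-k) := by
          apply Finset.sum_le_sum_of_subset (filter_subset _ _)
      _ = 4^d := by
          have := add_pow 1 3 d
          simp only [one_pow, one_mul] at this
          norm_num [this]
          exact Finset.sum_congr rfl (fun k _ => by ring)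
  -- (c) N^4 * 256^d ≤ 432^d
  have hc : N^4 * 256^d ≤ 432^d := by
    have hlog : 11 * Real.log N ≤ d := Nat.ceil_le.mp hd
    have hNpos : (0:ℝ) < N := by positivity
    have h1 : (N:ℝ)^4 = Real.exp (4 * Real.log N) := by
      rw [show (4:ℝ) * Real.log N = ((4:ℕ):ℝ) * Real.log N by norm_num, Real.exp_nat_mul,
        Real.exp_log hNpos]
    have h2 : Real.exp (4 * Real.log N) ≤ Real.exp ((d:ℝ) * (4/11)) := by
      apply Real.exp_le_exp.mpr; linarith
    have h3 : Real.exp ((d:ℝ) * (4/11)) = Real.exp (4/11) ^ d := Real.exp_nat_mul _ d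
    have h4 : Real.exp (4/11) ≤ 27/16 := by
      have h5 : Real.exp (4/11) ≤ Real.exp (1/2) := Real.exp_le_exp.mpr (by norm_num)
      have h6 : Real.exp (1/2) < 27/16 := by
        apply lt_of_pow_lt_pow_left₀ 2 (by norm_num)
        have : Real.exp (1/2) ^ 2 = Real.exp 1 := by
          rw [← Real.exp_nat_mul]; norm_num
        rw [this]
        have := Real.exp_one_lt_d9
        norm_num at this ⊢
        linarith
      linarith
    have key : (N:ℝ)^4 * 256^d ≤ 432^d := by
      calc (N:ℝ)^4 * 256^d ≤ Real.exp (4/11)^d * 256^d := by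
            rw [h1]
            apply mul_le_mul_of_nonneg_right _ (by positivity)
            rw [← h3]; exact h2
        _ = (Real.exp (4/11) * 256)^d := by rw [mul_pow]
        _ ≤ (432:ℝ)^d := by
            apply pow_le_pow_left₀ (by positivity)
            linarith
    exact_mod_cast (by push_cast; exact key : ((N^4 * 256^d : ℕ) : ℝ) ≤ ((432^d : ℕ) : ℝ))
  -- (d) combine
  have hb : S^4 * 3^(3*d+1) ≤ 256^d := by
    calc S^4 * 3^(3*d+1) ≤ S^4 * 3^(4*(d-m)) :=
          Nat.mul_le_mul_left _ (Nat.pow_le_pow_right (by norm_num) h4dm)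
      _ = (S * 3^(d-m))^4 := by rw [mul_pow, ← pow_mul]; ring_nf
      _ ≤ (4^d)^4 := Nat.pow_le_pow_left ha 4
      _ = 256^d := by rw [← pow_mul, show d*4 = 4*d by ring, pow_mul]; norm_num
  have hfinal : (N*S)^4 * 3 * 3^(3*d) ≤ 16^d * 3^(3*d) := by
    calc (N*S)^4 * 3 * 3^(3*d) = N^4 * (S^4 * 3^(3*d+1)) := by ring
      _ ≤ N^4 * 256^d := Nat.mul_le_mul_left _ hb
      _ ≤ 432^d := hc
      _ = 16^d * 3^(3*d) := by
          rw [pow_mul, ← mul_pow]; norm_num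
  have h16 : (N*S)^4 ≤ 16^d := by
    have := Nat.le_of_mul_le_mul_right hfinal (by positivity)
    omega
  have : (N*S)^4 ≤ (2^d)^4 := by
    rw [← pow_mul, show d*4 = 4*d by ring, pow_mul]
    calc (N*S)^4 ≤ 16^d := h16
      _ = (2^4)^d := by norm_num
  exact (Nat.pow_le_pow_iff_left (by norm_num)).mp this

open Finset in
lemma gv_code (N d : ℕ) (hd0 : 0 < d)
    (hcount : N * ∑ k ∈ (range (d+1)).filter (fun k => 4*k < d), d.choose k ≤ 2^d) :
    ∃ T : Finset (Fin d → Bool), N ≤ T.card ∧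
      ∀ a ∈ T, ∀ b ∈ T, a ≠ b → d ≤ 4 * hammingDist a b := by
  classical
  set S := ∑ k ∈ (range (d+1)).filter (fun k => 4*k < d), d.choose k with hSdef
  set P := (univ : Finset (Fin d → Bool)).powerset.filter
    (fun T => ∀ a ∈ T, ∀ b ∈ T, a ≠ b → d ≤ 4 * hammingDist a b) with hPdef
  have hPne : P.Nonempty := ⟨∅, by simp [hPdef]⟩
  obtain ⟨T, hTP, hTmax⟩ := P.exists_max_image Finset.card hPne
  have hTgood : ∀ a ∈ T, ∀ b ∈ T, a ≠ b → d ≤ 4 * hammingDist a b :=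
    (mem_filter.mp hTP).2
  refine ⟨T, ?_, hTgood⟩
  -- covering property from maximality
  have hcov : ∀ v : Fin d → Bool, ∃ a ∈ T, 4 * hammingDist a v < d := by
    intro v
    by_contra h
    push_neg at h
    have hvT : v ∉ T := by
      intro hv
      have := h v hv
      simp [hammingDist_self] at this
      omega
    have hins : insert v T ∈ P := by
      rw [hPdef, mem_filter]
      refine ⟨mem_powerset.mpr (subset_univ _), ?_⟩
      intro a ha b hb hab
      rcases mem_insert.mp ha with rfl | ha' <;> rcases mem_insert.mp hb with rfl | hb'
      · exact absurd rfl hab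
      · have := h b hb'
        rwa [hammingDist_comm] at this
      · exact h a ha'
      · exact hTgood a ha' b hb' hab
    have := hTmax _ hins
    rw [card_insert_of_notMem hvT] at this
    omega
  -- each ball has at most S elements
  have hball : ∀ a : Fin d → Bool,
      (univ.filter (fun v => 4 * hammingDist a v < d)).card ≤ S := by
    intro a
    have hstep : (univ.filter (fun v => 4 * hammingDist a v < d)).card ≤
        (((range (d+1)).filter (fun k => 4*k < d)).biUnion
          (fun k => powersetCard k (univ : Finset (Fin d)))).card := by
      apply Finset.card_le_card_of_injOn
        (fun v => univ.filter (fun i => v i ≠ a i))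
      · intro v hv
        simp only [Finset.mem_coe, mem_filter, mem_univ, true_and] at hv ⊢
        have hcard : (univ.filter (fun i => v i ≠ a i)).card = hammingDist a v := by
          rw [hammingDist]
          congr 1
          apply filter_congr
          intro i _
          simp [ne_comm]
        rw [mem_biUnion]
        refine ⟨hammingDist a v, ?_, ?_⟩
        · simp only [mem_filter, mem_range]
          constructor
          · have : hammingDist a v ≤ d := by
              have := (hammingDist_le_card_fintype (x := a) (y := v))
              simpa using this
            omega
          · exact hv
        · rw [mem_powersetCard]
          exact ⟨subset_univ _, hcard⟩
      · intro v _ w _ hvw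
        have hvw' : univ.filter (fun i => v i ≠ a i) = univ.filter (fun i => w i ≠ a i) := hvw
        funext i
        have hiff : (v i ≠ a i) ↔ (w i ≠ a i) := by
          constructor
          · intro hvi
            have : i ∈ univ.filter (fun i => v i ≠ a i) := by simp [hvi]
            rw [hvw'] at this
            simpa using this
          · intro hwi
            have : i ∈ univ.filter (fun i => w i ≠ a i) := by simp [hwi]
            rw [← hvw'] at this
            simpa using this
        revert hiff
        cases h1 : v i <;> cases h2 : w i <;> cases h3 : a i <;> simp
    refine hstep.trans ?_
    refine (Finset.card_biUnion_le).trans ?_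
    rw [hSdef]
    apply le_of_eq
    apply Finset.sum_congr rfl
    intro k _
    rw [Finset.card_powersetCard, card_univ, Fintype.card_fin]
  -- counting
  have h2d : 2^d ≤ T.card * S := by
    have hsub : (univ : Finset (Fin d → Bool)) ⊆
        T.biUnion (fun a => univ.filter (fun v => 4 * hammingDist a v < d)) := by
      intro v _
      rw [mem_biUnion]
      obtain ⟨a, ha, h⟩ := hcov v
      exact ⟨a, ha, mem_filter.mpr ⟨mem_univ _, h⟩⟩
    calc 2^d = (univ : Finset (Fin d → Bool)).card := by
          rw [card_univ]
          simp [Fintype.card_fun]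
      _ ≤ (T.biUnion (fun a => univ.filter (fun v => 4 * hammingDist a v < d))).card :=
          card_le_card hsub
      _ ≤ ∑ a ∈ T, (univ.filter (fun v => 4 * hammingDist a v < d)).card :=
          card_biUnion_le
      _ ≤ ∑ _a ∈ T, S := Finset.sum_le_sum (fun a _ => hball a)
      _ = T.card * S := by rw [Finset.sum_const, smul_eq_mul]
  have hS1 : 0 < S := by
    rw [hSdef]
    have h0 : 0 ∈ (range (d+1)).filter (fun k => 4*k < d) := by
      simp [hd0]
    have := Finset.single_le_sum (f := fun k => d.choose k) (fun i _ => Nat.zero_le _) h0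
    exact lt_of_lt_of_le Nat.zero_lt_one (by simpa [Nat.choose_zero_right] using this)
  exact Nat.le_of_mul_le_mul_right (hcount.trans h2d) hS1

/-- For integers `N ≥ 2` and `d ≥ ⌈11·ln N⌉`, there exist vectors
`x₁,...,x_N ∈ {-1,+1}^d` with pairwise ℓ¹ distance at least `d/2`. -/
theorem exists_separated_sign_vectors
    (N d : ℕ) (hN : 2 ≤ N) (hd : ⌈11 * Real.log N⌉₊ ≤ d) :
    ∃ x : Fin N → Fin d → ℝ,
      (∀ i k, x i k = 1 ∨ x i k = -1) ∧
      ∀ i j, i ≠ j → (d : ℝ) / 2 ≤ ∑ k, |x i k - x j k| := by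
  classical
  have hd0 : 0 < d := by
    have hlog : (0:ℝ) < 11 * Real.log N := by
      have : (0:ℝ) < Real.log N := Real.log_pos (by exact_mod_cast hN)
      linarith
    have := Nat.ceil_pos.mpr hlog
    omega
  obtain ⟨T, hTcard, hTgood⟩ := gv_code N d hd0 (gv_numeric N d hN hd)
  obtain ⟨T', hT'sub, hT'card⟩ := Finset.exists_subset_card_eq hTcard
  let e := T'.equivFin
  let y : Fin N → (Fin d → Bool) := fun i => (e.symm (Fin.cast hT'card.symm i) : _)
  have hymem : ∀ i, y i ∈ T := fun i => hT'sub (e.symm (Fin.cast hT'card.symm i)).2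
  have hyinj : Function.Injective y := by
    intro i j hij
    have : e.symm (Fin.cast hT'card.symm i) = e.symm (Fin.cast hT'card.symm j) :=
      Subtype.ext hij
    have := e.symm.injective this
    simpa [Fin.ext_iff] using congrArg Fin.val this
  refine ⟨fun i k => if y i k then 1 else -1, ?_, ?_⟩
  · intro i k
    by_cases h : y i k <;> simp [h]
  · intro i j hij
    have hyne : y i ≠ y j := fun h => hij (hyinj h)
    have hdist : d ≤ 4 * hammingDist (y i) (y j) :=
      hTgood _ (hymem i) _ (hymem j) hyne
    have hsum : ∑ k, |(if y i k then (1:ℝ) else -1) - (if y j k then (1:ℝ) else -1)|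
        = 2 * (hammingDist (y i) (y j) : ℝ) := by
      have : ∀ k, |(if y i k then (1:ℝ) else -1) - (if y j k then (1:ℝ) else -1)|
          = 2 * (if y i k ≠ y j k then (1:ℝ) else 0) := by
        intro k
        cases h1 : y i k <;> cases h2 : y j k <;> norm_num
      rw [Finset.sum_congr rfl (fun k _ => this k), ← Finset.mul_sum,
        Finset.sum_boole, hammingDist]
    rw [hsum]
    have : (d:ℝ) ≤ 4 * (hammingDist (y i) (y j) : ℝ) := by exact_mod_cast hdist
    linarith
end

section
/- Let T: S×A → Δ(S) be a transition kernel on finite state space S and action space A, viewed as a matrix in ℝ^{S×(S×A)} with rank d. Then there exists a probability distribution ν ∈ Δ(S) such that T(s'|s,a) ≤ d·ν(s') for all (s,a,s') ∈ S×A×S. -/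
/-- If `T : S×A → Δ(S)` is a transition kernel on finite spaces, viewed
as a matrix in `ℝ^{S×(S×A)}` of rank `d`, then there exists a distribution `ν ∈ Δ(S)`
with `T(s'|s,a) ≤ d·ν(s')` for all `(s,a,s')`. -/
theorem exists_dominating_distribution_of_rank
    {S A : Type*} [Fintype S] [Nonempty S] [Fintype A]
    (T : S → A → S → ℝ)
    (hT0 : ∀ s a s', 0 ≤ T s a s') (hT1 : ∀ s a, ∑ s', T s a s' = 1)
    (d : ℕ)
    (hrank : (Matrix.of fun (s' : S) (sa : S × A) => T sa.1 sa.2 s' :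
        Matrix S (S × A) ℝ).rank = d) :
    ∃ ν : S → ℝ, (∀ s', 0 ≤ ν s') ∧ (∑ s', ν s' = 1) ∧
      ∀ s a s', T s a s' ≤ (d : ℝ) * ν s' := by
  classical
  set M : Matrix S (S × A) ℝ :=
    Matrix.of fun (s' : S) (sa : S × A) => T sa.1 sa.2 s' with hM
  set cols : S × A → (S → ℝ) := fun sa s' => T sa.1 sa.2 s' with hcols
  have hMT : M.transpose = cols := rfl
  set V : Submodule ℝ (S → ℝ) := Submodule.span ℝ (Set.range cols) with hV
  have hVd : Module.finrank ℝ V = d := by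
    have := M.rank_eq_finrank_span_cols
    rw [hrank] at this
    exact this.symm
  have memV : ∀ j : S × A, cols j ∈ V := fun j =>
    Submodule.subset_span (Set.mem_range_self j)
  rcases Nat.eq_zero_or_pos d with hd0 | hd
  · -- degenerate case: all columns are zero
    subst hd0
    have hVbot : V = ⊥ := Submodule.finrank_eq_zero.mp hVd
    have hzero : ∀ s a s', T s a s' = 0 := by
      intro s a s'
      have := memV (s, a)
      rw [hVbot, Submodule.mem_bot] at this
      exact congrFun this s'
    refine ⟨fun _ => (Fintype.card S : ℝ)⁻¹, fun _ => by positivity, ?_, ?_⟩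
    · rw [Finset.sum_const, Finset.card_univ, nsmul_eq_mul]
      field_simp
    · intro s a s'
      simp [hzero s a s']
  -- main case
  have : FiniteDimensional ℝ V := inferInstance
  let b : Module.Basis (Fin d) ℝ V := Module.finBasisOfFinrankEq ℝ V hVd
  let φ : V ≃ₗ[ℝ] (Fin d → ℝ) := b.equivFun
  let w : S × A → (Fin d → ℝ) := fun j => φ ⟨cols j, memV j⟩
  -- obtain `d` linearly independent columns
  obtain ⟨bs, hbs_sub, hbs_span, hbs_li⟩ := exists_linearIndependent ℝ (Set.range cols)
  have hbs_fin : bs.Finite := (Set.finite_range cols).subset hbs_sub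
  haveI : Fintype bs := hbs_fin.fintype
  have hcard : bs.toFinset.card = d := by
    have := finrank_span_set_eq_card hbs_li
    rw [hbs_span] at this
    rw [← this, ← hVd]
  have hcard' : Fintype.card bs = d := by rwa [Set.toFinset_card] at hcard
  let e : Fin d ≃ bs := (Fintype.equivFinOfCardEq hcard').symm
  let u : Fin d → (S → ℝ) := fun i => (e i : S → ℝ)
  have hu_li : LinearIndependent ℝ u := hbs_li.comp e e.injective
  have hu_mem : ∀ i, u i ∈ Set.range cols := fun i => hbs_sub (e i).2
  choose c hc using hu_mem
  -- the images under φ of these columns are linearly independent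
  have hwc_li : LinearIndependent ℝ fun i => w (c i) := by
    have h1 : LinearIndependent ℝ fun i => (⟨cols (c i), memV (c i)⟩ : V) := by
      apply LinearIndependent.of_comp V.subtype
      have : (V.subtype ∘ fun i => (⟨cols (c i), memV (c i)⟩ : V)) = u := by
        funext i; simp [hc i]
      rwa [this]
    have h2 := h1.map' φ.toLinearMap φ.ker
    exact h2
  -- determinant of the coordinate matrix is nonzero
  haveI : Nonempty (Fin d) := ⟨⟨0, hd⟩⟩
  have hdet_ne : (Matrix.of fun i k => w (c k) i : Matrix (Fin d) (Fin d) ℝ).det ≠ 0 := by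
    have hcardeq : Fintype.card (Fin d) = Module.finrank ℝ (Fin d → ℝ) := by simp
    let B := basisOfLinearIndependentOfCardEqFinrank hwc_li hcardeq
    have hB : ⇑B = fun i => w (c i) := coe_basisOfLinearIndependentOfCardEqFinrank _ _
    have hunit : IsUnit ((Pi.basisFun ℝ (Fin d)).det fun i => w (c i)) := by
      rw [← Module.Basis.is_basis_iff_det]
      constructor
      · exact hwc_li
      · rw [← hB]; exact B.span_eq
    have hform : ((Pi.basisFun ℝ (Fin d)).det fun i => w (c i)) =
        (Matrix.of fun i k => w (c k) i : Matrix (Fin d) (Fin d) ℝ).det := by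
      rw [Module.Basis.det_apply]
      congr 1
    rw [hform] at hunit
    exact hunit.ne_zero
  -- maximize |det| over all choices of d columns
  haveI : Nonempty (S × A) := ⟨c ⟨0, hd⟩⟩
  let F : (Fin d → S × A) → ℝ := fun c' =>
    |(Matrix.of fun i k => w (c' k) i : Matrix (Fin d) (Fin d) ℝ).det|
  obtain ⟨cm, hcm⟩ := Finite.exists_max F
  have hFpos : 0 < F cm := lt_of_lt_of_le (abs_pos.mpr hdet_ne) (hcm c)
  set Wm : Matrix (Fin d) (Fin d) ℝ := Matrix.of fun i k => w (cm k) i with hWm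
  have hdetm : Wm.det ≠ 0 := fun h => by simp [F, hWm, h] at hFpos; exact hFpos h
  -- the dominating distribution
  refine ⟨fun s' => (d : ℝ)⁻¹ * ∑ k, T (cm k).1 (cm k).2 s', ?_, ?_, ?_⟩
  · intro s'
    have : (0:ℝ) ≤ ∑ k, T (cm k).1 (cm k).2 s' :=
      Finset.sum_nonneg fun k _ => hT0 _ _ _
    positivity
  · rw [← Finset.mul_sum, Finset.sum_comm]
    have : ∀ k ∈ (Finset.univ : Finset (Fin d)), ∑ s', T (cm k).1 (cm k).2 s' = 1 :=
      fun k _ => hT1 _ _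
    rw [Finset.sum_congr rfl this]
    simp
    field_simp
  · intro s a s'
    -- Cramer's rule coefficients
    set j : S × A := (s, a) with hj
    set lam : Fin d → ℝ := fun i => (Wm.updateCol i (w j)).det / Wm.det with hlam
    have hlam_bound : ∀ i, |lam i| ≤ 1 := by
      intro i
      have hupdate : Wm.updateCol i (w j) =
          Matrix.of fun i' k => w (Function.update cm i j k) i' := by
        ext i' k
        by_cases hk : k = i
        · subst hk; simp [Matrix.updateCol_self]
        · simp [Matrix.updateCol_ne hk, Function.update_of_ne hk, hWm]
      have hle : |(Wm.updateCol i (w j)).det| ≤ |Wm.det| := by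
        rw [hupdate]
        exact hcm (Function.update cm i j)
      rw [hlam, abs_div]
      rw [div_le_one (abs_pos.mpr hdetm)]
      exact hle
    -- Cramer: Wm.mulVec lam = w j
    have hcramer : Wm.mulVec lam = w j := by
      have := Matrix.mulVec_cramer Wm (w j)
      have hlam_eq : lam = (Wm.det)⁻¹ • Matrix.cramer Wm (w j) := by
        funext i
        simp [hlam, Matrix.cramer_apply, div_eq_inv_mul]
      rw [hlam_eq, Matrix.mulVec_smul, this, smul_smul, inv_mul_cancel₀ hdetm, one_smul]
    -- reconstruct the column as a combination
    have hwsum : w j = ∑ k, lam k • w (cm k) := by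
      rw [← hcramer]
      funext i
      simp only [Matrix.mulVec, dotProduct, Finset.sum_apply, Pi.smul_apply,
        smul_eq_mul]
      apply Finset.sum_congr rfl
      intro k _
      simp [hWm, mul_comm]
    have hcolsum : cols j = ∑ k, lam k • cols (cm k) := by
      have hVsum : (⟨cols j, memV j⟩ : V) = ∑ k, lam k • ⟨cols (cm k), memV (cm k)⟩ := by
        apply φ.injective
        rw [map_sum]
        simp only [map_smul]
        exact hwsum
      have := congrArg (Subtype.val) hVsum
      simpa using this
    have hpoint : T s a s' = ∑ k, lam k * T (cm k).1 (cm k).2 s' := by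
      have := congrFun hcolsum s'
      simpa [cols, Finset.sum_apply] using this
    rw [hpoint]
    have hbound : ∑ k, lam k * T (cm k).1 (cm k).2 s' ≤ ∑ k, T (cm k).1 (cm k).2 s' := by
      apply Finset.sum_le_sum
      intro k _
      have h1 : lam k * T (cm k).1 (cm k).2 s' ≤ |lam k| * T (cm k).1 (cm k).2 s' :=
        mul_le_mul_of_nonneg_right (le_abs_self _) (hT0 _ _ _)
      have h2 : |lam k| * T (cm k).1 (cm k).2 s' ≤ 1 * T (cm k).1 (cm k).2 s' :=
        mul_le_mul_of_nonneg_right (hlam_bound k) (hT0 _ _ _)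
      linarith
    calc ∑ k, lam k * T (cm k).1 (cm k).2 s' ≤ ∑ k, T (cm k).1 (cm k).2 s' := hbound
      _ = (d : ℝ) * ((d : ℝ)⁻¹ * ∑ k, T (cm k).1 (cm k).2 s') := by
          rw [← mul_assoc, mul_inv_cancel₀ (by positivity : (d:ℝ) ≠ 0), one_mul]
end

section
/- Coverage-based eluder bound: let p₁,...,p_K be probability distributions on a finite set X, and suppose there exists μ ∈ Δ(X) with p_k(x)/μ(x) ≤ C for all x ∈ X (where p_k(x) > 0) and all k ∈ [K]. Then for any functions f₁,...,f_K: X → [0,1] and any constant M ≥ 1, ∑_{k=1}^K E_{x∼p_k}[f_k(x)] ≤ √( 2C·log(1 + CK/M)·( 2KM + ∑_{k=1}^K ∑_{t<k} E_{x∼p_t}[f_k(x)²] ) ). -/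
open Finset

/-- Coverage-based eluder bound: if distributions `p₁,...,p_K` on a
finite set `X` are covered by `μ` with constant `C` (i.e. `p_k ≤ C·μ` pointwise),
then for functions `f_k : X → [0,1]` and `M ≥ 1`,
`∑_k E_{p_k}[f_k] ≤ √(2C·log(1+CK/M)·(2KM + ∑_k ∑_{t<k} E_{p_t}[f_k²]))`. -/
theorem coverage_eluder_bound
    {X : Type*} [Fintype X] {K : ℕ} (p : Fin K → X → ℝ) (μ : X → ℝ)
    (hp0 : ∀ k x, 0 ≤ p k x) (hp1 : ∀ k, ∑ x, p k x = 1)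
    (hμ0 : ∀ x, 0 ≤ μ x) (hμ1 : ∑ x, μ x = 1)
    (C : ℝ) (hC : 1 ≤ C) (hcov : ∀ k x, p k x ≤ C * μ x)
    (f : Fin K → X → ℝ) (hf : ∀ k x, 0 ≤ f k x ∧ f k x ≤ 1)
    (M : ℝ) (hM : 1 ≤ M) :
    ∑ k, ∑ x, p k x * f k x ≤
      Real.sqrt (2 * C * Real.log (1 + C * K / M) *
        (2 * K * M + ∑ k, ∑ t ∈ Finset.univ.filter (· < k), ∑ x, p t x * f k x ^ 2)) := by
  classical
  have hM0 : (0:ℝ) < M := lt_of_lt_of_le one_pos hM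
  have hC0 : (0:ℝ) < C := lt_of_lt_of_le one_pos hC
  set L := Real.log (1 + C * K / M) with hLdef
  have hL0 : 0 ≤ L := Real.log_nonneg (by
    have : 0 ≤ C * K / M := by positivity
    linarith)
  set w : Fin K → X → ℝ :=
    fun k x => (∑ t ∈ Finset.univ.filter (· < k), p t x) + p k x + M * μ x with hwdef
  have hsum0 : ∀ (k : Fin K) x, 0 ≤ ∑ t ∈ Finset.univ.filter (· < k), p t x :=
    fun k x => Finset.sum_nonneg fun t _ => hp0 t x
  have hw0 : ∀ k x, 0 ≤ w k x := by
    intro k x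
    have := hsum0 k x
    have := hp0 k x
    have := hμ0 x
    simp only [hwdef]
    nlinarith
  have hwpos : ∀ k x, 0 < μ x → 0 < w k x := by
    intro k x hx
    have := hsum0 k x
    have := hp0 k x
    simp only [hwdef]
    nlinarith
  have hzero : ∀ (k : Fin K) x, μ x = 0 → p k x = 0 := by
    intro k x hx
    have h1 := hcov k x
    have h2 := hp0 k x
    rw [hx] at h1
    nlinarith
  -- key per-x logarithmic potential bound
  have key : ∀ x, 0 < μ x → ∑ k, p k x / w k x ≤ L := by
    intro x hx
    set g : ℕ → ℝ := fun n =>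
      Real.log (M * μ x + ∑ t ∈ Finset.univ.filter (fun t : Fin K => (t:ℕ) < n), p t x)
      with hg
    have hstep : ∀ k : Fin K, p k x / w k x ≤ g ((k:ℕ) + 1) - g (k:ℕ) := by
      intro k
      have hfilt : (Finset.univ.filter (fun t : Fin K => (t:ℕ) < (k:ℕ)))
          = Finset.univ.filter (· < k) := by
        ext t
        simp only [Finset.mem_filter, Finset.mem_univ, true_and, Fin.lt_def]
      have hknot : k ∉ Finset.univ.filter (fun t : Fin K => t < k) := by simp
      have hfilt2 : (Finset.univ.filter (fun t : Fin K => (t:ℕ) < (k:ℕ)+1))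
          = insert k (Finset.univ.filter (· < k)) := by
        ext t
        simp only [Finset.mem_filter, Finset.mem_univ, true_and, Finset.mem_insert,
          Fin.lt_def, Fin.ext_iff]
        omega
      set a : ℝ := M * μ x + ∑ t ∈ Finset.univ.filter (· < k), p t x with ha
      have ha0 : 0 < a := by
        have := hsum0 k x
        nlinarith
      have hb0 : 0 < a + p k x := by
        have := hp0 k x; linarith
      have hgk : g (k:ℕ) = Real.log a := by
        simp only [hg, hfilt, ha]
      have hgk1 : g ((k:ℕ)+1) = Real.log (a + p k x) := by
        simp only [hg, hfilt2, Finset.sum_insert hknot, ha]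
        ring_nf
      have hwa : w k x = a + p k x := by
        simp only [hwdef, ha]; ring
      rw [hgk, hgk1, hwa]
      have hlog := Real.log_le_sub_one_of_pos (show 0 < a / (a + p k x) by positivity)
      rw [Real.log_div (ne_of_gt ha0) (ne_of_gt hb0)] at hlog
      have hdiv : a / (a + p k x) + p k x / (a + p k x) = 1 := by
        rw [← add_div]
        exact div_self (ne_of_gt hb0)
      linarith
    have htele : ∑ k : Fin K, (g ((k:ℕ)+1) - g (k:ℕ)) = g K - g 0 := by
      rw [Fin.sum_univ_eq_sum_range (fun n => g (n+1) - g n)]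
      exact Finset.sum_range_sub g K
    have hsum_le : ∑ k, p k x / w k x ≤ g K - g 0 := by
      rw [← htele]
      exact Finset.sum_le_sum fun k _ => hstep k
    have hg0 : g 0 = Real.log (M * μ x) := by
      simp [hg]
    have hgK : g K = Real.log (M * μ x + ∑ t, p t x) := by
      have : (Finset.univ.filter (fun t : Fin K => (t:ℕ) < K)) = Finset.univ := by
        apply Finset.filter_true_of_mem; intro t _; exact t.isLt
      simp [hg, this]
    have hSig : ∑ t, p t x ≤ C * K * μ x := by
      calc ∑ t, p t x ≤ ∑ _t : Fin K, C * μ x := Finset.sum_le_sum fun t _ => hcov t x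
        _ = C * K * μ x := by
          rw [Finset.sum_const, Finset.card_univ, Fintype.card_fin, nsmul_eq_mul]
          ring
    have hfinal : g K - g 0 ≤ L := by
      rw [hg0, hgK, hLdef]
      have hMμ0 : 0 < M * μ x := by positivity
      have hle : M * μ x + ∑ t, p t x ≤ M * μ x * (1 + C * K / M) := by
        have : M * μ x * (1 + C * K / M) = M * μ x + C * K * μ x := by
          field_simp
        rw [this]; linarith
      have hS0 : 0 ≤ ∑ t, p t x := Finset.sum_nonneg fun t _ => hp0 t x
      have h1 : Real.log (M * μ x + ∑ t, p t x) ≤ Real.log (M * μ x * (1 + C * K / M)) := by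
        apply Real.log_le_log (by linarith) hle
      rw [Real.log_mul (ne_of_gt hMμ0) (by positivity)] at h1
      linarith
    linarith
  -- Cauchy-Schwarz setup
  set S : Finset (Fin K × X) := Finset.univ ×ˢ Finset.univ with hS
  set φ : Fin K × X → ℝ := fun q => p q.1 q.2 / Real.sqrt (w q.1 q.2) with hφ
  set ψ : Fin K × X → ℝ := fun q => Real.sqrt (w q.1 q.2) * f q.1 q.2 with hψ
  have hprod : ∀ q : Fin K × X, φ q * ψ q = p q.1 q.2 * f q.1 q.2 := by
    rintro ⟨k, x⟩
    simp only [hφ, hψ]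
    rcases eq_or_lt_of_le (hμ0 x) with h | h
    · rw [hzero k x h.symm]; ring
    · have hw : 0 < w k x := hwpos k x h
      have hs : Real.sqrt (w k x) ≠ 0 := ne_of_gt (Real.sqrt_pos.mpr hw)
      field_simp
  have hφsq : ∀ q : Fin K × X, φ q ^ 2 = p q.1 q.2 ^ 2 / w q.1 q.2 := by
    rintro ⟨k, x⟩
    simp only [hφ, div_pow, Real.sq_sqrt (hw0 k x)]
  have hψsq : ∀ q : Fin K × X, ψ q ^ 2 = w q.1 q.2 * f q.1 q.2 ^ 2 := by
    rintro ⟨k, x⟩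
    simp only [hψ, mul_pow, Real.sq_sqrt (hw0 k x)]
  have hCS := Finset.sum_mul_sq_le_sq_mul_sq S φ ψ
  have hLHSeq : ∑ k, ∑ x, p k x * f k x = ∑ q ∈ S, φ q * ψ q := by
    rw [hS, Finset.sum_product]
    exact Finset.sum_congr rfl fun k _ => Finset.sum_congr rfl fun x _ => (hprod (k, x)).symm
  -- bound A
  have hA : ∑ q ∈ S, φ q ^ 2 ≤ C * L := by
    have h1 : ∑ q ∈ S, φ q ^ 2 = ∑ x, ∑ k, p k x ^ 2 / w k x := by
      rw [hS, Finset.sum_product]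
      rw [Finset.sum_comm]
      exact Finset.sum_congr rfl fun x _ => Finset.sum_congr rfl fun k _ => hφsq (k, x)
    rw [h1]
    have h2 : ∀ x, ∑ k, p k x ^ 2 / w k x ≤ C * μ x * L := by
      intro x
      rcases eq_or_lt_of_le (hμ0 x) with h | h
      · have : ∀ k : Fin K, p k x ^ 2 / w k x = 0 := by
          intro k; rw [hzero k x h.symm]; simp
        rw [Finset.sum_congr rfl fun k _ => this k]
        simp [← h]
      · calc ∑ k, p k x ^ 2 / w k x ≤ ∑ k, C * μ x * (p k x / w k x) := by
              apply Finset.sum_le_sum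
              intro k _
              have hw : 0 < w k x := hwpos k x h
              have hdivnn : 0 ≤ p k x / w k x := div_nonneg (hp0 k x) (le_of_lt hw)
              have : p k x ^ 2 / w k x = p k x * (p k x / w k x) := by
                rw [sq, mul_div_assoc]
              rw [this]
              exact mul_le_mul_of_nonneg_right (hcov k x) hdivnn
          _ = C * μ x * ∑ k, p k x / w k x := by rw [Finset.mul_sum]
          _ ≤ C * μ x * L := by
              apply mul_le_mul_of_nonneg_left (key x h) (by positivity)
    calc ∑ x, ∑ k, p k x ^ 2 / w k x ≤ ∑ x, C * μ x * L :=
          Finset.sum_le_sum fun x _ => h2 x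
      _ = C * L := by
          rw [← Finset.sum_mul, ← Finset.mul_sum, hμ1]
          ring
  -- bound B
  set Ssum := ∑ k, ∑ t ∈ Finset.univ.filter (· < k), ∑ x, p t x * f k x ^ 2 with hSsum
  have hB : ∑ q ∈ S, ψ q ^ 2 ≤ 2 * K * M + Ssum := by
    have h1 : ∑ q ∈ S, ψ q ^ 2 = ∑ k, ∑ x, w k x * f k x ^ 2 := by
      rw [hS, Finset.sum_product]
      exact Finset.sum_congr rfl fun k _ => Finset.sum_congr rfl fun x _ => hψsq (k, x)
    rw [h1]
    have h2 : ∀ k : Fin K, ∑ x, w k x * f k x ^ 2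
        ≤ (∑ t ∈ Finset.univ.filter (· < k), ∑ x, p t x * f k x ^ 2) + 1 + M := by
      intro k
      have hpt : ∀ x, w k x * f k x ^ 2
          ≤ (∑ t ∈ Finset.univ.filter (· < k), p t x * f k x ^ 2) + p k x + M * μ x := by
        intro x
        have hfx := hf k x
        have hfsq0 : 0 ≤ f k x ^ 2 := sq_nonneg _
        have hfsq1 : f k x ^ 2 ≤ 1 := by nlinarith [hfx.1, hfx.2]
        have e1 : w k x * f k x ^ 2 =
            (∑ t ∈ Finset.univ.filter (· < k), p t x * f k x ^ 2)
            + p k x * f k x ^ 2 + M * μ x * f k x ^ 2 := by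
          simp only [hwdef, ← Finset.sum_mul]
          ring
        rw [e1]
        have h3 : p k x * f k x ^ 2 ≤ p k x := by nlinarith [hp0 k x, hfsq1]
        have h4 : M * μ x * f k x ^ 2 ≤ M * μ x := by nlinarith [mul_nonneg hM0.le (hμ0 x), hfsq1]
        linarith
      calc ∑ x, w k x * f k x ^ 2
          ≤ ∑ x, ((∑ t ∈ Finset.univ.filter (· < k), p t x * f k x ^ 2) + p k x + M * μ x) :=
            Finset.sum_le_sum fun x _ => hpt x
        _ = (∑ t ∈ Finset.univ.filter (· < k), ∑ x, p t x * f k x ^ 2) + 1 + M := by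
            rw [Finset.sum_add_distrib, Finset.sum_add_distrib, Finset.sum_comm, hp1 k,
              ← Finset.mul_sum, hμ1, mul_one]
    calc ∑ k, ∑ x, w k x * f k x ^ 2
        ≤ ∑ k : Fin K, ((∑ t ∈ Finset.univ.filter (· < k), ∑ x, p t x * f k x ^ 2) + 1 + M) :=
          Finset.sum_le_sum fun k _ => h2 k
      _ = Ssum + K * (1 + M) := by
          rw [Finset.sum_add_distrib, Finset.sum_add_distrib, Finset.sum_const,
            Finset.sum_const, Finset.card_univ, Fintype.card_fin]
          simp only [hSsum, nsmul_eq_mul]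
          ring
      _ ≤ 2 * K * M + Ssum := by
          have hK0 : (0:ℝ) ≤ (K:ℝ) := Nat.cast_nonneg K
          nlinarith
  -- assemble
  have hLHS0 : 0 ≤ ∑ k, ∑ x, p k x * f k x := by
    apply Finset.sum_nonneg; intro k _
    apply Finset.sum_nonneg; intro x _
    exact mul_nonneg (hp0 k x) (hf k x).1
  have hB0 : 0 ≤ ∑ q ∈ S, ψ q ^ 2 := Finset.sum_nonneg fun q _ => sq_nonneg _
  have hSsum0 : (0:ℝ) ≤ 2 * K * M + Ssum := le_trans hB0 hB
  have hsq : (∑ k, ∑ x, p k x * f k x) ^ 2 ≤ 2 * C * L * (2 * K * M + Ssum) := by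
    rw [hLHSeq]
    calc (∑ q ∈ S, φ q * ψ q) ^ 2 ≤ (∑ q ∈ S, φ q ^ 2) * ∑ q ∈ S, ψ q ^ 2 := hCS
      _ ≤ (C * L) * (2 * K * M + Ssum) := by
          apply mul_le_mul hA hB hB0 (by positivity)
      _ ≤ 2 * C * L * (2 * K * M + Ssum) := by nlinarith [mul_nonneg (mul_nonneg hC0.le hL0) hSsum0]
  calc ∑ k, ∑ x, p k x * f k x = Real.sqrt ((∑ k, ∑ x, p k x * f k x) ^ 2) :=
        (Real.sqrt_sq hLHS0).symm
    _ ≤ Real.sqrt (2 * C * L * (2 * K * M + Ssum)) := Real.sqrt_le_sqrt hsq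
end

section
/- Key step in the coverage eluder argument: let p₁,...,p_K be probability distributions on a finite set X covered by μ with constant C (i.e. p_k ≤ C·μ pointwise), and for M ≥ 1 define p̃_k(x) = M·μ(x) + ∑_{t≤k} p_t(x). Then for every x ∈ X, ∑_{k=1}^K p_k(x)/p̃_k(x) ≤ 2·log(1 + CK/M). -/
/-- `u/(1+u) ≤ log (1+u)` for `u ≥ 0`. -/
lemma aux_frac_le_log {u : ℝ} (hu : 0 ≤ u) : u / (1 + u) ≤ Real.log (1 + u) := by
  have h1 : (0:ℝ) < 1 + u := by linarith
  have h := Real.log_le_sub_one_of_pos (x := (1 + u)⁻¹) (by positivity)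
  rw [Real.log_inv] at h
  have h2 : 1 - (1+u)⁻¹ = u / (1+u) := by field_simp; ring
  linarith [h, h2]

/-- `a/(A+a) ≤ log (A+a) - log A` for `A > 0`, `a ≥ 0`. -/
lemma aux_step {A a : ℝ} (hA : 0 < A) (ha : 0 ≤ a) :
    a / (A + a) ≤ Real.log (A + a) - Real.log A := by
  have hu : 0 ≤ a / A := by positivity
  have key := aux_frac_le_log hu
  have h1 : 1 + a / A = (A + a) / A := by field_simp
  rw [h1] at key
  have h2 : a / A / ((A + a) / A) = a / (A + a) := by
    field_simp
  rw [h2, Real.log_div (by linarith) (ne_of_gt hA)] at key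
  exact key

/-- Key step in the coverage eluder argument: with
`p̃_k(x) = M·μ(x) + ∑_{t≤k} p_t(x)`, for every `x`,
`∑_k p_k(x)/p̃_k(x) ≤ 2·log(1 + CK/M)`. -/
theorem coverage_eluder_potential_bound
    {X : Type*} [Fintype X] {K : ℕ} (p : Fin K → X → ℝ) (μ : X → ℝ)
    (hp0 : ∀ k x, 0 ≤ p k x) (hp1 : ∀ k, ∑ x, p k x = 1)
    (hμ0 : ∀ x, 0 ≤ μ x) (hμ1 : ∑ x, μ x = 1)
    (C : ℝ) (hC : 1 ≤ C) (hcov : ∀ k x, p k x ≤ C * μ x)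
    (M : ℝ) (hM : 1 ≤ M) (x : X) :
    ∑ k : Fin K, p k x / (M * μ x + ∑ t ∈ Finset.univ.filter (· ≤ k), p t x) ≤
      2 * Real.log (1 + C * K / M) := by
  have hM0 : (0:ℝ) < M := by linarith
  have hCK : 0 ≤ C * K / M := by positivity
  have hlognn : 0 ≤ Real.log (1 + C * K / M) :=
    Real.log_nonneg (by linarith)
  rcases eq_or_lt_of_le (hμ0 x) with hμx | hμx
  · -- μ x = 0, so each p k x = 0
    have hzero : ∀ k : Fin K, p k x = 0 := fun k =>
      le_antisymm (by have := hcov k x; rw [← hμx] at this; linarith) (hp0 k x)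
    simp [hzero]
    positivity
  · -- μ x > 0
    set q : ℕ → ℝ := fun n => if h : n < K then p ⟨n, h⟩ x else 0 with hq
    have hq0 : ∀ n, 0 ≤ q n := by
      intro n; simp only [hq]
      split
      · exact hp0 _ x
      · exact le_refl 0
    have hqle : ∀ n, q n ≤ C * μ x := by
      intro n; simp only [hq]
      split
      · exact hcov _ x
      · positivity
    set T : ℕ → ℝ := fun n => M * μ x + ∑ t ∈ Finset.range n, q t with hT
    have hTpos : ∀ n, 0 < T n := by
      intro n
      have h1 : 0 ≤ ∑ t ∈ Finset.range n, q t := Finset.sum_nonneg fun t _ => hq0 t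
      have h2 : 0 < M * μ x := by positivity
      simp only [hT]; linarith
    -- rewrite each denominator as T (k+1)
    have hden : ∀ k : Fin K,
        (M * μ x + ∑ t ∈ Finset.univ.filter (· ≤ k), p t x) = T (k + 1) := by
      intro k
      simp only [hT]
      congr 1
      have h1 : ∑ t ∈ Finset.univ.filter (· ≤ k), p t x
          = ∑ t : Fin K, if (t : ℕ) ≤ (k : ℕ) then q (t : ℕ) else 0 := by
        rw [Finset.sum_filter]
        refine Finset.sum_congr rfl fun t _ => ?_
        simp only [hq, Fin.le_def, t.is_lt, dif_pos, Fin.eta]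
      rw [h1, Fin.sum_univ_eq_sum_range (fun n => if n ≤ (k : ℕ) then q n else 0),
        ← Finset.sum_filter]
      congr 1
      ext n
      simp only [Finset.mem_filter, Finset.mem_range]
      omega
    calc ∑ k : Fin K, p k x / (M * μ x + ∑ t ∈ Finset.univ.filter (· ≤ k), p t x)
        ≤ ∑ k : Fin K, (Real.log (T ((k : ℕ) + 1)) - Real.log (T (k : ℕ))) := by
          refine Finset.sum_le_sum fun k _ => ?_
          rw [hden k]
          have hstep : T ((k : ℕ) + 1) = T (k : ℕ) + q (k : ℕ) := by
            simp only [hT, Finset.sum_range_succ]; ring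
          have hpq : p k x = q (k : ℕ) := by
            simp only [hq, k.is_lt, dif_pos, Fin.eta]
          rw [hstep, hpq]
          exact aux_step (hTpos _) (hq0 _)
      _ = Real.log (T K) - Real.log (T 0) := by
          rw [Fin.sum_univ_eq_sum_range (fun n => Real.log (T (n + 1)) - Real.log (T n)),
            Finset.sum_range_sub (fun n => Real.log (T n))]
      _ ≤ Real.log (1 + C * K / M) := by
          have hT0 : T 0 = M * μ x := by simp [hT]
          have hTK : T K ≤ (1 + C * K / M) * (M * μ x) := by
            have hsum : ∑ t ∈ Finset.range K, q t ≤ K * (C * μ x) := by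
              calc ∑ t ∈ Finset.range K, q t ≤ ∑ t ∈ Finset.range K, C * μ x :=
                    Finset.sum_le_sum fun t _ => hqle t
                _ = K * (C * μ x) := by rw [Finset.sum_const, Finset.card_range]; ring
            have : (1 + C * K / M) * (M * μ x) = M * μ x + C * K * μ x := by
              field_simp
            simp only [hT]
            rw [this]
            nlinarith
          have h1 : Real.log (T K) ≤ Real.log ((1 + C * K / M) * (M * μ x)) :=
            Real.log_le_log (hTpos K) hTK
          rw [Real.log_mul (by positivity) (by positivity), ← hT0] at h1
          linarith
      _ ≤ 2 * Real.log (1 + C * K / M) := by linarith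
end

section
/- Orthogonal polynomial identity for tensorized perturbed uniform distributions: for x ∈ [-1,1]^d define Q_x ∈ Δ([2d]) by Q_x(2i-1) = (1+x[i])/(2d) and Q_x(2i) = (1-x[i])/(2d) for i ∈ [d]. Then for any x, y ∈ [-1,1]^d and integer n ≥ 1, ∑_{o ∈ [2d]^n} (Q_x^{⊗n}(o)·Q_y^{⊗n}(o)) / Q_0^{⊗n}(o) = (1 + ⟨x,y⟩/d)^n. -/
/-- The perturbed-uniform distribution `Q_x` on `[2d]`, encoded on `Fin d × Bool`:
`Q_x (i, true) = (1 + x i)/(2d)` and `Q_x (i, false) = (1 - x i)/(2d)`. -/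
noncomputable def Qdist (d : ℕ) (x : Fin d → ℝ) : Fin d × Bool → ℝ :=
  fun z => (1 + (if z.2 then x z.1 else -x z.1)) / (2 * d)

/-- Orthogonal polynomial identity for tensorized perturbed uniform
distributions: `∑_o Q_x^{⊗n}(o)·Q_y^{⊗n}(o)/Q_0^{⊗n}(o) = (1 + ⟨x,y⟩/d)^n`. -/
theorem tensor_perturbed_uniform_inner_product_identity
    (d n : ℕ) (hd : 1 ≤ d) (hn : 1 ≤ n) (x y : Fin d → ℝ)
    (hx : ∀ i, -1 ≤ x i ∧ x i ≤ 1) (hy : ∀ i, -1 ≤ y i ∧ y i ≤ 1) :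
    ∑ o : Fin n → Fin d × Bool,
        (∏ j, Qdist d x (o j)) * (∏ j, Qdist d y (o j)) /
          ∏ j, Qdist d (fun _ => 0) (o j) =
      (1 + (∑ i, x i * y i) / d) ^ n := by
  have hd0 : (d : ℝ) ≠ 0 := by positivity
  have key : ∑ z : Fin d × Bool, Qdist d x z * Qdist d y z / Qdist d (fun _ => 0) z
      = 1 + (∑ i, x i * y i) / d := by
    rw [Fintype.sum_prod_type]
    have : ∀ i : Fin d, ∑ b : Bool,
        Qdist d x (i, b) * Qdist d y (i, b) / Qdist d (fun _ => 0) (i, b)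
        = 1/d + x i * y i / d := by
      intro i
      simp only [Fintype.sum_bool, Qdist, if_true, Bool.false_eq_true, if_false]
      field_simp
      ring
    rw [Finset.sum_congr rfl fun i _ => this i]
    rw [Finset.sum_add_distrib, Finset.sum_const, Finset.card_univ, Fintype.card_fin]
    rw [← Finset.sum_div]
    rw [nsmul_eq_mul]
    field_simp
  calc ∑ o : Fin n → Fin d × Bool,
        (∏ j, Qdist d x (o j)) * (∏ j, Qdist d y (o j)) /
          ∏ j, Qdist d (fun _ => 0) (o j)
      = ∑ o : Fin n → Fin d × Bool,
        ∏ j, Qdist d x (o j) * Qdist d y (o j) / Qdist d (fun _ => 0) (o j) := by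
        refine Finset.sum_congr rfl fun o _ => ?_
        rw [← Finset.prod_mul_distrib, ← Finset.prod_div_distrib]
    _ = (∑ z : Fin d × Bool, Qdist d x z * Qdist d y z / Qdist d (fun _ => 0) z) ^ n := by
        rw [Fintype.sum_pow]
    _ = (1 + (∑ i, x i * y i) / d) ^ n := by rw [key]
end

section
/- Moment-matching TV bound for mixtures of product distributions: for x ∈ [-1,1]^d define Q_x ∈ Δ([2d]) by Q_x(2i-1) = (1+x[i])/(2d), Q_x(2i) = (1-x[i])/(2d). Then for any probability distributions μ, ν on [-1,1]^d and integer n ≥ 1, D_TV( E_{x∼μ}[Q_x^{⊗n}], E_{y∼ν}[Q_y^{⊗n}] )² ≤ (1/4)·∑_{ℓ=0}^n C(n,ℓ)·d^{-ℓ}·‖Δ_ℓ‖₂², where Δ_ℓ = E_{x∼μ}[x^{⊗ℓ}] − E_{y∼ν}[y^{⊗ℓ}] ∈ ℝ^{d^ℓ}. -/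
namespace TVAux

noncomputable def sg {d : ℕ} (z : Fin d × Bool) : ℝ := if z.2 then 1 else -1

lemma qdist_eq (d : ℕ) (x : Fin d → ℝ) (z : Fin d × Bool) :
    Qdist d x z = (sg z * x z.1 + 1) * ((2 * (d:ℝ))⁻¹) := by
  unfold Qdist sg; rcases z with ⟨i, b⟩; cases b <;> simp <;> ring

lemma prod_qdist (d n : ℕ) (x : Fin d → ℝ) (o : Fin n → Fin d × Bool) :
    ∏ j, Qdist d x (o j)
      = ((2*(d:ℝ))⁻¹)^n * ∑ S : Finset (Fin n), ∏ j ∈ S, sg (o j) * x (o j).1 := by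
  simp_rw [qdist_eq]
  rw [Finset.prod_mul_distrib, Finset.prod_const, Fintype.prod_add]
  simp [mul_comm]

lemma sum_sg_x (d : ℕ) (x : Fin d → ℝ) : ∑ z : Fin d × Bool, sg z * x z.1 = 0 := by
  rw [Fintype.sum_prod_type]
  simp [sg]

lemma sum_both (d : ℕ) (x y : Fin d → ℝ) :
    ∑ z : Fin d × Bool, (sg z * x z.1) * (sg z * y z.1) = 2 * ∑ i, x i * y i := by
  rw [Fintype.sum_prod_type]
  simp only [sg]
  simp [Finset.mul_sum]
  ring_nf

end TVAux
namespace TVAux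

lemma orth (d n : ℕ) (x y : Fin d → ℝ) (S T : Finset (Fin n)) :
    ∑ o : Fin n → Fin d × Bool,
      (∏ j ∈ S, sg (o j) * x (o j).1) * ∏ j ∈ T, sg (o j) * y (o j).1 =
    if S = T then (2*(d:ℝ))^(n - S.card) * (2 * ∑ i, x i * y i)^S.card else 0 := by
  classical
  have hform : ∀ o : Fin n → Fin d × Bool,
      (∏ j ∈ S, sg (o j) * x (o j).1) * ∏ j ∈ T, sg (o j) * y (o j).1
      = ∏ j, ((if j ∈ S then sg (o j) * x (o j).1 else 1) *
              (if j ∈ T then sg (o j) * y (o j).1 else 1)) := by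
    intro o
    symm
    rw [Finset.prod_mul_distrib, Finset.prod_ite_mem, Finset.prod_ite_mem,
        Finset.univ_inter, Finset.univ_inter]
  simp_rw [hform]
  rw [← Fintype.prod_sum (fun j z => (if j ∈ S then sg z * x z.1 else 1) *
              (if j ∈ T then sg z * y z.1 else 1))]
  have hcoord : ∀ j : Fin n, (∑ z : Fin d × Bool,
      ((if j ∈ S then sg z * x z.1 else 1) * (if j ∈ T then sg z * y z.1 else 1)))
      = if j ∈ S then (if j ∈ T then 2 * ∑ i, x i * y i else 0)
        else (if j ∈ T then 0 else 2 * d) := by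
    intro j
    by_cases hS : j ∈ S <;> by_cases hT : j ∈ T <;>
      simp only [hS, hT, if_true, if_false, mul_one, one_mul]
    · exact sum_both d x y
    · exact sum_sg_x d x
    · exact sum_sg_x d y
    · rw [Finset.sum_const, Finset.card_univ, Fintype.card_prod, Fintype.card_fin,
        Fintype.card_bool]
      ring
  simp_rw [hcoord]
  by_cases hST : S = T
  · subst hST
    rw [if_pos rfl]
    have : ∀ j : Fin n, (if j ∈ S then (if j ∈ S then 2 * ∑ i, x i * y i else 0)
        else (if j ∈ S then 0 else 2 * (d:ℝ)))
        = if j ∈ S then 2 * ∑ i, x i * y i else 2 * d := by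
      intro j; by_cases hj : j ∈ S <;> simp [hj]
    simp_rw [this]
    rw [← Finset.prod_mul_prod_compl S]
    rw [Finset.prod_congr rfl (fun j hj => if_pos hj),
        Finset.prod_congr rfl (fun j (hj : j ∈ Sᶜ) => if_neg (Finset.mem_compl.mp hj)),
        Finset.prod_const, Finset.prod_const, Finset.card_compl, Fintype.card_fin]
    ring
  · rw [if_neg hST]
    have hex : ∃ j, (j ∈ S ∧ j ∉ T) ∨ (j ∈ T ∧ j ∉ S) := by
      by_contra h
      push_neg at h
      apply hST
      ext j
      constructor
      · intro hj; exact (h j).1 hj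
      · intro hj; exact (h j).2 hj
    obtain ⟨j, hj⟩ := hex
    refine Finset.prod_eq_zero (Finset.mem_univ j) ?_
    rcases hj with ⟨h1, h2⟩ | ⟨h1, h2⟩ <;> simp [h1, h2]


lemma sum_swap5 {α β γ δ ε : Type*} [Fintype α] [Fintype β] [Fintype γ] [Fintype δ] [Fintype ε]
    (f : α → β → γ → δ → ε → ℝ) :
    ∑ o : α, ∑ a : β, ∑ b : γ, ∑ S : δ, ∑ T : ε, f o a b S T
      = ∑ a, ∑ b, ∑ S, ∑ T, ∑ o, f o a b S T := by
  rw [Finset.sum_comm]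
  refine Finset.sum_congr rfl fun a _ => ?_
  rw [Finset.sum_comm]
  refine Finset.sum_congr rfl fun b _ => ?_
  rw [Finset.sum_comm]
  exact Finset.sum_congr rfl fun S _ => Finset.sum_comm

lemma key (d n : ℕ) (hd : 1 ≤ d) {m : Type*} [Fintype m]
    (c : m → ℝ) (X : m → Fin d → ℝ) :
    ∑ o : Fin n → Fin d × Bool, (∑ a, c a * ∏ j, Qdist d (X a) (o j))^2
    = (((2*(d:ℝ))^n)⁻¹) * ∑ ℓ ∈ Finset.range (n+1), (n.choose ℓ : ℝ) * ((d:ℝ)^ℓ)⁻¹ *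
        ∑ g : Fin ℓ → Fin d, (∑ a, c a * ∏ j, X a (g j))^2 := by
  classical
  set E : ℝ := ((2*(d:ℝ))⁻¹)^n with hE
  set F : ℕ → ℝ := fun ℓ => ∑ g : Fin ℓ → Fin d, (∑ a, c a * ∏ j, X a (g j))^2 with hF
  have hd0 : (d:ℝ) ≠ 0 := by
    have : (0:ℝ) < d := by exact_mod_cast Nat.lt_of_lt_of_le Nat.zero_lt_one hd
    linarith
  have h2d : (2*(d:ℝ)) ≠ 0 := by positivity
  have claim1 : ∀ ℓ : ℕ, (∑ a, ∑ b, c a * c b * (2 * ∑ i, X a i * X b i)^ℓ)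
      = 2^ℓ * F ℓ := by
    intro ℓ
    have h1 : ∀ a b : m, c a * c b * (2 * ∑ i, X a i * X b i)^ℓ
        = ∑ g : Fin ℓ → Fin d, (2:ℝ)^ℓ *
            ((c a * ∏ j, X a (g j)) * (c b * ∏ j, X b (g j))) := by
      intro a b
      rw [mul_pow, Fintype.sum_pow, Finset.mul_sum, Finset.mul_sum]
      refine Finset.sum_congr rfl fun g _ => ?_
      rw [Finset.prod_mul_distrib]
      ring
    simp_rw [h1]
    calc ∑ a, ∑ b, ∑ g : Fin ℓ → Fin d, (2:ℝ)^ℓ *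
            ((c a * ∏ j, X a (g j)) * (c b * ∏ j, X b (g j)))
        = ∑ a, ∑ g : Fin ℓ → Fin d, ∑ b, (2:ℝ)^ℓ *
            ((c a * ∏ j, X a (g j)) * (c b * ∏ j, X b (g j))) :=
          Finset.sum_congr rfl fun _ _ => Finset.sum_comm
      _ = ∑ g : Fin ℓ → Fin d, ∑ a, ∑ b, (2:ℝ)^ℓ *
            ((c a * ∏ j, X a (g j)) * (c b * ∏ j, X b (g j))) := Finset.sum_comm
      _ = 2^ℓ * F ℓ := by
          rw [hF, Finset.mul_sum]
          refine Finset.sum_congr rfl fun g _ => ?_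
          simp_rw [← Finset.mul_sum, ← Finset.sum_mul]
          rw [sq]
  have hring : ∀ p q r s : ℝ, (p * (E * r)) * (q * (E * s)) = (p*q*(E*E))*(r*s) := by
    intros; ring
  have step1 : ∀ o : Fin n → Fin d × Bool,
      (∑ a, c a * ∏ j, Qdist d (X a) (o j))^2
      = ∑ a, ∑ b, ∑ S : Finset (Fin n), ∑ T : Finset (Fin n),
          (c a * c b * (E * E)) *
          ((∏ j ∈ S, sg (o j) * X a (o j).1) * ∏ j ∈ T, sg (o j) * X b (o j).1) := by
    intro o
    rw [sq, Finset.sum_mul_sum]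
    refine Finset.sum_congr rfl fun a _ => Finset.sum_congr rfl fun b _ => ?_
    rw [prod_qdist, prod_qdist, hring, Finset.sum_mul_sum]
    simp_rw [Finset.mul_sum]
  simp_rw [step1]
  rw [sum_swap5]
  have step2 : ∀ a b : m, ∑ S : Finset (Fin n), ∑ T : Finset (Fin n),
      ∑ o : Fin n → Fin d × Bool, (c a * c b * (E * E)) *
          ((∏ j ∈ S, sg (o j) * X a (o j).1) * ∏ j ∈ T, sg (o j) * X b (o j).1)
      = ∑ S : Finset (Fin n), (c a * c b * (E * E)) *
          ((2*(d:ℝ))^(n - S.card) * (2 * ∑ i, X a i * X b i)^S.card) := by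
    intro a b
    refine Finset.sum_congr rfl fun S _ => ?_
    have horth : ∀ T : Finset (Fin n),
        (∑ o : Fin n → Fin d × Bool, (c a * c b * (E * E)) *
          ((∏ j ∈ S, sg (o j) * X a (o j).1) * ∏ j ∈ T, sg (o j) * X b (o j).1))
        = (c a * c b * (E * E)) * (if S = T then
            (2*(d:ℝ))^(n - S.card) * (2 * ∑ i, X a i * X b i)^S.card else 0) := by
      intro T
      rw [← Finset.mul_sum, orth]
    simp_rw [horth]
    simp only [mul_ite, mul_zero, Finset.sum_ite_eq, Finset.mem_univ, if_true]
  simp_rw [step2]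
  calc ∑ a, ∑ b, ∑ S : Finset (Fin n), (c a * c b * (E * E)) *
          ((2*(d:ℝ))^(n - S.card) * (2 * ∑ i, X a i * X b i)^S.card)
      = ∑ a, ∑ S : Finset (Fin n), ∑ b, (c a * c b * (E * E)) *
          ((2*(d:ℝ))^(n - S.card) * (2 * ∑ i, X a i * X b i)^S.card) :=
        Finset.sum_congr rfl fun _ _ => Finset.sum_comm
    _ = ∑ S : Finset (Fin n), ∑ a, ∑ b, (c a * c b * (E * E)) *
          ((2*(d:ℝ))^(n - S.card) * (2 * ∑ i, X a i * X b i)^S.card) := Finset.sum_comm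
    _ = ∑ S : Finset (Fin n),
          (E * E) * (2*(d:ℝ))^(n - S.card) * (2^S.card * F S.card) := by
        refine Finset.sum_congr rfl fun S _ => ?_
        rw [← claim1 S.card, Finset.mul_sum]
        refine Finset.sum_congr rfl fun a _ => ?_
        rw [Finset.mul_sum]
        refine Finset.sum_congr rfl fun b _ => ?_
        ring
    _ = ∑ ℓ ∈ Finset.range (n+1), (n.choose ℓ : ℝ) *
          ((E * E) * (2*(d:ℝ))^(n - ℓ) * (2^ℓ * F ℓ)) := by
        rw [show (Finset.univ : Finset (Finset (Fin n)))
            = (Finset.univ : Finset (Fin n)).powerset from (Finset.powerset_univ).symm,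
          Finset.sum_powerset_apply_card
            (fun ℓ => (E * E) * (2*(d:ℝ))^(n - ℓ) * (2^ℓ * F ℓ))]
        simp [Finset.card_univ, nsmul_eq_mul]
    _ = (((2*(d:ℝ))^n)⁻¹) * ∑ ℓ ∈ Finset.range (n+1), (n.choose ℓ : ℝ) * ((d:ℝ)^ℓ)⁻¹ *
          ∑ g : Fin ℓ → Fin d, (∑ a, c a * ∏ j, X a (g j))^2 := by
        rw [Finset.mul_sum]
        refine Finset.sum_congr rfl fun ℓ hℓ => ?_
        have hℓn : ℓ ≤ n := Nat.lt_succ_iff.mp (Finset.mem_range.mp hℓ)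
        have hpow : (2*(d:ℝ))^(n-ℓ) * (2*(d:ℝ))^ℓ = (2*(d:ℝ))^n := by
          rw [← pow_add, Nat.sub_add_cancel hℓn]
        have hpow' : (2*(d:ℝ))^(n-ℓ) = (2*(d:ℝ))^n / ((2:ℝ)^ℓ * (d:ℝ)^ℓ) := by
          rw [← mul_pow, eq_div_iff (by positivity), hpow]
        show (n.choose ℓ:ℝ) * (E * E * (2*(d:ℝ))^(n-ℓ) * (2^ℓ * F ℓ))
            = ((2*(d:ℝ))^n)⁻¹ * ((n.choose ℓ:ℝ) * ((d:ℝ)^ℓ)⁻¹ * F ℓ)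
        rw [hE, hpow']
        simp only [inv_pow]
        field_simp

end TVAux

open TVAux in
/-- Moment-matching TV bound for mixtures of product distributions: for
finitely supported distributions `μ` (atoms `u` with weights `w`) and `ν` (atoms `v`
with weights `w'`) on `[-1,1]^d`,
`D_TV(E_μ[Q_x^{⊗n}], E_ν[Q_y^{⊗n}])² ≤ (1/4)·∑_{ℓ=0}^n C(n,ℓ)·d^{-ℓ}·‖Δ_ℓ‖₂²`,
where `Δ_ℓ = E_μ[x^{⊗ℓ}] − E_ν[y^{⊗ℓ}]`. -/
theorem tv_mixture_product_moment_bound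
    (d n : ℕ) (hd : 1 ≤ d) (hn : 1 ≤ n)
    {m₁ m₂ : ℕ} (u : Fin m₁ → Fin d → ℝ) (v : Fin m₂ → Fin d → ℝ)
    (hu : ∀ i j, -1 ≤ u i j ∧ u i j ≤ 1) (hv : ∀ i j, -1 ≤ v i j ∧ v i j ≤ 1)
    (w : Fin m₁ → ℝ) (w' : Fin m₂ → ℝ)
    (hw0 : ∀ i, 0 ≤ w i) (hw1 : ∑ i, w i = 1)
    (hw'0 : ∀ i, 0 ≤ w' i) (hw'1 : ∑ i, w' i = 1) :
    ((1 / 2) * ∑ o : Fin n → Fin d × Bool,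
        |(∑ i, w i * ∏ j, Qdist d (u i) (o j)) -
          ∑ i, w' i * ∏ j, Qdist d (v i) (o j)|) ^ 2 ≤
      (1 / 4) * ∑ ℓ ∈ Finset.range (n + 1), (n.choose ℓ : ℝ) * ((d : ℝ) ^ ℓ)⁻¹ *
        ∑ g : Fin ℓ → Fin d,
          ((∑ i, w i * ∏ j, u i (g j)) - ∑ i, w' i * ∏ j, v i (g j)) ^ 2 := by
  classical
  set c : Fin m₁ ⊕ Fin m₂ → ℝ := Sum.elim w (fun i => - w' i) with hc
  set X : Fin m₁ ⊕ Fin m₂ → Fin d → ℝ := Sum.elim u v with hX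
  have hf : ∀ o : Fin n → Fin d × Bool,
      (∑ i, w i * ∏ j, Qdist d (u i) (o j)) - ∑ i, w' i * ∏ j, Qdist d (v i) (o j)
      = ∑ a, c a * ∏ j, Qdist d (X a) (o j) := by
    intro o
    rw [Fintype.sum_sum_type]
    simp only [hc, hX, Sum.elim_inl, Sum.elim_inr, neg_mul]
    rw [Finset.sum_neg_distrib]
    ring
  have hΔ : ∀ (ℓ : ℕ) (g : Fin ℓ → Fin d),
      (∑ i, w i * ∏ j, u i (g j)) - ∑ i, w' i * ∏ j, v i (g j)
      = ∑ a, c a * ∏ j, X a (g j) := by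
    intro ℓ g
    rw [Fintype.sum_sum_type]
    simp only [hc, hX, Sum.elim_inl, Sum.elim_inr, neg_mul]
    rw [Finset.sum_neg_distrib]
    ring
  simp_rw [hf, hΔ]
  have h2dn : ((2*(d:ℝ))^n) ≠ 0 := by
    have : (0:ℝ) < d := by exact_mod_cast Nat.lt_of_lt_of_le Nat.zero_lt_one hd
    positivity
  have hcard : ((Fintype.card (Fin n → Fin d × Bool)) : ℝ) = (2*(d:ℝ))^n := by
    rw [Fintype.card_fun, Fintype.card_prod, Fintype.card_fin, Fintype.card_bool,
      Fintype.card_fin]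
    push_cast
    ring
  set f : (Fin n → Fin d × Bool) → ℝ := fun o => ∑ a, c a * ∏ j, Qdist d (X a) (o j)
    with hfdef
  calc ((1/2) * ∑ o, |f o|)^2 = (1/4) * (∑ o, |f o|)^2 := by rw [mul_pow]; norm_num
    _ ≤ (1/4) * ((2*(d:ℝ))^n * ∑ o, (f o)^2) := by
        have h := sq_sum_le_card_mul_sum_sq
          (s := (Finset.univ : Finset (Fin n → Fin d × Bool))) (f := fun o => |f o|)
        rw [Finset.card_univ, hcard] at h
        simp only [sq_abs] at h
        exact mul_le_mul_of_nonneg_left h (by norm_num)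
    _ = (1/4) * ∑ ℓ ∈ Finset.range (n + 1), (n.choose ℓ : ℝ) * ((d : ℝ) ^ ℓ)⁻¹ *
        ∑ g : Fin ℓ → Fin d, (∑ a, c a * ∏ j, X a (g j)) ^ 2 := by
        rw [hfdef]
        simp only
        rw [key d n hd c X, ← mul_assoc ((2*(d:ℝ))^n), mul_inv_cancel₀ h2dn, one_mul]
end

section
/- Existence of moment-matching disjoint mixtures: let d, N, K, H be positive integers with N ≥ C(K+d-1, d) + 1 and let δ ∈ (0,1]. For any x₁,...,x_N ∈ [-δ,δ]^d, there exist probability distributions ξ₀, ξ₁ on {1,...,N} with disjoint supports such that D_TV( E_{i∼ξ₀}[Q_{xᵢ}^{⊗H}], E_{i∼ξ₁}[Q_{xᵢ}^{⊗H}] )² ≤ ∑_{k=K}^H (e·H·δ²/K)^k, where Q_x ∈ Δ([2d]) is defined by Q_x(2j-1) = (1+x[j])/(2d), Q_x(2j) = (1-x[j])/(2d). -/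
open Finset Real



lemma exists_kernel_vec (d N K : ℕ) (hK : 1 ≤ K)
    (hN : Nat.choose (K + d - 1) d + 1 ≤ N) (x : Fin N → Fin d → ℝ) :
    ∃ v : Fin N → ℝ, v ≠ 0 ∧
      ∀ m : Multiset (Fin d), Multiset.card m ≤ K - 1 →
        ∑ i, v i * (m.map (x i)).prod = 0 := by
  classical
  have hcard0 : Fintype.card (Sym (Fin (d + 1)) (K - 1)) = Nat.choose (d + 1 + (K-1) - 1) (K-1) := by rw [Sym.card_sym_eq_choose, Fintype.card_fin]
  set ι := Sym (Fin (d + 1)) (K - 1) with hι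
  have hcard : Fintype.card ι = Nat.choose (K + d - 1) d := by
    have h1 : d + 1 + (K - 1) - 1 = K + d - 1 := by omega
    have h2 : K + d - 1 - d = K - 1 := by omega
    rw [hcard0, h1, ← h2, Nat.choose_symm (by omega)]
  -- coefficient function
  set c : Fin N → ι → ℝ := fun i m => ((m : Multiset (Fin (d+1))).map (Fin.snoc (x i) 1)).prod with hc
  let φ : (Fin N → ℝ) →ₗ[ℝ] (ι → ℝ) :=
    { toFun := fun v m => ∑ i, v i * c i m
      map_add' := by intro a b; funext m; simp [add_mul, Finset.sum_add_distrib]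
      map_smul' := by intro r a; funext m; simp [Finset.mul_sum, mul_assoc] }
  have hninj : ¬ Function.Injective φ := by
    intro hinj
    have := LinearMap.finrank_le_finrank_of_injective hinj
    rw [Module.finrank_pi, Module.finrank_pi, Fintype.card_fin, hcard] at this
    omega
  rw [Function.not_injective_iff] at hninj
  obtain ⟨a, b, hab, hne⟩ := hninj
  refine ⟨a - b, sub_ne_zero.mpr hne, ?_⟩
  intro m hm
  -- build the padded multiset
  have hcard' : Multiset.card (m.map Fin.castSucc + Multiset.replicate (K - 1 - Multiset.card m) (Fin.last d)) = K - 1 := by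
    simp [Multiset.card_replicate]; omega
  set m' : ι := ⟨m.map Fin.castSucc + Multiset.replicate (K - 1 - Multiset.card m) (Fin.last d), hcard'⟩
  have hval : ∀ i, c i m' = (m.map (x i)).prod := by
    intro i
    rw [hc]
    show ((m.map Fin.castSucc + Multiset.replicate _ (Fin.last d)).map (Fin.snoc (x i) 1)).prod = _
    rw [Multiset.map_add, Multiset.prod_add, Multiset.map_map, Multiset.map_replicate,
      Multiset.prod_replicate]
    simp [Function.comp, Fin.snoc_castSucc, Fin.snoc_last]
  have h0 : φ a m' = φ b m' := by rw [hab]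
  have : ∑ i, (a i - b i) * c i m' = 0 := by
    have : (∑ i, a i * c i m') - (∑ i, b i * c i m') = 0 := by
      rw [sub_eq_zero]; exact h0
    rw [← this, ← Finset.sum_sub_distrib]
    congr 1; funext i; ring
  calc ∑ i, (a - b) i * (m.map (x i)).prod
      = ∑ i, (a i - b i) * c i m' := by
        refine Finset.sum_congr rfl fun i _ => ?_; rw [hval i]; rfl
    _ = 0 := this


lemma choose_le_pow_ediv (K k H : ℕ) (hK : 1 ≤ K) (hk : K ≤ k) (hkH : k ≤ H) :
    (Nat.choose H k : ℝ) ≤ (Real.exp 1 * H / K) ^ k := by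
  have hk0 : 0 < k := lt_of_lt_of_le hK hk
  have hkR : (0:ℝ) < k := by exact_mod_cast hk0
  have hKR : (0:ℝ) < K := by exact_mod_cast hK
  have hfac : (0:ℝ) < k.factorial := by exact_mod_cast k.factorial_pos
  have h1 : (Nat.choose H k : ℝ) * k.factorial ≤ (H:ℝ) ^ k := by
    have := Nat.descFactorial_le_pow H k
    rw [Nat.descFactorial_eq_factorial_mul_choose] at this
    exact_mod_cast by rw [mul_comm]; exact_mod_cast this
  have h2 : (k:ℝ) ^ k ≤ Real.exp 1 ^ k * k.factorial := by
    have := Real.pow_div_factorial_le_exp (x := (k:ℝ)) (by positivity) k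
    have he : Real.exp ((k:ℝ)) = Real.exp 1 ^ k := by rw [← Real.exp_nat_mul, mul_one]
    rw [he, div_le_iff₀ hfac] at this
    exact this
  have hc : (Nat.choose H k : ℝ) ≤ (Real.exp 1 * H / k) ^ k := by
    rw [div_pow, le_div_iff₀ (by positivity)]
    calc (Nat.choose H k : ℝ) * (k:ℝ)^k
        ≤ (Nat.choose H k : ℝ) * (Real.exp 1 ^ k * k.factorial) :=
          mul_le_mul_of_nonneg_left h2 (by positivity)
      _ = Real.exp 1 ^ k * ((Nat.choose H k : ℝ) * k.factorial) := by ring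
      _ ≤ Real.exp 1 ^ k * (H:ℝ)^k := mul_le_mul_of_nonneg_left h1 (by positivity)
      _ = (Real.exp 1 * H) ^ k := (mul_pow _ _ _).symm
  refine hc.trans (pow_le_pow_left₀ (by positivity) ?_ k)
  exact div_le_div_of_nonneg_left (by positivity) hKR (by exact_mod_cast hk)



lemma tv_bound_of_moments (d N K H : ℕ) (hd : 1 ≤ d) (hK : 1 ≤ K) (hH : 1 ≤ H)
    (δ : ℝ) (hδ0 : 0 < δ) (hδ1 : δ ≤ 1)
    (x : Fin N → Fin d → ℝ) (hx : ∀ i j, |x i j| ≤ δ)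
    (w : Fin N → ℝ) (hw2 : ∑ i, |w i| ≤ 2)
    (hmom : ∀ (k : ℕ), k < K → ∀ g : Fin k → Fin d, ∑ i, w i * ∏ t, x i (g t) = 0) :
    (∑ o : Fin H → Fin d × Bool, |∑ i, w i * ∏ j, Qdist d (x i) (o j)|) ^ 2 ≤
      4 * ∑ k ∈ Finset.Icc K H, (Real.exp 1 * H * δ ^ 2 / K) ^ k := by
  classical
  have hdR : (0:ℝ) < d := by exact_mod_cast hd
  set Q : Fin N → Fin d × Bool → ℝ := fun i => Qdist d (x i) with hQ
  set P : Fin N → (Fin H → Fin d × Bool) → ℝ := fun i o => ∏ j, Q i (o j) with hP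
  set F : (Fin H → Fin d × Bool) → ℝ := fun o => ∑ i, w i * P i o with hF
  set ρ : Fin N → Fin N → ℝ := fun i i' => (∑ j, x i j * x i' j) / d with hρ
  -- Cauchy-Schwarz
  have hA : (∑ o, |F o|) ^ 2 ≤ ((2*d:ℝ))^H * ∑ o, (F o)^2 := by
    have := Finset.sum_mul_sq_le_sq_mul_sq Finset.univ (fun _ => (1:ℝ)) (fun o => |F o|)
    simp only [one_mul, one_pow, sq_abs] at this
    calc (∑ o, |F o|) ^ 2 ≤ (∑ _o : Fin H → Fin d × Bool, (1:ℝ)) * ∑ o, (F o)^2 := this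
      _ = ((2*d:ℝ))^H * ∑ o, (F o)^2 := by
          rw [Finset.sum_const, Finset.card_univ, Fintype.card_fun, Fintype.card_prod,
            Fintype.card_fin, Fintype.card_fin, Fintype.card_bool]
          push_cast; ring_nf
  -- single-coordinate correlation
  have hC : ∀ i i', ∑ z : Fin d × Bool, Q i z * Q i' z = (1 + ρ i i') / (2*d) := by
    intro i i'
    rw [Fintype.sum_prod_type]
    have : ∀ j : Fin d, ∑ b : Bool, Q i (j, b) * Q i' (j, b)
        = (2 + 2 * (x i j * x i' j)) / (2*d)^2 := by
      intro j
      simp only [hQ, Qdist, Fintype.sum_bool]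
      field_simp
      simp only [Bool.false_eq_true, ↓reduceIte]
      ring
    rw [Finset.sum_congr rfl fun j _ => this j, ← Finset.sum_div, hρ]
    simp only []
    rw [Finset.sum_add_distrib, Finset.sum_const, Finset.card_univ, Fintype.card_fin,
      ← Finset.mul_sum]
    field_simp
    ring
  -- product structure
  have h2 : ∀ i i', ∑ o : Fin H → Fin d × Bool, P i o * P i' o = ((1 + ρ i i')/(2*d))^H := by
    intro i i'
    have hpm : ∀ o : Fin H → Fin d × Bool, P i o * P i' o = ∏ j, (Q i (o j) * Q i' (o j)) := by
      intro o; rw [hP]; simp only []; rw [Finset.prod_mul_distrib]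
    have hps := Finset.prod_univ_sum (κ := fun _ : Fin H => Fin d × Bool)
      (fun _ => Finset.univ) (fun _ z => Q i z * Q i' z)
    rw [Fintype.piFinset_univ] at hps
    rw [Finset.sum_congr rfl fun o _ => hpm o, ← hps,
      Finset.prod_congr rfl (fun j _ => hC i i'), Finset.prod_const,
      Finset.card_univ, Fintype.card_fin]
  have hB : ∑ o, (F o)^2 = ∑ i, ∑ i', w i * w i' * ((1 + ρ i i')/(2*d))^H := by
    calc ∑ o, (F o)^2
        = ∑ o, ∑ i, ∑ i', (w i * w i') * (P i o * P i' o) := by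
          refine Finset.sum_congr rfl fun o _ => ?_
          rw [hF]; simp only [sq]
          rw [Finset.sum_mul_sum]
          exact Finset.sum_congr rfl fun i _ => Finset.sum_congr rfl fun i' _ => by ring
      _ = ∑ i, ∑ o, ∑ i', (w i * w i') * (P i o * P i' o) := Finset.sum_comm
      _ = ∑ i, ∑ i', ∑ o, (w i * w i') * (P i o * P i' o) :=
          Finset.sum_congr rfl fun i _ => Finset.sum_comm
      _ = ∑ i, ∑ i', (w i * w i') * ∑ o, P i o * P i' o := by
          simp only [← Finset.mul_sum]
      _ = ∑ i, ∑ i', w i * w i' * ((1 + ρ i i')/(2*d))^H := by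
          refine Finset.sum_congr rfl fun i _ => Finset.sum_congr rfl fun i' _ => ?_
          rw [h2 i i']
  -- moment sums
  set M : (k : ℕ) → (Fin k → Fin d) → ℝ := fun k g => ∑ i, w i * ∏ t, x i (g t) with hM
  have hSk : ∀ k : ℕ, ∑ i, ∑ i', w i * w i' * (ρ i i')^k
      = (∑ g : Fin k → Fin d, (M k g)^2) / (d:ℝ)^k := by
    intro k
    have hexp : ∀ i i', (ρ i i')^k
        = (∑ g : Fin k → Fin d, (∏ t, x i (g t)) * (∏ t, x i' (g t))) / (d:ℝ)^k := by
      intro i i'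
      rw [hρ]; simp only []
      rw [div_pow]
      congr 1
      have hps := Finset.prod_univ_sum (κ := fun _ : Fin k => Fin d)
        (fun _ => Finset.univ) (fun _ j => x i j * x i' j)
      rw [Fintype.piFinset_univ] at hps
      calc (∑ j, x i j * x i' j)^k
          = ∏ _t : Fin k, ∑ j, x i j * x i' j := by
            rw [Finset.prod_const, Finset.card_univ, Fintype.card_fin]
        _ = ∑ g : Fin k → Fin d, ∏ t, (x i (g t) * x i' (g t)) := hps
        _ = ∑ g : Fin k → Fin d, (∏ t, x i (g t)) * (∏ t, x i' (g t)) :=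
            Finset.sum_congr rfl fun g _ => Finset.prod_mul_distrib
    have key : ∀ i i', w i * w i' * (ρ i i')^k
        = (∑ g : Fin k → Fin d, (w i * ∏ t, x i (g t)) * (w i' * ∏ t, x i' (g t))) / (d:ℝ)^k := by
      intro i i'
      rw [hexp i i', ← mul_div_assoc, Finset.mul_sum]
      congr 1
      exact Finset.sum_congr rfl fun g _ => by ring
    calc ∑ i, ∑ i', w i * w i' * (ρ i i')^k
        = ∑ i, ∑ i', (∑ g : Fin k → Fin d,
            (w i * ∏ t, x i (g t)) * (w i' * ∏ t, x i' (g t))) / (d:ℝ)^k :=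
          Finset.sum_congr rfl fun i _ => Finset.sum_congr rfl fun i' _ => key i i'
      _ = (∑ i, ∑ i', ∑ g : Fin k → Fin d,
            (w i * ∏ t, x i (g t)) * (w i' * ∏ t, x i' (g t))) / (d:ℝ)^k := by
          simp only [← Finset.sum_div]
      _ = (∑ g : Fin k → Fin d, ∑ i, ∑ i',
            (w i * ∏ t, x i (g t)) * (w i' * ∏ t, x i' (g t))) / (d:ℝ)^k := by
          congr 1
          rw [show (∑ i, ∑ i', ∑ g : Fin k → Fin d,
            (w i * ∏ t, x i (g t)) * (w i' * ∏ t, x i' (g t)))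
            = ∑ i, ∑ g : Fin k → Fin d, ∑ i',
            (w i * ∏ t, x i (g t)) * (w i' * ∏ t, x i' (g t)) from
            Finset.sum_congr rfl fun i _ => Finset.sum_comm]
          exact Finset.sum_comm
      _ = (∑ g : Fin k → Fin d, (M k g)^2) / (d:ℝ)^k := by
          congr 1
          refine Finset.sum_congr rfl fun g _ => ?_
          rw [hM]; simp only [sq]
          rw [Finset.sum_mul_sum]
  have hMbd : ∀ (k : ℕ) (g : Fin k → Fin d), (M k g)^2 ≤ 4 * δ^(2*k) := by
    intro k g
    have hprod : ∀ i, |∏ t, x i (g t)| ≤ δ^k := by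
      intro i
      rw [Finset.abs_prod]
      calc ∏ t, |x i (g t)| ≤ ∏ _t : Fin k, δ :=
            Finset.prod_le_prod (fun t _ => abs_nonneg _) (fun t _ => hx i (g t))
        _ = δ^k := by rw [Finset.prod_const, Finset.card_univ, Fintype.card_fin]
    have habs : |M k g| ≤ 2 * δ^k := by
      rw [hM]; simp only []
      calc |∑ i, w i * ∏ t, x i (g t)| ≤ ∑ i, |w i * ∏ t, x i (g t)| :=
            Finset.abs_sum_le_sum_abs _ _
        _ ≤ ∑ i, |w i| * δ^k := by
            refine Finset.sum_le_sum fun i _ => ?_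
            rw [abs_mul]
            exact mul_le_mul_of_nonneg_left (hprod i) (abs_nonneg _)
        _ = (∑ i, |w i|) * δ^k := by rw [Finset.sum_mul]
        _ ≤ 2 * δ^k := mul_le_mul_of_nonneg_right hw2 (by positivity)
    calc (M k g)^2 = |M k g|^2 := (sq_abs _).symm
      _ ≤ (2 * δ^k)^2 := pow_le_pow_left₀ (abs_nonneg _) habs 2
      _ = 4 * δ^(2*k) := by rw [mul_pow, ← pow_mul, mul_comm k 2]; norm_num
  have hSkbd : ∀ k : ℕ, (∑ g : Fin k → Fin d, (M k g)^2) / (d:ℝ)^k ≤ 4 * δ^(2*k) := by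
    intro k
    rw [div_le_iff₀ (by positivity)]
    calc ∑ g : Fin k → Fin d, (M k g)^2
        ≤ ∑ _g : Fin k → Fin d, 4 * δ^(2*k) := Finset.sum_le_sum fun g _ => hMbd k g
      _ = (d:ℝ)^k * (4 * δ^(2*k)) := by
          rw [Finset.sum_const, Finset.card_univ, Fintype.card_fun, Fintype.card_fin,
            Fintype.card_fin, nsmul_eq_mul]
          push_cast; ring
      _ = 4 * δ^(2*k) * (d:ℝ)^k := by ring
  have hbinom : ∀ i i', (1 + ρ i i')^H
      = ∑ k ∈ Finset.range (H+1), (ρ i i')^k * (Nat.choose H k : ℝ) := by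
    intro i i'
    rw [add_comm, add_pow]
    exact Finset.sum_congr rfl fun k _ => by rw [one_pow, mul_one]
  have h2dH : ((2*(d:ℝ))^H : ℝ) ≠ 0 := by positivity
  have hmain : (∑ o, |F o|)^2 ≤ ∑ k ∈ Finset.range (H+1),
      (Nat.choose H k : ℝ) * ((∑ g : Fin k → Fin d, (M k g)^2) / (d:ℝ)^k) := by
    calc (∑ o, |F o|)^2 ≤ ((2*(d:ℝ)))^H * ∑ o, (F o)^2 := hA
      _ = ((2*(d:ℝ)))^H * ∑ i, ∑ i', w i * w i' * ((1 + ρ i i')/(2*(d:ℝ)))^H := by rw [hB]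
      _ = ∑ i, ∑ i', w i * w i' * (1 + ρ i i')^H := by
          rw [Finset.mul_sum]
          refine Finset.sum_congr rfl fun i _ => ?_
          rw [Finset.mul_sum]
          refine Finset.sum_congr rfl fun i' _ => ?_
          rw [div_pow]
          field_simp
      _ = ∑ i, ∑ i', ∑ k ∈ Finset.range (H+1),
            w i * w i' * ((ρ i i')^k * (Nat.choose H k : ℝ)) := by
          refine Finset.sum_congr rfl fun i _ => Finset.sum_congr rfl fun i' _ => ?_
          rw [hbinom i i', Finset.mul_sum]
      _ = ∑ k ∈ Finset.range (H+1), ∑ i, ∑ i',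
            w i * w i' * ((ρ i i')^k * (Nat.choose H k : ℝ)) := by
          rw [show (∑ i, ∑ i', ∑ k ∈ Finset.range (H+1),
            w i * w i' * ((ρ i i')^k * (Nat.choose H k : ℝ)))
            = ∑ i, ∑ k ∈ Finset.range (H+1), ∑ i',
            w i * w i' * ((ρ i i')^k * (Nat.choose H k : ℝ)) from
            Finset.sum_congr rfl fun i _ => Finset.sum_comm]
          exact Finset.sum_comm
      _ = ∑ k ∈ Finset.range (H+1), (Nat.choose H k : ℝ) *
            ∑ i, ∑ i', w i * w i' * (ρ i i')^k := by
          refine Finset.sum_congr rfl fun k _ => ?_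
          rw [Finset.mul_sum]
          refine Finset.sum_congr rfl fun i _ => ?_
          rw [Finset.mul_sum]
          exact Finset.sum_congr rfl fun i' _ => by ring
      _ = ∑ k ∈ Finset.range (H+1), (Nat.choose H k : ℝ) *
            ((∑ g : Fin k → Fin d, (M k g)^2) / (d:ℝ)^k) := by
          exact Finset.sum_congr rfl fun k _ => by rw [hSk k]
  have hrestrict : ∑ k ∈ Finset.range (H+1),
      (Nat.choose H k : ℝ) * ((∑ g : Fin k → Fin d, (M k g)^2) / (d:ℝ)^k)
      = ∑ k ∈ Finset.Icc K H,
      (Nat.choose H k : ℝ) * ((∑ g : Fin k → Fin d, (M k g)^2) / (d:ℝ)^k) := by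
    refine (Finset.sum_subset ?_ ?_).symm
    · intro k hk
      rw [Finset.mem_Icc] at hk
      rw [Finset.mem_range]
      omega
    · intro k hk hk'
      rw [Finset.mem_range] at hk
      rw [Finset.mem_Icc] at hk'
      have hkK : k < K := by omega
      have : ∑ g : Fin k → Fin d, (M k g)^2 = 0 := by
        refine Finset.sum_eq_zero fun g _ => ?_
        rw [hM]; simp only []
        rw [hmom k hkK g]
        norm_num
      rw [this]
      simp
  calc (∑ o : Fin H → Fin d × Bool, |∑ i, w i * ∏ j, Qdist d (x i) (o j)|) ^ 2
      = (∑ o, |F o|)^2 := rfl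
    _ ≤ ∑ k ∈ Finset.Icc K H,
        (Nat.choose H k : ℝ) * ((∑ g : Fin k → Fin d, (M k g)^2) / (d:ℝ)^k) := by
        rw [← hrestrict]; exact hmain
    _ ≤ ∑ k ∈ Finset.Icc K H, (Real.exp 1 * H / K)^k * (4 * δ^(2*k)) := by
        refine Finset.sum_le_sum fun k hk => ?_
        rw [Finset.mem_Icc] at hk
        calc (Nat.choose H k : ℝ) * ((∑ g : Fin k → Fin d, (M k g)^2) / (d:ℝ)^k)
            ≤ (Nat.choose H k : ℝ) * (4 * δ^(2*k)) :=
              mul_le_mul_of_nonneg_left (hSkbd k) (by positivity)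
          _ ≤ (Real.exp 1 * H / K)^k * (4 * δ^(2*k)) :=
              mul_le_mul_of_nonneg_right (choose_le_pow_ediv K k H hK hk.1 hk.2) (by positivity)
    _ = 4 * ∑ k ∈ Finset.Icc K H, (Real.exp 1 * H * δ ^ 2 / K) ^ k := by
        rw [Finset.mul_sum]
        refine Finset.sum_congr rfl fun k _ => ?_
        rw [show Real.exp 1 * H * δ^2 / K = (Real.exp 1 * H / K) * δ^2 by ring,
          mul_pow, pow_mul]
        ring


/-- Existence of moment-matching disjoint mixtures: if
`N ≥ C(K+d-1,d) + 1`, `δ ∈ (0,1]` and `x₁,...,x_N ∈ [-δ,δ]^d`, then there are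
distributions `ξ₀, ξ₁` on `[N]` with disjoint supports such that
`D_TV(E_{i∼ξ₀}[Q_{xᵢ}^{⊗H}], E_{i∼ξ₁}[Q_{xᵢ}^{⊗H}])² ≤ ∑_{k=K}^H (e·H·δ²/K)^k`. -/
theorem exists_moment_matching_disjoint_mixtures
    (d N K H : ℕ) (hd : 1 ≤ d) (hK : 1 ≤ K) (hH : 1 ≤ H)
    (hN : Nat.choose (K + d - 1) d + 1 ≤ N)
    (δ : ℝ) (hδ0 : 0 < δ) (hδ1 : δ ≤ 1)
    (x : Fin N → Fin d → ℝ) (hx : ∀ i j, |x i j| ≤ δ) :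
    ∃ ξ₀ ξ₁ : Fin N → ℝ,
      (∀ i, 0 ≤ ξ₀ i) ∧ (∑ i, ξ₀ i = 1) ∧
      (∀ i, 0 ≤ ξ₁ i) ∧ (∑ i, ξ₁ i = 1) ∧
      (∀ i, ξ₀ i = 0 ∨ ξ₁ i = 0) ∧
      ((1 / 2) * ∑ o : Fin H → Fin d × Bool,
          |(∑ i, ξ₀ i * ∏ j, Qdist d (x i) (o j)) -
            ∑ i, ξ₁ i * ∏ j, Qdist d (x i) (o j)|) ^ 2 ≤
        ∑ k ∈ Finset.Icc K H, (Real.exp 1 * H * δ ^ 2 / K) ^ k := by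
  classical
  obtain ⟨v, hv0, hvmom⟩ := exists_kernel_vec d N K hK hN x
  -- the zero-degree moment : ∑ v = 0
  have hsum0 : ∑ i, v i = 0 := by
    have := hvmom 0 (by simp)
    simpa using this
  set s : ℝ := ∑ i, Max.max (v i) 0 with hs
  have hsnn : 0 ≤ s := Finset.sum_nonneg fun i _ => le_max_right _ _
  have hss' : s = ∑ i, Max.max (-v i) 0 := by
    have h1 : ∀ a : ℝ, Max.max a 0 - Max.max (-a) 0 = a := fun a =>
      max_zero_sub_max_neg_zero_eq_self a
    have : s - ∑ i, Max.max (-v i) 0 = 0 := by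
      rw [hs, ← Finset.sum_sub_distrib]
      rw [Finset.sum_congr rfl fun i _ => h1 (v i)]
      exact hsum0
    linarith
  have hspos : 0 < s := by
    rcases lt_or_eq_of_le hsnn with h | h
    · exact h
    · exfalso
      apply hv0
      funext i
      have h0 : ∀ j ∈ Finset.univ, Max.max (v j) 0 = 0 :=
        (Finset.sum_eq_zero_iff_of_nonneg fun j _ => le_max_right _ _).mp h.symm
      have h0' : ∀ j ∈ Finset.univ, Max.max (-v j) 0 = 0 :=
        (Finset.sum_eq_zero_iff_of_nonneg fun j _ => le_max_right _ _).mp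
          (by rw [← hss']; exact h.symm)
      have ha : v i ≤ 0 := by
        have := h0 i (Finset.mem_univ i); have h2 := le_max_left (v i) 0; linarith
      have hb : 0 ≤ v i := by
        have := h0' i (Finset.mem_univ i); have h2 := le_max_left (-v i) 0; linarith
      exact le_antisymm ha hb
  refine ⟨fun i => Max.max (v i) 0 / s, fun i => Max.max (-v i) 0 / s,
    fun i => div_nonneg (le_max_right _ _) hsnn, ?_,
    fun i => div_nonneg (le_max_right _ _) hsnn, ?_, ?_, ?_⟩
  · rw [← Finset.sum_div, ← hs, div_self hspos.ne']
  · rw [← Finset.sum_div, ← hss', div_self hspos.ne']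
  · intro i
    rcases le_total (v i) 0 with h | h
    · left; show Max.max (v i) 0 / s = 0; rw [max_eq_right h, zero_div]
    · right; show Max.max (-v i) 0 / s = 0; rw [max_eq_right (neg_nonpos_of_nonneg h), zero_div]
  · -- the TV bound
    set w : Fin N → ℝ := fun i => Max.max (v i) 0 / s - Max.max (-v i) 0 / s with hw
    have hwv : ∀ i, w i = v i / s := by
      intro i
      rw [hw]; simp only []
      rw [div_sub_div_same, max_zero_sub_max_neg_zero_eq_self]
    have hw2 : ∑ i, |w i| ≤ 2 := by
      calc ∑ i, |w i| ≤ ∑ i, (Max.max (v i) 0 / s + Max.max (-v i) 0 / s) := by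
            refine Finset.sum_le_sum fun i _ => ?_
            rw [hw]; simp only []
            refine (abs_sub _ _).trans ?_
            rw [abs_of_nonneg (div_nonneg (le_max_right _ _) hsnn),
              abs_of_nonneg (div_nonneg (le_max_right _ _) hsnn)]
        _ = 2 := by
            rw [Finset.sum_add_distrib, ← Finset.sum_div, ← Finset.sum_div, ← hs, ← hss',
              div_self hspos.ne']
            norm_num
    have hmom : ∀ (k : ℕ), k < K → ∀ g : Fin k → Fin d,
        ∑ i, w i * ∏ t, x i (g t) = 0 := by
      intro k hk g
      have hcard : Multiset.card (((Finset.univ : Finset (Fin k)).val.map g)) ≤ K - 1 := by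
        rw [Multiset.card_map]
        have : Multiset.card (Finset.univ : Finset (Fin k)).val = k := by
          rw [← Finset.card_def, Finset.card_univ, Fintype.card_fin]
        omega
      have h0 := hvmom (((Finset.univ : Finset (Fin k)).val.map g)) hcard
      have hprod : ∀ i, ((((Finset.univ : Finset (Fin k)).val.map g)).map (x i)).prod = ∏ t, x i (g t) := by
        intro i
        rw [Multiset.map_map, Finset.prod_eq_multiset_prod]
        rfl
      have h0' : ∑ i, v i * ∏ t, x i (g t) = 0 := by
        rw [← h0]
        exact Finset.sum_congr rfl fun i _ => by rw [hprod i]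
      calc ∑ i, w i * ∏ t, x i (g t) = (∑ i, v i * ∏ t, x i (g t)) / s := by
            rw [Finset.sum_div]
            exact Finset.sum_congr rfl fun i _ => by rw [hwv i, div_mul_eq_mul_div]
        _ = 0 := by rw [h0', zero_div]
    have hbd := tv_bound_of_moments d N K H hd hK hH δ hδ0 hδ1 x hx w hw2 hmom
    have hrw : ∀ o : Fin H → Fin d × Bool,
        (∑ i, Max.max (v i) 0 / s * ∏ j, Qdist d (x i) (o j)) -
          ∑ i, Max.max (-v i) 0 / s * ∏ j, Qdist d (x i) (o j)
        = ∑ i, w i * ∏ j, Qdist d (x i) (o j) := by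
      intro o
      rw [← Finset.sum_sub_distrib]
      exact Finset.sum_congr rfl fun i _ => by rw [hw]; ring
    rw [Finset.sum_congr rfl fun o _ => by rw [hrw o]]
    rw [mul_pow]
    norm_num
    linarith [hbd]
end

section
/- Maximum-likelihood decoding error bound: consider an LMDP with mixing distribution ρ over L MDPs, and for a trajectory τ̄_W = (s₁,a₁,...,s_W) let m(τ̄_W) be a maximizer over m ∈ supp(ρ) of the posterior probability P(m | τ̄_W). If for every policy-induced pair m ≠ l and every initial state s the Bhattacharyya divergence satisfies D_B(M_{m,W}(π,s), M_{l,W}(π,s)) ≥ ϖ(W), then the probability under policy π that the latent index m* differs from m(τ̄_W) is at most L·exp(−ϖ(W)). -/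
/-- The state at step `i` (0-indexed) when starting at `s` and following the trajectory
`τ = ((a₁,s₂),...,(a_k,s_{k+1}))`. -/
def stateAt {S A : Type*} (s : S) {k : ℕ} (τ : Fin k → A × S) : ℕ → S
  | 0 => s
  | i + 1 => if h : i < k then (τ ⟨i, h⟩).2 else s

/-- The history `((s₁,a₁),...,(s_i,a_i))` of state-action pairs before step `i`. -/
def histAt {S A : Type*} [Inhabited A] (s : S) {k : ℕ} (τ : Fin k → A × S) (i : ℕ) :
    List (S × A) :=
  (List.range i).map fun j => (stateAt s τ j, if h : j < k then (τ ⟨j, h⟩).1 else default)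

/-- The probability of the trajectory `τ = (a₁,s₂,...,a_k,s_{k+1})` when running the
(history-dependent) policy `π` in the MDP with transition kernel `T`, starting at `s`. -/
noncomputable def trajP {S A : Type*} [Inhabited A]
    (T : S → A → S → ℝ) (π : List (S × A) → S → A → ℝ) (s : S) {k : ℕ}
    (τ : Fin k → A × S) : ℝ :=
  ∏ i : Fin k,
    (π (histAt s τ i) (stateAt s τ i) (τ i).1 * T (stateAt s τ i) (τ i).1 (τ i).2)

/-- Maximum-likelihood decoding error bound: in an LMDP with prior `ρ`,
initial distributions `ν_m` and kernels `T_m`, if `dec` maximizes the joint (hence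
posterior) likelihood of the latent index given the length-`W` trajectory, and all
pairwise `W`-step trajectory distributions have Bhattacharyya divergence at least `c`
from every initial state, then the probability that `dec` errs is at most `L·exp(-c)`. -/
theorem mle_decoding_error_bound
    {S A : Type*} [Fintype S] [Fintype A] [Inhabited A] {L W : ℕ} (hW : 1 ≤ W)
    (ρ : Fin L → ℝ) (hρ0 : ∀ m, 0 ≤ ρ m) (hρ1 : ∑ m, ρ m = 1)
    (ν : Fin L → S → ℝ) (hν0 : ∀ m s, 0 ≤ ν m s) (hν1 : ∀ m, ∑ s, ν m s = 1)
    (T : Fin L → S → A → S → ℝ)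
    (hT0 : ∀ m s a s', 0 ≤ T m s a s') (hT1 : ∀ m s a, ∑ s', T m s a s' = 1)
    (π : List (S × A) → S → A → ℝ)
    (hπ0 : ∀ hist s a, 0 ≤ π hist s a) (hπ1 : ∀ hist s, ∑ a, π hist s a = 1)
    (dec : S → (Fin (W - 1) → A × S) → Fin L)
    (hdec : ∀ s τ m, ρ m * ν m s * trajP (T m) π s τ ≤
      ρ (dec s τ) * ν (dec s τ) s * trajP (T (dec s τ)) π s τ)
    (c : ℝ)
    (hsep : ∀ m l, m ≠ l → ∀ s : S,
      -Real.log (∑ τ : Fin (W - 1) → A × S,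
          Real.sqrt (trajP (T m) π s τ * trajP (T l) π s τ)) ≥ c) :
    ∑ m, ∑ s, ∑ τ : Fin (W - 1) → A × S,
        (if dec s τ ≠ m then ρ m * ν m s * trajP (T m) π s τ else 0) ≤
      (L : ℝ) * Real.exp (-c) := by
  classical
  have hQnn : ∀ (m : Fin L) (s : S) (τ : Fin (W - 1) → A × S), 0 ≤ trajP (T m) π s τ :=
    fun m s τ => Finset.prod_nonneg fun i _ => mul_nonneg (hπ0 _ _ _) (hT0 _ _ _ _)
  set P : Fin L → S → (Fin (W - 1) → A × S) → ℝ :=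
    fun m s τ => ρ m * ν m s * trajP (T m) π s τ with hPdef
  have hPnn : ∀ m s τ, 0 ≤ P m s τ := fun m s τ =>
    mul_nonneg (mul_nonneg (hρ0 m) (hν0 m s)) (hQnn m s τ)
  -- Step B : Bhattacharyya sum bound
  have hB : ∀ m l, m ≠ l → ∀ s : S,
      (∑ τ : Fin (W - 1) → A × S,
        Real.sqrt (trajP (T m) π s τ * trajP (T l) π s τ)) ≤ Real.exp (-c) := by
    intro m l h s
    have hs := hsep m l h s
    set B := ∑ τ : Fin (W - 1) → A × S,
      Real.sqrt (trajP (T m) π s τ * trajP (T l) π s τ) with hBdef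
    by_cases hB0 : B ≤ 0
    · exact hB0.trans (Real.exp_pos _).le
    · push_neg at hB0
      have hlog : Real.log B ≤ -c := by linarith
      calc B = Real.exp (Real.log B) := (Real.exp_log hB0).symm
        _ ≤ Real.exp (-c) := Real.exp_le_exp.mpr hlog
  -- Step 1 : pointwise bound by sqrt products
  have step1 : (∑ m, ∑ s, ∑ τ : Fin (W - 1) → A × S,
        (if dec s τ ≠ m then P m s τ else 0)) ≤
      ∑ m, ∑ l ∈ Finset.univ.erase m, ∑ s, ∑ τ : Fin (W - 1) → A × S,
        Real.sqrt (P m s τ * P l s τ) := by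
    have swap : ∀ m : Fin L,
        (∑ s, ∑ τ : Fin (W - 1) → A × S, ∑ l ∈ Finset.univ.erase m,
          Real.sqrt (P m s τ * P l s τ)) =
        ∑ l ∈ Finset.univ.erase m, ∑ s, ∑ τ : Fin (W - 1) → A × S,
          Real.sqrt (P m s τ * P l s τ) := by
      intro m
      calc (∑ s, ∑ τ : Fin (W - 1) → A × S, ∑ l ∈ Finset.univ.erase m,
            Real.sqrt (P m s τ * P l s τ))
          = ∑ s, ∑ l ∈ Finset.univ.erase m, ∑ τ : Fin (W - 1) → A × S,
              Real.sqrt (P m s τ * P l s τ) :=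
            Finset.sum_congr rfl fun s _ => Finset.sum_comm
        _ = _ := Finset.sum_comm
    refine Finset.sum_le_sum fun m _ => ?_
    rw [← swap m]
    refine Finset.sum_le_sum fun s _ => Finset.sum_le_sum fun τ _ => ?_
    by_cases h : dec s τ ≠ m
    · simp only [if_pos h]
      have hd : P m s τ ≤ P (dec s τ) s τ := hdec s τ m
      have h1 : P m s τ ≤ Real.sqrt (P m s τ * P (dec s τ) s τ) := by
        calc P m s τ = Real.sqrt (P m s τ * P m s τ) := by
              rw [Real.sqrt_mul_self (hPnn m s τ)]
          _ ≤ _ := Real.sqrt_le_sqrt (mul_le_mul_of_nonneg_left hd (hPnn m s τ))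
      exact h1.trans (Finset.single_le_sum
        (f := fun l => Real.sqrt (P m s τ * P l s τ)) (fun l _ => Real.sqrt_nonneg _)
        (Finset.mem_erase.mpr ⟨h, Finset.mem_univ _⟩))
    · simp only [if_neg h]
      exact Finset.sum_nonneg fun l _ => Real.sqrt_nonneg _
  -- Step 2 : for each pair m ≠ l, inner double sum ≤ √(ρ m)√(ρ l) exp(-c)
  have hνCS : ∀ m l : Fin L, (∑ s, Real.sqrt (ν m s * ν l s)) ≤ 1 := by
    intro m l
    have key : (∑ s, Real.sqrt (ν m s) * Real.sqrt (ν l s)) ^ 2 ≤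
        (∑ s, Real.sqrt (ν m s) ^ 2) * (∑ s, Real.sqrt (ν l s) ^ 2) :=
      Finset.sum_mul_sq_le_sq_mul_sq Finset.univ _ _
    have e1 : (∑ s, Real.sqrt (ν m s) ^ 2) = 1 := by
      rw [← hν1 m]; exact Finset.sum_congr rfl fun s _ => Real.sq_sqrt (hν0 m s)
    have e2 : (∑ s, Real.sqrt (ν l s) ^ 2) = 1 := by
      rw [← hν1 l]; exact Finset.sum_congr rfl fun s _ => Real.sq_sqrt (hν0 l s)
    rw [e1, e2, mul_one] at key
    have hnn : 0 ≤ ∑ s, Real.sqrt (ν m s) * Real.sqrt (ν l s) :=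
      Finset.sum_nonneg fun s _ => mul_nonneg (Real.sqrt_nonneg _) (Real.sqrt_nonneg _)
    have : (∑ s, Real.sqrt (ν m s) * Real.sqrt (ν l s)) ≤ 1 := by nlinarith
    calc (∑ s, Real.sqrt (ν m s * ν l s))
        = ∑ s, Real.sqrt (ν m s) * Real.sqrt (ν l s) :=
          Finset.sum_congr rfl fun s _ => Real.sqrt_mul (hν0 m s) _
      _ ≤ 1 := this
  have step2 : ∀ m l : Fin L, m ≠ l →
      (∑ s, ∑ τ : Fin (W - 1) → A × S, Real.sqrt (P m s τ * P l s τ)) ≤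
        Real.sqrt (ρ m) * Real.sqrt (ρ l) * Real.exp (-c) := by
    intro m l hml
    have expand : ∀ (s : S) (τ : Fin (W - 1) → A × S),
        Real.sqrt (P m s τ * P l s τ) =
          (Real.sqrt (ρ m) * Real.sqrt (ρ l)) * Real.sqrt (ν m s * ν l s) *
            Real.sqrt (trajP (T m) π s τ * trajP (T l) π s τ) := by
      intro s τ
      have : P m s τ * P l s τ =
          (ρ m * ρ l) * ((ν m s * ν l s) *
            (trajP (T m) π s τ * trajP (T l) π s τ)) := by
        simp only [hPdef]; ring
      rw [this, Real.sqrt_mul (mul_nonneg (hρ0 m) (hρ0 l)),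
        Real.sqrt_mul (mul_nonneg (hν0 m s) (hν0 l s)),
        Real.sqrt_mul (hρ0 m)]
      ring
    calc (∑ s, ∑ τ : Fin (W - 1) → A × S, Real.sqrt (P m s τ * P l s τ))
        = ∑ s, (Real.sqrt (ρ m) * Real.sqrt (ρ l)) * Real.sqrt (ν m s * ν l s) *
            ∑ τ : Fin (W - 1) → A × S,
              Real.sqrt (trajP (T m) π s τ * trajP (T l) π s τ) := by
          refine Finset.sum_congr rfl fun s _ => ?_
          rw [Finset.mul_sum]
          exact Finset.sum_congr rfl fun τ _ => expand s τ
      _ ≤ ∑ s, (Real.sqrt (ρ m) * Real.sqrt (ρ l)) * Real.sqrt (ν m s * ν l s) *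
            Real.exp (-c) := by
          refine Finset.sum_le_sum fun s _ => ?_
          refine mul_le_mul_of_nonneg_left (hB m l hml s) ?_
          exact mul_nonneg (mul_nonneg (Real.sqrt_nonneg _) (Real.sqrt_nonneg _))
            (Real.sqrt_nonneg _)
      _ = (Real.sqrt (ρ m) * Real.sqrt (ρ l)) * Real.exp (-c) *
            ∑ s, Real.sqrt (ν m s * ν l s) := by
          rw [Finset.mul_sum]; refine Finset.sum_congr rfl fun s _ => ?_; ring
      _ ≤ (Real.sqrt (ρ m) * Real.sqrt (ρ l)) * Real.exp (-c) * 1 := by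
          refine mul_le_mul_of_nonneg_left (hνCS m l) ?_
          exact mul_nonneg (mul_nonneg (Real.sqrt_nonneg _) (Real.sqrt_nonneg _))
            (Real.exp_pos _).le
      _ = Real.sqrt (ρ m) * Real.sqrt (ρ l) * Real.exp (-c) := by ring
  -- Step 3 : sum over pairs
  have hρCS : (∑ m, Real.sqrt (ρ m)) ^ 2 ≤ (L : ℝ) := by
    have key : (∑ m, Real.sqrt (ρ m) * 1) ^ 2 ≤
        (∑ m, Real.sqrt (ρ m) ^ 2) * (∑ _m : Fin L, (1 : ℝ) ^ 2) :=
      Finset.sum_mul_sq_le_sq_mul_sq Finset.univ _ _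
    have e1 : (∑ m, Real.sqrt (ρ m) ^ 2) = 1 := by
      rw [← hρ1]; exact Finset.sum_congr rfl fun m _ => Real.sq_sqrt (hρ0 m)
    simp only [mul_one, one_pow, Finset.sum_const, Finset.card_univ, Fintype.card_fin,
      nsmul_eq_mul, e1, one_mul] at key
    exact key
  calc (∑ m, ∑ s, ∑ τ : Fin (W - 1) → A × S,
        (if dec s τ ≠ m then ρ m * ν m s * trajP (T m) π s τ else 0))
      ≤ ∑ m, ∑ l ∈ Finset.univ.erase m, ∑ s, ∑ τ : Fin (W - 1) → A × S,
          Real.sqrt (P m s τ * P l s τ) := step1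
    _ ≤ ∑ m, ∑ l ∈ Finset.univ.erase m,
          Real.sqrt (ρ m) * Real.sqrt (ρ l) * Real.exp (-c) := by
        refine Finset.sum_le_sum fun m _ => Finset.sum_le_sum fun l hl => ?_
        exact step2 m l (fun e => (Finset.mem_erase.mp hl).1 e.symm)
    _ ≤ ∑ m, ∑ l, Real.sqrt (ρ m) * Real.sqrt (ρ l) * Real.exp (-c) := by
        refine Finset.sum_le_sum fun m _ => ?_
        refine Finset.sum_le_sum_of_subset_of_nonneg (Finset.erase_subset _ _) ?_
        intro l _ _
        exact mul_nonneg (mul_nonneg (Real.sqrt_nonneg _) (Real.sqrt_nonneg _))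
          (Real.exp_pos _).le
    _ = (∑ m, Real.sqrt (ρ m)) ^ 2 * Real.exp (-c) := by
        rw [sq, Finset.sum_mul_sum, Finset.sum_mul]
        exact Finset.sum_congr rfl fun m _ => by rw [Finset.sum_mul]
    _ ≤ (L : ℝ) * Real.exp (-c) :=
        mul_le_mul_of_nonneg_right hρCS (Real.exp_pos _).le
end

section
/- Bhattacharyya coefficient is maximized by a deterministic Markov policy: fix an LMDP with MDP instances {M_m}, two indices m ≠ l, a step h ≥ 1, and a state s. Then the maximum over all history-dependent randomized policies π of the Bhattacharyya coefficient BC(M_{m,h+1}(π,s), M_{l,h+1}(π,s)) = exp(−D_B(M_{m,h+1}(π,s), M_{l,h+1}(π,s))) is attained by a deterministic Markov policy. Consequently, if an LMDP is ϖ-separated under every deterministic Markov policy, it is ϖ-separated under every randomized history-dependent policy. -/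
/-- The Bhattacharyya coefficient between the `k`-step trajectory distributions of two
MDPs under policy `π` starting from `s`. -/
noncomputable def trajBC {S A : Type*} [Fintype S] [Fintype A] [Inhabited A]
    (T₁ T₂ : S → A → S → ℝ) (π : List (S × A) → S → A → ℝ) (s : S) (k : ℕ) : ℝ :=
  ∑ τ : Fin k → A × S, Real.sqrt (trajP T₁ π s τ * trajP T₂ π s τ)

/-- The deterministic Markov policy choosing action `f s h` at state `s` and step `h`
(the step being the length of the history). -/
noncomputable def detPol {S A : Type*} [DecidableEq A] (f : S → ℕ → A) :
    List (S × A) → S → A → ℝ :=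
  fun hist s a => if a = f s hist.length then 1 else 0

section Lemmas
variable {S A : Type*} [Inhabited A]

lemma stateAt_cons (s : S) (p : A × S) {k : ℕ} (τ : Fin k → A × S) {j : ℕ} (hj : j ≤ k) :
    stateAt s (Fin.cons p τ : Fin (k+1) → A × S) (j+1) = stateAt p.2 τ j := by
  cases j with
  | zero => simp [stateAt]
  | succ i =>
      have hik : i < k := by omega
      simp only [stateAt]
      rw [dif_pos (Nat.succ_lt_succ hik), dif_pos hik]
      have hm : (⟨i+1, Nat.succ_lt_succ hik⟩ : Fin (k+1)) = Fin.succ ⟨i, hik⟩ := rfl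
      rw [hm, Fin.cons_succ]

lemma histAt_cons (s : S) (p : A × S) {k : ℕ} (τ : Fin k → A × S) {i : ℕ} (hi : i ≤ k) :
    histAt s (Fin.cons p τ : Fin (k+1) → A × S) (i+1) = (s, p.1) :: histAt p.2 τ i := by
  unfold histAt
  rw [List.range_succ_eq_map, List.map_cons, List.map_map]
  congr 1
  · refine List.map_congr_left fun j hj => ?_
    have hjk : j < k := lt_of_lt_of_le (List.mem_range.mp hj) hi
    have h1 : stateAt s (Fin.cons p τ : Fin (k+1) → A × S) (j+1) = stateAt p.2 τ j :=
      stateAt_cons s p τ (le_of_lt hjk)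
    simp only [Function.comp_apply]
    rw [dif_pos (Nat.succ_lt_succ hjk), dif_pos hjk]
    have hm : (⟨j+1, Nat.succ_lt_succ hjk⟩ : Fin (k+1)) = Fin.succ ⟨j, hjk⟩ := rfl
    rw [hm, Fin.cons_succ, h1]

lemma trajP_cons (T : S → A → S → ℝ) (π : List (S × A) → S → A → ℝ) (s : S)
    (p : A × S) {k : ℕ} (τ : Fin k → A × S) :
    trajP T π s (Fin.cons p τ) =
      π [] s p.1 * T s p.1 p.2 * trajP T (fun hist => π ((s, p.1) :: hist)) p.2 τ := by
  unfold trajP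
  rw [Fin.prod_univ_succ]
  have h0 : (Fin.cons p τ : Fin (k+1) → A × S) 0 = p := Fin.cons_zero _ _
  have hst0 : stateAt s (Fin.cons p τ : Fin (k+1) → A × S) ((0 : Fin (k+1)) : ℕ) = s := rfl
  have hh0 : histAt s (Fin.cons p τ : Fin (k+1) → A × S) ((0 : Fin (k+1)) : ℕ) = [] := rfl
  rw [hh0, hst0, h0]
  congr 1
  refine Finset.prod_congr rfl fun i _ => ?_
  have hv : ((Fin.succ i : Fin (k+1)) : ℕ) = (i : ℕ) + 1 := Fin.val_succ i
  rw [hv, Fin.cons_succ, stateAt_cons s p τ (le_of_lt i.isLt),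
    histAt_cons s p τ (le_of_lt i.isLt)]

lemma sum_pi_succ {X : Type*} [Fintype X] {k : ℕ} (F : (Fin (k+1) → X) → ℝ) :
    ∑ τ : Fin (k+1) → X, F τ = ∑ p : X, ∑ τ : Fin k → X, F (Fin.cons p τ) := by
  have e := Fintype.sum_equiv (Fin.consEquiv fun _ => X)
    (fun q : X × (Fin k → X) => F (Fin.cons q.1 q.2)) F fun q => rfl
  rw [← e, Fintype.sum_prod_type]

variable [Fintype S] [Fintype A]

lemma trajBC_zero (T₁ T₂ : S → A → S → ℝ) (π : List (S × A) → S → A → ℝ) (s : S) :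
    trajBC T₁ T₂ π s 0 = 1 := by
  simp [trajBC, trajP]

lemma trajBC_nonneg (T₁ T₂ : S → A → S → ℝ) (π : List (S × A) → S → A → ℝ) (s : S) (k : ℕ) :
    0 ≤ trajBC T₁ T₂ π s k :=
  Finset.sum_nonneg fun τ _ => Real.sqrt_nonneg _

lemma trajBC_succ (T₁ T₂ : S → A → S → ℝ) (h1 : ∀ s a s', 0 ≤ T₁ s a s')
    (h2 : ∀ s a s', 0 ≤ T₂ s a s')
    (π : List (S × A) → S → A → ℝ) (hπ : ∀ hist s' a, 0 ≤ π hist s' a) (s : S) (k : ℕ) :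
    trajBC T₁ T₂ π s (k+1) =
      ∑ p : A × S, π [] s p.1 *
        (Real.sqrt (T₁ s p.1 p.2 * T₂ s p.1 p.2) *
          trajBC T₁ T₂ (fun hist => π ((s, p.1) :: hist)) p.2 k) := by
  unfold trajBC
  rw [sum_pi_succ]
  refine Finset.sum_congr rfl fun p _ => ?_
  rw [Finset.mul_sum, Finset.mul_sum]
  refine Finset.sum_congr rfl fun τ _ => ?_
  rw [trajP_cons, trajP_cons]
  have e1 : π [] s p.1 * T₁ s p.1 p.2 * trajP T₁ (fun hist => π ((s, p.1) :: hist)) p.2 τ *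
      (π [] s p.1 * T₂ s p.1 p.2 * trajP T₂ (fun hist => π ((s, p.1) :: hist)) p.2 τ) =
      (π [] s p.1 * π [] s p.1) * ((T₁ s p.1 p.2 * T₂ s p.1 p.2) *
        (trajP T₁ (fun hist => π ((s, p.1) :: hist)) p.2 τ *
         trajP T₂ (fun hist => π ((s, p.1) :: hist)) p.2 τ)) := by ring
  rw [e1, Real.sqrt_mul (mul_self_nonneg _), Real.sqrt_mul_self (hπ _ _ _),
    Real.sqrt_mul (mul_nonneg (h1 _ _ _) (h2 _ _ _))]

end Lemmas

section DP
set_option linter.unusedSectionVars false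
variable {S A : Type*} [Fintype S] [Fintype A] [Inhabited A] [DecidableEq A]

noncomputable def bestA (g : A → ℝ) : A :=
  (Finset.exists_max_image Finset.univ g ⟨default, Finset.mem_univ _⟩).choose

lemma le_bestA (g : A → ℝ) (a : A) : g a ≤ g (bestA g) :=
  (Finset.exists_max_image Finset.univ g ⟨default, Finset.mem_univ _⟩).choose_spec.2 a
    (Finset.mem_univ a)

noncomputable def worstA (g : A → ℝ) : A :=
  (Finset.exists_min_image Finset.univ g ⟨default, Finset.mem_univ _⟩).choose

lemma worstA_le (g : A → ℝ) (a : A) : g (worstA g) ≤ g a :=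
  (Finset.exists_min_image Finset.univ g ⟨default, Finset.mem_univ _⟩).choose_spec.2 a
    (Finset.mem_univ a)

noncomputable def stepVal (c : S → A → S → ℝ) (V : S → ℝ) (s : S) (a : A) : ℝ :=
  ∑ s', c s a s' * V s'

noncomputable def Bmax (c : S → A → S → ℝ) : ℕ → S → ℝ
  | 0, _ => 1
  | k+1, s => stepVal c (Bmax c k) s (bestA (stepVal c (Bmax c k) s))

noncomputable def Fmax (c : S → A → S → ℝ) (k : ℕ) (s : S) : A :=
  bestA (stepVal c (Bmax c k) s)

noncomputable def Bmin (c : S → A → S → ℝ) : ℕ → S → ℝ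
  | 0, _ => 1
  | k+1, s => stepVal c (Bmin c k) s (worstA (stepVal c (Bmin c k) s))

noncomputable def Fmin (c : S → A → S → ℝ) (k : ℕ) (s : S) : A :=
  worstA (stepVal c (Bmin c k) s)

lemma Bmax_succ (c : S → A → S → ℝ) (k : ℕ) (s : S) :
    Bmax c (k+1) s = stepVal c (Bmax c k) s (Fmax c k s) := rfl

lemma Bmin_succ (c : S → A → S → ℝ) (k : ℕ) (s : S) :
    Bmin c (k+1) s = stepVal c (Bmin c k) s (Fmin c k s) := rfl

lemma stepVal_le_Bmax (c : S → A → S → ℝ) (k : ℕ) (s : S) (a : A) :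
    stepVal c (Bmax c k) s a ≤ Bmax c (k+1) s := le_bestA _ a

lemma Bmin_le_stepVal (c : S → A → S → ℝ) (k : ℕ) (s : S) (a : A) :
    Bmin c (k+1) s ≤ stepVal c (Bmin c k) s a := worstA_le _ a

lemma stepVal_nonneg {c : S → A → S → ℝ} (hc : ∀ s a s', 0 ≤ c s a s') {V : S → ℝ}
    (hV : ∀ s, 0 ≤ V s) (s : S) (a : A) : 0 ≤ stepVal c V s a :=
  Finset.sum_nonneg fun s' _ => mul_nonneg (hc _ _ _) (hV _)

lemma Bmin_nonneg {c : S → A → S → ℝ} (hc : ∀ s a s', 0 ≤ c s a s') :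
    ∀ k s, 0 ≤ Bmin c k s := by
  intro k
  induction k with
  | zero => intro s; exact zero_le_one
  | succ k ih => intro s; exact stepVal_nonneg hc ih s _

end DP

section Main
set_option linter.unusedSectionVars false
variable {S A : Type*} [Fintype S] [Fintype A] [Inhabited A] [DecidableEq A]

noncomputable def bcC (T₁ T₂ : S → A → S → ℝ) : S → A → S → ℝ :=
  fun s a s' => Real.sqrt (T₁ s a s' * T₂ s a s')

lemma detPol_nonneg (f : S → ℕ → A) : ∀ hist (s : S) (a : A), 0 ≤ detPol f hist s a := by
  intro hist s a
  unfold detPol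
  split <;> norm_num

variable (T₁ T₂ : S → A → S → ℝ)

lemma trajBC_le_Bmax (h1 : ∀ s a s', 0 ≤ T₁ s a s') (h2 : ∀ s a s', 0 ≤ T₂ s a s') :
    ∀ (k : ℕ) (π : List (S × A) → S → A → ℝ),
      (∀ hist s' a, 0 ≤ π hist s' a) → (∀ hist s', ∑ a, π hist s' a = 1) → ∀ s,
      trajBC T₁ T₂ π s k ≤ Bmax (bcC T₁ T₂) k s := by
  intro k
  induction k with
  | zero => intro π _ _ s; simp [trajBC_zero, Bmax]
  | succ k ih =>
      intro π hπ0 hπ1 s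
      rw [trajBC_succ T₁ T₂ h1 h2 π hπ0 s k]
      set c : S → A → S → ℝ := bcC T₁ T₂ with hc
      calc ∑ p : A × S, π [] s p.1 *
              (c s p.1 p.2 * trajBC T₁ T₂ (fun hist => π ((s, p.1) :: hist)) p.2 k)
          ≤ ∑ p : A × S, π [] s p.1 * (c s p.1 p.2 * Bmax c k p.2) := by
            refine Finset.sum_le_sum fun p _ => ?_
            refine mul_le_mul_of_nonneg_left
              (mul_le_mul_of_nonneg_left ?_ (Real.sqrt_nonneg _)) (hπ0 _ _ _)
            exact ih (fun hist => π ((s, p.1) :: hist)) (fun _ _ _ => hπ0 _ _ _)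
              (fun _ _ => hπ1 _ _) p.2
        _ = ∑ a : A, π [] s a * stepVal c (Bmax c k) s a := by
            rw [Fintype.sum_prod_type]
            refine Finset.sum_congr rfl fun a _ => ?_
            rw [stepVal, Finset.mul_sum]
        _ ≤ ∑ a : A, π [] s a * Bmax c (k+1) s :=
            Finset.sum_le_sum fun a _ =>
              mul_le_mul_of_nonneg_left (stepVal_le_Bmax c k s a) (hπ0 _ _ _)
        _ = Bmax c (k+1) s := by rw [← Finset.sum_mul, hπ1, one_mul]

lemma Bmin_le_trajBC (h1 : ∀ s a s', 0 ≤ T₁ s a s') (h2 : ∀ s a s', 0 ≤ T₂ s a s') :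
    ∀ (k : ℕ) (π : List (S × A) → S → A → ℝ),
      (∀ hist s' a, 0 ≤ π hist s' a) → (∀ hist s', ∑ a, π hist s' a = 1) → ∀ s,
      Bmin (bcC T₁ T₂) k s ≤ trajBC T₁ T₂ π s k := by
  intro k
  induction k with
  | zero => intro π _ _ s; simp [trajBC_zero, Bmin]
  | succ k ih =>
      intro π hπ0 hπ1 s
      rw [trajBC_succ T₁ T₂ h1 h2 π hπ0 s k]
      set c : S → A → S → ℝ := bcC T₁ T₂ with hc
      calc Bmin c (k+1) s = ∑ a : A, π [] s a * Bmin c (k+1) s := by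
            rw [← Finset.sum_mul, hπ1, one_mul]
        _ ≤ ∑ a : A, π [] s a * stepVal c (Bmin c k) s a :=
            Finset.sum_le_sum fun a _ =>
              mul_le_mul_of_nonneg_left (Bmin_le_stepVal c k s a) (hπ0 _ _ _)
        _ = ∑ p : A × S, π [] s p.1 * (c s p.1 p.2 * Bmin c k p.2) := by
            rw [Fintype.sum_prod_type]
            refine Finset.sum_congr rfl fun a _ => ?_
            rw [stepVal, Finset.mul_sum]
        _ ≤ ∑ p : A × S, π [] s p.1 *
              (c s p.1 p.2 * trajBC T₁ T₂ (fun hist => π ((s, p.1) :: hist)) p.2 k) := by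
            refine Finset.sum_le_sum fun p _ => ?_
            refine mul_le_mul_of_nonneg_left
              (mul_le_mul_of_nonneg_left ?_ (Real.sqrt_nonneg _)) (hπ0 _ _ _)
            exact ih (fun hist => π ((s, p.1) :: hist)) (fun _ _ _ => hπ0 _ _ _)
              (fun _ _ => hπ1 _ _) p.2

lemma trajBC_detMax (h1 : ∀ s a s', 0 ≤ T₁ s a s') (h2 : ∀ s a s', 0 ≤ T₂ s a s') :
    ∀ (k : ℕ) (f : S → ℕ → A),
      (∀ s j, j < k → f s j = Fmax (bcC T₁ T₂) (k - 1 - j) s) → ∀ s,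
      trajBC T₁ T₂ (detPol f) s k = Bmax (bcC T₁ T₂) k s := by
  intro k
  induction k with
  | zero => intro f _ s; simp [trajBC_zero, Bmax]
  | succ k ih =>
      intro f hf s
      set c : S → A → S → ℝ := bcC T₁ T₂ with hc
      rw [trajBC_succ T₁ T₂ h1 h2 (detPol f) (detPol_nonneg f) s k]
      have hf0 : f s 0 = Fmax c k s := by
        have := hf s 0 (Nat.succ_pos k)
        simpa using this
      have hsh : (fun hist => detPol f ((s, f s 0) :: hist)) =
          detPol (fun s' j => f s' (j+1)) := rfl
      have hIH : ∀ s', trajBC T₁ T₂ (detPol (fun s' j => f s' (j+1))) s' k = Bmax c k s' := by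
        intro s'
        refine ih (fun s' j => f s' (j+1)) (fun s'' j hj => ?_) s'
        show f s'' (j+1) = Fmax c (k - 1 - j) s''
        rw [hf s'' (j+1) (by omega)]
        congr 1
        omega
      calc ∑ p : A × S, detPol f [] s p.1 *
              (c s p.1 p.2 * trajBC T₁ T₂ (fun hist => detPol f ((s, p.1) :: hist)) p.2 k)
          = ∑ a : A, (if a = f s 0 then (1:ℝ) else 0) *
              ∑ s', c s a s' * trajBC T₁ T₂ (fun hist => detPol f ((s, a) :: hist)) s' k := by
            rw [Fintype.sum_prod_type]
            refine Finset.sum_congr rfl fun a _ => ?_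
            rw [Finset.mul_sum]
            rfl
        _ = ∑ s', c s (f s 0) s' *
              trajBC T₁ T₂ (fun hist => detPol f ((s, f s 0) :: hist)) s' k := by
            simp only [ite_mul, one_mul, zero_mul, Finset.sum_ite_eq', Finset.mem_univ,
              if_true]
        _ = stepVal c (Bmax c k) s (Fmax c k s) := by
            rw [hsh, stepVal, hf0]
            exact Finset.sum_congr rfl fun s' _ => by rw [hIH s']
        _ = Bmax c (k+1) s := (Bmax_succ c k s).symm

lemma trajBC_detMin (h1 : ∀ s a s', 0 ≤ T₁ s a s') (h2 : ∀ s a s', 0 ≤ T₂ s a s') :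
    ∀ (k : ℕ) (f : S → ℕ → A),
      (∀ s j, j < k → f s j = Fmin (bcC T₁ T₂) (k - 1 - j) s) → ∀ s,
      trajBC T₁ T₂ (detPol f) s k = Bmin (bcC T₁ T₂) k s := by
  intro k
  induction k with
  | zero => intro f _ s; simp [trajBC_zero, Bmin]
  | succ k ih =>
      intro f hf s
      set c : S → A → S → ℝ := bcC T₁ T₂ with hc
      rw [trajBC_succ T₁ T₂ h1 h2 (detPol f) (detPol_nonneg f) s k]
      have hf0 : f s 0 = Fmin c k s := by
        have := hf s 0 (Nat.succ_pos k)
        simpa using this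
      have hsh : (fun hist => detPol f ((s, f s 0) :: hist)) =
          detPol (fun s' j => f s' (j+1)) := rfl
      have hIH : ∀ s', trajBC T₁ T₂ (detPol (fun s' j => f s' (j+1))) s' k = Bmin c k s' := by
        intro s'
        refine ih (fun s' j => f s' (j+1)) (fun s'' j hj => ?_) s'
        show f s'' (j+1) = Fmin c (k - 1 - j) s''
        rw [hf s'' (j+1) (by omega)]
        congr 1
        omega
      calc ∑ p : A × S, detPol f [] s p.1 *
              (c s p.1 p.2 * trajBC T₁ T₂ (fun hist => detPol f ((s, p.1) :: hist)) p.2 k)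
          = ∑ a : A, (if a = f s 0 then (1:ℝ) else 0) *
              ∑ s', c s a s' * trajBC T₁ T₂ (fun hist => detPol f ((s, a) :: hist)) s' k := by
            rw [Fintype.sum_prod_type]
            refine Finset.sum_congr rfl fun a _ => ?_
            rw [Finset.mul_sum]
            rfl
        _ = ∑ s', c s (f s 0) s' *
              trajBC T₁ T₂ (fun hist => detPol f ((s, f s 0) :: hist)) s' k := by
            simp only [ite_mul, one_mul, zero_mul, Finset.sum_ite_eq', Finset.mem_univ,
              if_true]
        _ = stepVal c (Bmin c k) s (Fmin c k s) := by
            rw [hsh, stepVal, hf0]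
            exact Finset.sum_congr rfl fun s' _ => by rw [hIH s']
        _ = Bmin c (k+1) s := (Bmin_succ c k s).symm

end Main


/-- The Bhattacharyya coefficient `BC(M_{m,h+1}(π,s), M_{l,h+1}(π,s))` is
maximized over all history-dependent randomized policies by a deterministic Markov
policy; consequently, if an LMDP is `ϖ`-separated under every deterministic Markov
policy, it is `ϖ`-separated under every randomized history-dependent policy. -/
theorem bhattacharyya_maximized_by_det_markov_policy
    {S A : Type*} [Fintype S] [Fintype A] [Inhabited A] [DecidableEq A] {L : ℕ}
    (T : Fin L → S → A → S → ℝ)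
    (hT0 : ∀ m s a s', 0 ≤ T m s a s') (hT1 : ∀ m s a, ∑ s', T m s a s' = 1) :
    (∀ (m l : Fin L), m ≠ l → ∀ (s : S) (h : ℕ), 1 ≤ h →
      ∃ f : S → ℕ → A,
        ∀ π : List (S × A) → S → A → ℝ,
          (∀ hist s' a, 0 ≤ π hist s' a) → (∀ hist s', ∑ a, π hist s' a = 1) →
          trajBC (T m) (T l) π s h ≤ trajBC (T m) (T l) (detPol f) s h) ∧
    (∀ ϖ : ℕ → ℝ,
      (∀ f : S → ℕ → A, ∀ m l : Fin L, m ≠ l → ∀ h : ℕ, 1 ≤ h → ∀ s : S,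
        -Real.log (trajBC (T m) (T l) (detPol f) s (h - 1)) ≥ ϖ h) →
      ∀ π : List (S × A) → S → A → ℝ,
        (∀ hist s' a, 0 ≤ π hist s' a) → (∀ hist s', ∑ a, π hist s' a = 1) →
        ∀ m l : Fin L, m ≠ l → ∀ h : ℕ, 1 ≤ h → ∀ s : S,
          -Real.log (trajBC (T m) (T l) π s (h - 1)) ≥ ϖ h) := by
  constructor
  · intro m l _ s h _
    refine ⟨fun s j => Fmax (bcC (T m) (T l)) (h - 1 - j) s, fun π hπ0 hπ1 => ?_⟩
    rw [trajBC_detMax (T m) (T l) (hT0 m) (hT0 l) h _ (fun s j hj => rfl) s]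
    exact trajBC_le_Bmax (T m) (T l) (hT0 m) (hT0 l) h π hπ0 hπ1 s
  · intro ϖ hsep π hπ0 hπ1 m l hml h hh s
    set k := h - 1 with hk
    set c := bcC (T m) (T l) with hc
    have hmax := hsep (fun s j => Fmax c (k - 1 - j) s) m l hml h hh s
    have hmin := hsep (fun s j => Fmin c (k - 1 - j) s) m l hml h hh s
    rw [trajBC_detMax (T m) (T l) (hT0 m) (hT0 l) k _ (fun s j hj => rfl) s] at hmax
    rw [trajBC_detMin (T m) (T l) (hT0 m) (hT0 l) k _ (fun s j hj => rfl) s] at hmin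
    have hub : trajBC (T m) (T l) π s k ≤ Bmax c k s :=
      trajBC_le_Bmax (T m) (T l) (hT0 m) (hT0 l) k π hπ0 hπ1 s
    have hlb : Bmin c k s ≤ trajBC (T m) (T l) π s k :=
      Bmin_le_trajBC (T m) (T l) (hT0 m) (hT0 l) k π hπ0 hπ1 s
    rcases eq_or_lt_of_le (trajBC_nonneg (T m) (T l) π s k) with h0 | hpos
    · have hBmin : Bmin c k s = 0 :=
        le_antisymm (h0 ▸ hlb) (Bmin_nonneg (fun _ _ _ => Real.sqrt_nonneg _) k s)
      rw [hBmin] at hmin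
      rw [← h0]
      exact hmin
    · have hlog : Real.log (trajBC (T m) (T l) π s k) ≤ Real.log (Bmax c k s) :=
        Real.log_le_log hpos hub
      have := neg_le_neg hlog
      linarith [hmax]
end
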